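/- arXiv:2006.10929 — 9 statements merged into one kernel-verified Lean document; each statement's English description precedes it below -/
import Mathlib

section
/- Let β, δ ∈ (0,1), n ∈ ℕ, D a probability distribution on Z, and P a probability distribution on H. Then with probability at least 1−δ over the i.i.d. sample S ∼ D^n, simultaneously for all probability distributions Q on H: L_D(Q) ≤ (1/β)·L̂_S(Q) + (KL(Q‖P) + log(1/δ))/(2β(1−β)·n). -/
open MeasureTheory Set
open scoped ENNReal NNReal

section PacBayesAux

open Real

lemma exp_neg_le_quad {t : ℝ} (ht : 0 ≤ t) : exp (-t) ≤ 1 - t + t^2/2 := by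
  have key : MonotoneOn (fun t : ℝ => 1 - t + t^2/2 - exp (-t)) (Ici 0) := by
    apply monotoneOn_of_deriv_nonneg (convex_Ici 0)
    · fun_prop
    · fun_prop
    · intro x hx
      have hd : HasDerivAt (fun t : ℝ => 1 - t + t^2/2 - exp (-t))
          (-1 + x - (-exp (-x))) x := by
        have h1 : HasDerivAt (fun t : ℝ => exp (-t)) (-exp (-x)) x := by
          simpa using (hasDerivAt_neg x).exp
        have h2 : HasDerivAt (fun t : ℝ => 1 - t + t^2/2) (-1 + x) x := by
          have := ((hasDerivAt_pow 2 x).div_const 2)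
          have := ((hasDerivAt_const x (1:ℝ)).fun_sub (hasDerivAt_id x)).fun_add this
          simpa [pow_one] using this
        simpa using h2.fun_sub h1
      rw [hd.deriv]
      have := Real.add_one_le_exp (-x)
      simp only [interior_Ici, mem_Ioi] at hx
      nlinarith
  have h0 : (fun t : ℝ => 1 - t + t^2/2 - exp (-t)) 0 = 0 := by simp
  have := key self_mem_Ici (mem_Ici.2 ht) ht
  simp only [h0] at this
  linarith

lemma dv_change_of_measure {H : Type*} [MeasurableSpace H]
    (Q P : Measure H) [IsProbabilityMeasure Q] [IsProbabilityMeasure P]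
    (hQP : Q ≪ P) (hllr : Integrable (llr Q P) Q)
    {f : H → ℝ} (hf : Measurable f) {C : ℝ} (hC : ∀ h, |f h| ≤ C)
    {A : ℝ} (hA : 0 < A)
    (hAle : ∫⁻ h, ENNReal.ofReal (exp (f h)) ∂P ≤ ENNReal.ofReal A) :
    ∫ h, f h ∂Q ≤ ∫ h, llr Q P h ∂Q + Real.log A := by
  set r := Q.rnDeriv P with hr
  -- integrability of f
  have hfi : Integrable f Q := by
    refine Integrable.mono' (integrable_const C) hf.aestronglyMeasurable ?_
    exact Filter.Eventually.of_forall fun h => hC h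
  -- φ := f - llr - log A + 1 is integrable
  set φ : H → ℝ := fun h => f h - llr Q P h - Real.log A + 1 with hφ
  have hφi : Integrable φ Q := by
    exact ((hfi.sub hllr).sub (integrable_const _)).add (integrable_const _)
  -- ψ
  set ψ : H → ℝ := fun h => exp (f h) / ((r h).toReal * A) with hψ
  -- pointwise a.e. bound φ ≤ ψ
  have hae : ∀ᵐ h ∂Q, φ h ≤ ψ h := by
    filter_upwards [Measure.rnDeriv_pos hQP, hQP.ae_le (Measure.rnDeriv_lt_top Q P)]
      with h hpos hlt
    have hrt : 0 < (r h).toReal := ENNReal.toReal_pos hpos.ne' hlt.ne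
    have h1 : φ h ≤ exp (φ h - 1) := by
      have := Real.add_one_le_exp (φ h - 1); linarith
    have h2 : exp (φ h - 1) = ψ h := by
      have : φ h - 1 = f h - llr Q P h - Real.log A := by ring
      rw [this, exp_sub, exp_sub, llr, exp_log hrt, exp_log hA]
      simp [ψ, div_div]
    linarith [h1, h2.le]
  -- lintegral of ofReal ψ over Q is ≤ 1
  have hψmeas : Measurable ψ := by
    apply Measurable.div (by fun_prop)
    exact ((Measure.measurable_rnDeriv Q P).ennreal_toReal).mul measurable_const
  have hkey : ∫⁻ h, ENNReal.ofReal (ψ h) ∂Q ≤ 1 := by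
    rw [← MeasureTheory.lintegral_rnDeriv_mul hQP
      (hψmeas.ennreal_ofReal).aemeasurable]
    have hbd : ∀ h, r h * ENNReal.ofReal (ψ h)
        ≤ ENNReal.ofReal (exp (f h)) / ENNReal.ofReal A := by
      intro h
      rcases eq_or_ne (r h) 0 with h0 | h0
      · simp [h0]
      rcases eq_or_ne (r h) ⊤ with htop | htop
      · simp [ψ, htop]
      have hrt : 0 < (r h).toReal := ENNReal.toReal_pos h0 htop
      have : ENNReal.ofReal (ψ h)
          = (ENNReal.ofReal (exp (f h)) / ENNReal.ofReal A) / r h := by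
        rw [hψ]
        rw [ENNReal.ofReal_div_of_pos (by positivity), ENNReal.ofReal_mul hrt.le,
          ENNReal.ofReal_toReal htop, ENNReal.div_eq_inv_mul, ENNReal.mul_inv (by left; exact h0) (by left; exact htop)]
        rw [ENNReal.div_eq_inv_mul, ENNReal.div_eq_inv_mul]
        ring
      rw [this, ENNReal.mul_div_cancel h0 htop]
    calc ∫⁻ h, r h * ENNReal.ofReal (ψ h) ∂P
        ≤ ∫⁻ h, ENNReal.ofReal (exp (f h)) / ENNReal.ofReal A ∂P :=
          lintegral_mono hbd
      _ = (∫⁻ h, ENNReal.ofReal (exp (f h)) ∂P) * (ENNReal.ofReal A)⁻¹ := by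
          simp_rw [div_eq_mul_inv]
          exact lintegral_mul_const' _ _ (ENNReal.inv_ne_top.2 (by simp [hA]))
      _ ≤ ENNReal.ofReal A * (ENNReal.ofReal A)⁻¹ :=
          mul_le_mul_left hAle _
      _ ≤ 1 := ENNReal.mul_inv_le_one _
  -- conclude
  have hmax : ∀ x : ℝ, ENNReal.ofReal (max x 0) = ENNReal.ofReal x := by
    intro x
    rcases le_total x 0 with h | h
    · rw [max_eq_right h, ENNReal.ofReal_zero, eq_comm, ENNReal.ofReal_eq_zero]
      exact h
    · rw [max_eq_left h]
  have hφle : ∫ h, φ h ∂Q ≤ 1 := by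
    rw [← ENNReal.ofReal_le_one]
    calc ENNReal.ofReal (∫ h, φ h ∂Q)
        ≤ ENNReal.ofReal (∫ h, max (φ h) 0 ∂Q) := by
          apply ENNReal.ofReal_le_ofReal
          exact integral_mono hφi (hφi.pos_part)
            (fun h => le_max_left _ _)
      _ = ∫⁻ h, ENNReal.ofReal (max (φ h) 0) ∂Q :=
          ofReal_integral_eq_lintegral_ofReal (hφi.pos_part)
            (Filter.Eventually.of_forall fun h => le_max_right _ _)
      _ = ∫⁻ h, ENNReal.ofReal (φ h) ∂Q := by simp_rw [hmax]
      _ ≤ ∫⁻ h, ENNReal.ofReal (ψ h) ∂Q := by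
          refine lintegral_mono_ae ?_
          filter_upwards [hae] with h hh using ENNReal.ofReal_le_ofReal hh
      _ ≤ 1 := hkey
  have h2 : ∫ h, φ h ∂Q = ∫ h, f h ∂Q - ∫ h, llr Q P h ∂Q - Real.log A + 1 := by
    simp only [hφ]
    have hrw : ∀ h, f h - llr Q P h - Real.log A + 1
        = (f h - llr Q P h) + (1 - Real.log A) := fun h => by ring
    simp_rw [hrw]
    rw [integral_add (f := fun h => f h - llr Q P h) (g := fun _ => 1 - Real.log A)
        (hfi.sub hllr) (integrable_const _),
      integral_sub (f := fun h => f h) (g := fun h => llr Q P h) hfi hllr,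
      integral_const]
    simp only [measure_univ, ENNReal.toReal_one, probReal_univ, one_smul, smul_eq_mul, one_mul]
    ring
  rw [h2] at hφle
  linarith


lemma mgf_one_sample {Z : Type*} [MeasurableSpace Z] (D : Measure Z)
    [IsProbabilityMeasure D] {g : Z → ℝ} (hg : Measurable g)
    (hb : ∀ z, g z ∈ Icc (0:ℝ) 1) {t : ℝ} (ht : 0 ≤ t) :
    ∫ z, exp (t * ((∫ w, g w ∂D) - g z)) ∂D ≤ exp ((∫ w, g w ∂D) * t^2/2) := by
  set p := ∫ w, g w ∂D with hp
  have hgi : Integrable g D := by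
    refine Integrable.mono' (integrable_const 1) hg.aestronglyMeasurable ?_
    exact Filter.Eventually.of_forall fun z => abs_le.2 ⟨by linarith [(hb z).1], (hb z).2⟩
  have hp0 : 0 ≤ p := integral_nonneg fun z => (hb z).1
  have hptw : ∀ z, exp (t * (p - g z)) ≤ exp (t*p) * ((1 - g z) + g z * exp (-t)) := by
    intro z
    have hx0 := (hb z).1
    have hx1 := (hb z).2
    have hcvx := convexOn_exp.2 (mem_univ (0:ℝ)) (mem_univ (-t))
      (by linarith : (0:ℝ) ≤ 1 - g z) hx0 (by ring)
    simp only [smul_eq_mul, mul_zero, zero_add, exp_zero, mul_one] at hcvx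
    have h1 : exp (-(g z * t)) ≤ (1 - g z) + g z * exp (-t) := by
      rw [show -(g z * t) = g z * -t by ring]; exact hcvx
    calc exp (t * (p - g z)) = exp (t*p) * exp (-(g z * t)) := by
          rw [← exp_add]; ring_nf
      _ ≤ exp (t*p) * ((1 - g z) + g z * exp (-t)) := by
          exact mul_le_mul_of_nonneg_left h1 (exp_nonneg _)
  have hint1 : Integrable (fun z => exp (t * (p - g z))) D := by
    refine Integrable.mono' (integrable_const (exp (t*p)))
      (Real.measurable_exp.comp ((measurable_const.sub hg).const_mul t)).aestronglyMeasurable ?_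
    refine Filter.Eventually.of_forall fun z => ?_
    rw [Real.norm_eq_abs, abs_of_nonneg (exp_nonneg _)]
    exact exp_le_exp.2 (by nlinarith [(hb z).1])
  have hint2 : Integrable (fun z => exp (t*p) * ((1 - g z) + g z * exp (-t))) D := by
    apply Integrable.const_mul
    exact ((integrable_const 1).sub hgi).add (hgi.mul_const _)
  calc ∫ z, exp (t * (p - g z)) ∂D
      ≤ ∫ z, exp (t*p) * ((1 - g z) + g z * exp (-t)) ∂D :=
        integral_mono hint1 hint2 hptw
    _ = exp (t*p) * ((1 - p) + p * exp (-t)) := by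
        rw [integral_const_mul]
        congr 1
        rw [integral_add (f := fun a => 1 - g a) (g := fun a => g a * exp (-t))
            ((integrable_const 1).sub hgi) (hgi.mul_const _),
          integral_sub (f := fun _ => (1:ℝ)) (g := fun a => g a)
            (integrable_const 1) hgi, integral_const,
          MeasureTheory.integral_mul_const _ _]
        simp [hp]
    _ ≤ exp (t*p) * exp (p * (exp (-t) - 1)) := by
        apply mul_le_mul_of_nonneg_left _ (exp_nonneg _)
        have := add_one_le_exp (p * (exp (-t) - 1))
        linarith
    _ = exp (p * (t + exp (-t) - 1)) := by rw [← exp_add]; ring_nf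
    _ ≤ exp (p * t^2/2) := by
        apply exp_le_exp.2
        have h := exp_neg_le_quad ht
        nlinarith

lemma mgf_pi_sample {Z : Type*} [MeasurableSpace Z] (D : Measure Z)
    [IsProbabilityMeasure D] {n : ℕ} {u : Z → ℝ} (hu : Measurable u)
    {B : ℝ} (hB : ∀ z, |u z| ≤ B) (hle : ∫ z, exp (u z) ∂D ≤ 1) :
    ∫⁻ S : Fin n → Z, ENNReal.ofReal (exp (∑ i, u (S i)))
      ∂(Measure.pi fun _ : Fin n => D) ≤ 1 := by
  letI : MeasureSpace Z := ⟨D⟩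
  haveI : IsProbabilityMeasure (volume : Measure Z) :=
    inferInstanceAs (IsProbabilityMeasure D)
  have hvol : (Measure.pi fun _ : Fin n => D)
      = (volume : Measure (Fin n → Z)) := by
    rw [MeasureTheory.volume_pi]
    rfl
  rw [hvol]
  have hui : Integrable (fun z => exp (u z)) (volume : Measure Z) := by
    refine Integrable.mono' (integrable_const (exp B))
      (Real.measurable_exp.comp hu).aestronglyMeasurable ?_
    refine Filter.Eventually.of_forall fun z => ?_
    rw [Real.norm_eq_abs, abs_of_nonneg (exp_nonneg _)]
    exact exp_le_exp.2 (le_of_abs_le (hB z))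
  have hprod : Integrable (fun S : Fin n → Z => ∏ i, exp (u (S i)))
      (volume : Measure (Fin n → Z)) := by
    exact Integrable.fintype_prod (f := fun _ : Fin n => fun z => exp (u z)) fun i => hui
  have hpos : 0 ≤ ∫ z, exp (u z) ∂(volume : Measure Z) :=
    integral_nonneg fun z => exp_nonneg _
  calc ∫⁻ S : Fin n → Z, ENNReal.ofReal (exp (∑ i, u (S i))) ∂volume
      = ∫⁻ S : Fin n → Z, ENNReal.ofReal (∏ i, exp (u (S i))) ∂volume := by
        simp_rw [exp_sum]
    _ = ENNReal.ofReal (∫ S : Fin n → Z, ∏ i, exp (u (S i)) ∂volume) := by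
        rw [ofReal_integral_eq_lintegral_ofReal hprod]
        exact Filter.Eventually.of_forall fun S =>
          Finset.prod_nonneg fun i _ => exp_nonneg _
    _ ≤ 1 := by
        rw [← hvol, MeasureTheory.integral_fintype_prod_eq_pow (ι := Fin n) (fun z => exp (u z))]
        rw [← ENNReal.ofReal_one]
        apply ENNReal.ofReal_le_ofReal
        exact pow_le_one₀ hpos hle

end PacBayesAux


-- Kullback–Leibler divergence, valued in `ℝ≥0∞`: equal to `∫ log(dQ/dP) dQ` when
-- `Q ≪ P` and this integral is well defined, and `∞` otherwise.
open Classical in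
noncomputable def klDivE {H : Type*} [MeasurableSpace H] (Q P : Measure H) : ℝ≥0∞ :=
  if Q ≪ P ∧ Integrable (llr Q P) Q
  then ENNReal.ofReal (∫ h, llr Q P h ∂Q)
  else ⊤

/-- Risk of a Gibbs classifier `Q` under data distribution `D`. -/
noncomputable def gibbsRisk {H Z : Type*} [MeasurableSpace H] [MeasurableSpace Z]
    (ℓ : H → Z → ℝ) (D : Measure Z) (Q : Measure H) : ℝ :=
  ∫ h, ∫ z, ℓ h z ∂D ∂Q

/-- Empirical risk of a Gibbs classifier `Q` on the sample `S`. -/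
noncomputable def gibbsEmpRisk {H Z : Type*} [MeasurableSpace H]
    (ℓ : H → Z → ℝ) {n : ℕ} (S : Fin n → Z) (Q : Measure H) : ℝ :=
  ∫ h, (∑ i, ℓ h (S i)) / n ∂Q

set_option maxHeartbeats 1000000 in
/-- **Linear PAC-Bayes bound.** For `β, δ ∈ (0,1)`, a prior `P` on hypotheses and a data
distribution `D`, with probability at least `1 − δ` over `S ∼ D^n`, simultaneously for all
posteriors `Q`:
`L_D(Q) ≤ (1/β)·L̂_S(Q) + (KL(Q‖P) + log(1/δ)) / (2β(1−β)n)`. -/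
theorem linear_pac_bayes_bound
    {Z H : Type*} [MeasurableSpace Z] [MeasurableSpace H]
    (ℓ : H → Z → ℝ) (hℓmeas : Measurable (Function.uncurry ℓ))
    (hℓ : ∀ h z, ℓ h z ∈ Icc (0 : ℝ) 1)
    {β δ : ℝ} (hβ : β ∈ Ioo (0 : ℝ) 1) (hδ : δ ∈ Ioo (0 : ℝ) 1)
    {n : ℕ} (hn : 0 < n)
    (D : Measure Z) [IsProbabilityMeasure D]
    (P : Measure H) [IsProbabilityMeasure P] :
    ENNReal.ofReal (1 - δ) ≤
      (Measure.pi fun _ : Fin n => D)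
        {S | ∀ Q : Measure H, IsProbabilityMeasure Q →
          ENNReal.ofReal (gibbsRisk ℓ D Q) ≤
            ENNReal.ofReal ((1 / β) * gibbsEmpRisk ℓ S Q) +
              (klDivE Q P + ENNReal.ofReal (Real.log (1 / δ))) /
                ENNReal.ofReal (2 * β * (1 - β) * n)} := by
  obtain ⟨hβ0, hβ1⟩ := hβ
  obtain ⟨hδ0, hδ1⟩ := hδ
  set μ := Measure.pi fun _ : Fin n => D with hμdef
  set t : ℝ := 2 * (1 - β) with htdef
  have ht0 : 0 < t := by simp only [htdef]; linarith
  -- the risk function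
  set g : H → ℝ := fun h => ∫ z, ℓ h z ∂D with hgdef
  have hgmeas : Measurable g :=
    hℓmeas.stronglyMeasurable.integral_prod_right'.measurable
  have hg01 : ∀ h, g h ∈ Icc (0:ℝ) 1 := by
    intro h
    have hint : Integrable (fun z => ℓ h z) D := by
      refine Integrable.mono' (integrable_const 1)
        (hℓmeas.comp measurable_prodMk_left).aestronglyMeasurable ?_
      exact Filter.Eventually.of_forall fun z =>
        abs_le.2 ⟨by linarith [(hℓ h z).1], (hℓ h z).2⟩
    constructor
    · exact integral_nonneg fun z => (hℓ h z).1
    · calc ∫ z, ℓ h z ∂D ≤ ∫ _, (1:ℝ) ∂D :=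
            integral_mono hint (integrable_const 1) fun z => (hℓ h z).2
        _ = 1 := by simp
  -- the exponent function
  set F : H → (Fin n → Z) → ℝ :=
    fun h S => ∑ i, (t * (g h - ℓ h (S i)) - t^2 * g h / 2) with hFdef
  have hFmeas : Measurable (Function.uncurry F) := by
    apply Finset.measurable_sum
    intro i _
    have h1 : Measurable fun p : H × (Fin n → Z) => g p.1 := hgmeas.comp measurable_fst
    have h2 : Measurable fun p : H × (Fin n → Z) => ℓ p.1 (p.2 i) :=
      hℓmeas.comp (measurable_fst.prodMk ((measurable_pi_apply i).comp measurable_snd))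
    exact (((h1.sub h2).const_mul t).sub ((h1.const_mul (t^2)).div_const 2))
  -- per-hypothesis sample bound
  have hper : ∀ h, ∫⁻ S, ENNReal.ofReal (Real.exp (F h S)) ∂μ ≤ 1 := by
    intro h
    have hℓh : Measurable fun z => ℓ h z := hℓmeas.comp measurable_prodMk_left
    have hu : Measurable fun z => t * (g h - ℓ h z) - t^2 * g h / 2 :=
      (((measurable_const.sub hℓh).const_mul t).sub measurable_const)
    simp only [hFdef, hμdef]
    refine mgf_pi_sample D (u := fun z => t * (g h - ℓ h z) - t^2 * g h / 2)
      hu (B := t + t^2/2) ?_ ?_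
    · intro z
      have h1 := (hℓ h z).1; have h2 := (hℓ h z).2
      have h3 := (hg01 h).1; have h4 := (hg01 h).2
      rw [abs_le]
      constructor <;> nlinarith
    · have hone := mgf_one_sample D hℓh (hℓ h) ht0.le
      have hgh : ∫ w, ℓ h w ∂D = g h := rfl
      rw [hgh] at hone
      have hrw : ∀ z, Real.exp (t * (g h - ℓ h z) - t^2 * g h / 2)
          = Real.exp (t * (g h - ℓ h z)) / Real.exp (t^2 * g h / 2) := fun z => by
        rw [Real.exp_sub]
      simp_rw [hrw]
      rw [integral_div]
      rw [div_le_one (Real.exp_pos _)]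
      calc ∫ z, Real.exp (t * (g h - ℓ h z)) ∂D ≤ Real.exp (g h * t^2/2) := hone
        _ = Real.exp (t^2 * g h / 2) := by ring_nf
  -- the random quantity A S
  set A : (Fin n → Z) → ℝ≥0∞ :=
    fun S => ∫⁻ h, ENNReal.ofReal (Real.exp (F h S)) ∂P with hAdef
  have hjoint : Measurable fun p : (Fin n → Z) × H =>
      ENNReal.ofReal (Real.exp (F p.2 p.1)) := by
    have : Measurable fun p : (Fin n → Z) × H => F p.2 p.1 :=
      hFmeas.comp (measurable_snd.prodMk measurable_fst)
    exact (Real.measurable_exp.comp this).ennreal_ofReal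
  have hAmeas : Measurable A :=
    Measurable.lintegral_prod_right (f := fun S h => ENNReal.ofReal (Real.exp (F h S))) hjoint
  -- expectation of A is ≤ 1
  have hAint : ∫⁻ S, A S ∂μ ≤ 1 := by
    have hswap := lintegral_lintegral_swap
      (f := fun S h => ENNReal.ofReal (Real.exp (F h S)))
      (μ := μ) (ν := P) hjoint.aemeasurable
    rw [hAdef]
    simp only []
    rw [hswap]
    calc ∫⁻ h, ∫⁻ S, ENNReal.ofReal (Real.exp (F h S)) ∂μ ∂P
        ≤ ∫⁻ _, 1 ∂P := lintegral_mono fun h => hper h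
      _ = 1 := by simp
  -- Markov
  have hbad : μ {S | ENNReal.ofReal (1/δ) ≤ A S} ≤ ENNReal.ofReal δ := by
    have hmar := mul_meas_ge_le_lintegral₀ (μ := μ) hAmeas.aemeasurable (ENNReal.ofReal (1/δ))
    have h1 : ENNReal.ofReal (1/δ) = (ENNReal.ofReal δ)⁻¹ := by
      rw [one_div, ENNReal.ofReal_inv_of_pos hδ0]
    have hδne : ENNReal.ofReal δ ≠ 0 := by simp [hδ0]
    have hδnetop : ENNReal.ofReal δ ≠ ⊤ := ENNReal.ofReal_ne_top
    rw [h1] at hmar ⊢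
    have h2 := le_trans hmar hAint
    rw [ENNReal.inv_mul_le_iff (by simp [hδ0]) (by simp)] at h2
    simpa using h2
  -- good event implies the PAC-Bayes bound
  have hsub : {S | A S < ENNReal.ofReal (1/δ)} ⊆
      {S | ∀ Q : Measure H, IsProbabilityMeasure Q →
        ENNReal.ofReal (gibbsRisk ℓ D Q) ≤
          ENNReal.ofReal ((1 / β) * gibbsEmpRisk ℓ S Q) +
            (klDivE Q P + ENNReal.ofReal (Real.log (1 / δ))) /
              ENNReal.ofReal (2 * β * (1 - β) * n)} := by
    intro S hS Q hQprob
    simp only [mem_setOf_eq] at hS ⊢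
    set c : ℝ := 2 * β * (1 - β) * n with hcdef
    have hc0 : 0 < c := by
      have hncast : (0:ℝ) < n := Nat.cast_pos.2 hn
      have h1b : (0:ℝ) < 1 - β := by linarith
      rw [hcdef]
      have := mul_pos (mul_pos (mul_pos (by norm_num : (0:ℝ) < 2) hβ0) h1b) hncast
      exact this
    by_cases hQP : Q ≪ P ∧ Integrable (llr Q P) Q
    · -- main case: apply change of measure
      obtain ⟨hac, hllri⟩ := hQP
      have hfS : Measurable fun h => F h S :=
        hFmeas.comp (measurable_id.prodMk measurable_const)
      have hCF : ∀ h, |F h S| ≤ (n : ℝ) * (t + t^2/2) := by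
        intro h
        calc |F h S| ≤ ∑ i, |t * (g h - ℓ h (S i)) - t^2 * g h / 2| :=
              Finset.abs_sum_le_sum_abs _ _
          _ ≤ ∑ _i : Fin n, (t + t^2/2) := by
              apply Finset.sum_le_sum
              intro i _
              have h1 := (hℓ h (S i)).1; have h2 := (hℓ h (S i)).2
              have h3 := (hg01 h).1; have h4 := (hg01 h).2
              rw [abs_le]; constructor <;> nlinarith
          _ = (n : ℝ) * (t + t^2/2) := by
              rw [Finset.sum_const, Finset.card_univ, Fintype.card_fin, nsmul_eq_mul]
      have hδinv : (0:ℝ) < 1/δ := by positivity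
      have hdv := dv_change_of_measure Q P hac hllri hfS hCF hδinv hS.le
      -- linearity of the exponent
      have hsplit : ∀ h, F h S
          = ((n:ℝ) * t - (n:ℝ) * t^2/2) * g h - t * ∑ i, ℓ h (S i) := by
        intro h
        simp only [hFdef]
        have hterm : ∀ i : Fin n, t * (g h - ℓ h (S i)) - t^2 * g h / 2
            = (t * g h - t^2 * g h / 2) - t * ℓ h (S i) := fun i => by ring
        simp_rw [hterm]
        rw [Finset.sum_sub_distrib, Finset.sum_const, ← Finset.mul_sum,
          Finset.card_univ, Fintype.card_fin, nsmul_eq_mul]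
        ring
      -- integrability over Q
      have hgi : Integrable g Q := by
        refine Integrable.mono' (integrable_const 1) hgmeas.aestronglyMeasurable ?_
        exact Filter.Eventually.of_forall fun h =>
          abs_le.2 ⟨by linarith [(hg01 h).1], (hg01 h).2⟩
      have hsummeas : Measurable fun h => ∑ i, ℓ h (S i) := by
        apply Finset.measurable_sum
        intro i _
        exact hℓmeas.comp (measurable_id.prodMk measurable_const)
      have hsumi : Integrable (fun h => ∑ i, ℓ h (S i)) Q := by
        refine Integrable.mono' (integrable_const (n:ℝ)) hsummeas.aestronglyMeasurable ?_
        refine Filter.Eventually.of_forall fun h => ?_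
        rw [Real.norm_eq_abs, abs_le]
        constructor
        · have : (0:ℝ) ≤ ∑ i, ℓ h (S i) :=
            Finset.sum_nonneg fun i _ => (hℓ h (S i)).1
          have hn' : (0:ℝ) ≤ (n:ℝ) := Nat.cast_nonneg n
          linarith
        · calc ∑ i, ℓ h (S i) ≤ ∑ _i : Fin n, (1:ℝ) :=
              Finset.sum_le_sum fun i _ => (hℓ h (S i)).2
            _ = (n:ℝ) := by simp
      -- compute the integral of F(·,S) over Q
      have hFint : ∫ h, F h S ∂Q
          = ((n:ℝ) * t - (n:ℝ) * t^2/2) * (∫ h, g h ∂Q) - t * ∫ h, ∑ i, ℓ h (S i) ∂Q := by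
        simp_rw [hsplit]
        rw [integral_sub ((hgi.const_mul _)) (hsumi.const_mul _),
          integral_const_mul, integral_const_mul]
      set R := ∫ h, g h ∂Q with hRdef
      set Remp := gibbsEmpRisk ℓ S Q with hRempdef
      have hRisk : gibbsRisk ℓ D Q = R := rfl
      have hEmp : ∫ h, ∑ i, ℓ h (S i) ∂Q = (n:ℝ) * Remp := by
        rw [hRempdef, gibbsEmpRisk]
        rw [integral_div]
        field_simp
      have hKLr := hdv
      rw [hFint, hEmp] at hKLr
      set KLr := ∫ h, llr Q P h ∂Q with hKLrdef
      set X := Real.log (1/δ) with hXdef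
      -- real-valued inequality
      have hcoef : (n:ℝ) * t - (n:ℝ) * t^2/2 = c := by
        simp only [htdef, hcdef]; ring
      rw [hcoef] at hKLr
      have hmain : R ≤ (1/β) * Remp + (KLr + X) / c := by
        have hβne : β ≠ 0 := ne_of_gt hβ0
        have hcne : c ≠ 0 := ne_of_gt hc0
        rw [← mul_le_mul_iff_of_pos_left hc0]
        calc c * R ≤ t * ((n:ℝ) * Remp) + (KLr + X) := by linarith
          _ = c * ((1/β) * Remp + (KLr + X) / c) := by
              field_simp
              simp only [htdef, hcdef]
              ring
      -- pass to ℝ≥0∞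
      have hklE : klDivE Q P = ENNReal.ofReal KLr := by
        rw [klDivE, if_pos ⟨hac, hllri⟩]
      rw [hRisk, hklE]
      calc ENNReal.ofReal R
          ≤ ENNReal.ofReal ((1/β) * Remp + (KLr + X) / c) :=
            ENNReal.ofReal_le_ofReal hmain
        _ ≤ ENNReal.ofReal ((1/β) * Remp) + ENNReal.ofReal ((KLr + X) / c) :=
            ENNReal.ofReal_add_le
        _ ≤ ENNReal.ofReal ((1/β) * Remp) +
              (ENNReal.ofReal KLr + ENNReal.ofReal X) / ENNReal.ofReal c := by
            apply add_le_add_right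
            rw [ENNReal.ofReal_div_of_pos hc0]
            exact ENNReal.div_le_div_right ENNReal.ofReal_add_le _
    · -- degenerate case: KL = ∞
      have hklE : klDivE Q P = ⊤ := by rw [klDivE, if_neg hQP]
      rw [hklE]
      have : (⊤ + ENNReal.ofReal (Real.log (1/δ))) / ENNReal.ofReal c = ⊤ := by
        rw [top_add, ENNReal.top_div_of_ne_top ENNReal.ofReal_ne_top]
      rw [this]
      exact le_top
  -- final measure arithmetic
  have hcover : (1:ℝ≥0∞) ≤ μ {S | A S < ENNReal.ofReal (1/δ)}
      + μ {S | ENNReal.ofReal (1/δ) ≤ A S} := by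
    have huniv : (univ : Set (Fin n → Z)) =
        {S | A S < ENNReal.ofReal (1/δ)} ∪ {S | ENNReal.ofReal (1/δ) ≤ A S} := by
      ext S; simp [lt_or_ge]
    calc (1:ℝ≥0∞) = μ univ := (measure_univ).symm
      _ ≤ _ := by rw [huniv]; exact measure_union_le _ _
  have hgood : ENNReal.ofReal (1 - δ) ≤ μ {S | A S < ENNReal.ofReal (1/δ)} := by
    have h1 : ENNReal.ofReal (1 - δ) = 1 - ENNReal.ofReal δ := by
      rw [ENNReal.ofReal_sub 1 hδ0.le, ENNReal.ofReal_one]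
    rw [h1, tsub_le_iff_right]
    calc (1:ℝ≥0∞) ≤ μ {S | A S < ENNReal.ofReal (1/δ)}
          + μ {S | ENNReal.ofReal (1/δ) ≤ A S} := hcover
      _ ≤ μ {S | A S < ENNReal.ofReal (1/δ)} + ENNReal.ofReal δ :=
          add_le_add_right hbad _
  exact le_trans hgood (measure_mono hsub)
end

section
/- Let n ∈ ℕ and fix a measurable probability kernel Q : Z^n → P(H). For all β, δ ∈ (0,1) and all probability distributions D on Z, the expected linear PAC-Bayes bound P ↦ E_{S∼D^n}[Ψ_{β,δ}(Q(S), P; S)] is minimized over probability distributions P on H by the oracle prior P* = E_{S∼D^n}[Q(S)], i.e., the mixture distribution defined by P*(B) = E_{S∼D^n}[Q(S)(B)] for measurable B ⊆ H; that is, for every probability distribution P on H, E_{S∼D^n}[Ψ_{β,δ}(Q(S), P*; S)] ≤ E_{S∼D^n}[Ψ_{β,δ}(Q(S), P; S)]. -/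
open MeasureTheory Set
open scoped ENNReal NNReal

-- The linear PAC-Bayes bound functional
-- `Ψ_{β,δ}(Q, P; S) = (1/β)·L̂_S(Q) + (KL(Q‖P) + log(1/δ)) / (2β(1−β)|S|)`.
noncomputable def Psi {H Z : Type*} [MeasurableSpace H]
    (ℓ : H → Z → ℝ) (β δ : ℝ) {n : ℕ} (Q P : Measure H) (S : Fin n → Z) : ℝ≥0∞ :=
  ENNReal.ofReal ((1 / β) * gibbsEmpRisk ℓ S Q) +
    (klDivE Q P + ENNReal.ofReal (Real.log (1 / δ))) /
      ENNReal.ofReal (2 * β * (1 - β) * n)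

section helpers
variable {H : Type*} [MeasurableSpace H]

lemma aux_mul_neg_log_le_one {t : ℝ} (ht : 0 ≤ t) : t * (-Real.log t) ≤ 1 := by
  rcases eq_or_lt_of_le ht with h | h
  · simp [← h]
  · have hlog : -Real.log t = Real.log t⁻¹ := by rw [Real.log_inv]
    have : Real.log t⁻¹ ≤ t⁻¹ - 1 := Real.log_le_sub_one_of_pos (by positivity)
    calc t * (-Real.log t) ≤ t * (t⁻¹ - 1) := by
          rw [hlog]; exact mul_le_mul_of_nonneg_left this ht
      _ = 1 - t := by field_simp
      _ ≤ 1 := by linarith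

/-- Negative part of the log-likelihood ratio has `lintegral` at most 1. -/
lemma lint_negllr_le_one (q p : Measure H) [IsFiniteMeasure q] [IsProbabilityMeasure p]
    (hqp : q ≪ p) : ∫⁻ x, ENNReal.ofReal (-llr q p x) ∂q ≤ 1 := by
  have key : ∫⁻ x, ENNReal.ofReal (-llr q p x) ∂q
      = ∫⁻ x, (q.rnDeriv p * fun x => ENNReal.ofReal (-llr q p x)) x ∂p := by
    nth_rewrite 1 [← Measure.withDensity_rnDeriv_eq q p hqp]
    rw [lintegral_withDensity_eq_lintegral_mul _ (Measure.measurable_rnDeriv q p)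
      (show Measurable fun x => ENNReal.ofReal (-llr q p x) from (measurable_llr q p).neg.ennreal_ofReal)]
  rw [key]
  have hb : ∀ᵐ x ∂p, (q.rnDeriv p * fun x => ENNReal.ofReal (-llr q p x)) x ≤ 1 := by
    filter_upwards [Measure.rnDeriv_lt_top q p] with x hx
    have h1 : q.rnDeriv p x = ENNReal.ofReal (q.rnDeriv p x).toReal := by
      rw [ENNReal.ofReal_toReal hx.ne]
    simp only [Pi.mul_apply]
    rw [h1, ← ENNReal.ofReal_mul ENNReal.toReal_nonneg]
    calc ENNReal.ofReal ((q.rnDeriv p x).toReal * (-llr q p x))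
        ≤ ENNReal.ofReal 1 := by
          apply ENNReal.ofReal_le_ofReal
          exact aux_mul_neg_log_le_one ENNReal.toReal_nonneg
      _ = 1 := ENNReal.ofReal_one
  calc ∫⁻ x, (q.rnDeriv p * fun x => ENNReal.ofReal (-llr q p x)) x ∂p
      ≤ ∫⁻ _, 1 ∂p := lintegral_mono_ae hb
    _ = 1 := by simp

/-- Gibbs' inequality: the KL divergence integral is nonnegative. -/
lemma integral_llr_nonneg (q p : Measure H) [IsProbabilityMeasure q] [IsProbabilityMeasure p]
    (hqp : q ≪ p) (hint : Integrable (llr q p) q) : 0 ≤ ∫ x, llr q p x ∂q := by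
  have h1 : ∀ᵐ x ∂q, -llr q p x ≤ (p.rnDeriv q x).toReal - 1 := by
    filter_upwards [exp_neg_llr hqp] with x hx
    have := Real.add_one_le_exp (-llr q p x)
    rw [hx] at this; linarith
  have hint2 : Integrable (fun x => (p.rnDeriv q x).toReal - 1) q :=
    (Measure.integrable_toReal_rnDeriv).sub (integrable_const 1)
  have h2 : ∫ x, -llr q p x ∂q ≤ ∫ x, ((p.rnDeriv q x).toReal - 1) ∂q :=
    integral_mono_ae hint.neg hint2 h1
  rw [integral_neg] at h2
  have h3 : ∫ x, ((p.rnDeriv q x).toReal - 1) ∂q ≤ 0 := by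
    rw [integral_sub Measure.integrable_toReal_rnDeriv (integrable_const 1)]
    simp only [integral_const, measure_univ, ENNReal.toReal_one, smul_eq_mul, one_mul]
    have heq := Measure.integral_toReal_rnDeriv' (μ := p) (ν := q)
    rw [heq]
    have h5 : p.real Set.univ = 1 := by simp
    rw [h5]
    have h6 : q.real Set.univ = 1 := by simp
    have h4 : 0 ≤ (p.singularPart q).real Set.univ := ENNReal.toReal_nonneg
    linarith
  linarith

lemma ofReal_abs_eq (x : ℝ) :
    ENNReal.ofReal |x| = ENNReal.ofReal x + ENNReal.ofReal (-x) := by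
  rcases le_total 0 x with h | h
  · rw [abs_of_nonneg h, ENNReal.ofReal_of_nonpos (neg_nonpos.mpr h), add_zero]
  · rw [abs_of_nonpos h, ENNReal.ofReal_of_nonpos h, zero_add]

lemma integrable_iff_lint {f : H → ℝ} (hf : Measurable f) (q : Measure H) :
    Integrable f q ↔
      (∫⁻ x, ENNReal.ofReal (f x) ∂q ≠ ∞ ∧ ∫⁻ x, ENNReal.ofReal (-f x) ∂q ≠ ∞) := by
  have habs : ∫⁻ x, ENNReal.ofReal ‖f x‖ ∂q
      = ∫⁻ x, ENNReal.ofReal (f x) ∂q + ∫⁻ x, ENNReal.ofReal (-f x) ∂q := by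
    rw [← lintegral_add_left hf.ennreal_ofReal]
    exact lintegral_congr fun x => by rw [Real.norm_eq_abs, ofReal_abs_eq]
  constructor
  · intro h
    have := h.hasFiniteIntegral
    rw [hasFiniteIntegral_iff_norm, habs] at this
    exact ⟨(ne_top_of_le_ne_top this.ne le_self_add),
      (ne_top_of_le_ne_top this.ne le_add_self)⟩
  · rintro ⟨h1, h2⟩
    refine ⟨hf.aestronglyMeasurable, ?_⟩
    rw [hasFiniteIntegral_iff_norm, habs]
    exact ENNReal.add_lt_top.2 ⟨h1.lt_top, h2.lt_top⟩

lemma ac_mixture {q pstar P : Measure H} {g : H → ℝ≥0∞} (hg : Measurable g)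
    (hps : pstar = P.withDensity g) (hq : q ≪ P) (hz : q {x | g x = 0} = 0) :
    q ≪ pstar := by
  intro N hN0
  set N' := toMeasurable pstar N with hN'
  have hN'm : MeasurableSet N' := measurableSet_toMeasurable pstar N
  have hN'0 : pstar N' = 0 := by rw [hN', measure_toMeasurable]; exact hN0
  have hint : ∫⁻ x in N', g x ∂P = 0 := by
    rw [hps, withDensity_apply _ hN'm] at hN'0; exact hN'0
  have hgz : ∀ᵐ x ∂(P.restrict N'), g x = 0 := by
    rwa [lintegral_eq_zero_iff hg] at hint
  have hgz' : P (N' ∩ {x | g x ≠ 0}) = 0 := by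
    rw [ae_restrict_iff' hN'm] at hgz
    rw [ae_iff] at hgz
    refine measure_mono_null ?_ hgz
    intro x ⟨hx1, hx2⟩
    simp only [mem_setOf_eq]
    intro h; exact hx2 (h hx1)
  have h1 : q (N' ∩ {x | g x ≠ 0}) = 0 := hq hgz'
  have hsub : N ⊆ (N' ∩ {x | g x ≠ 0}) ∪ {x | g x = 0} := by
    intro x hx
    by_cases hgx : g x = 0
    · exact Or.inr hgx
    · exact Or.inl ⟨subset_toMeasurable pstar N hx, hgx⟩
  exact measure_mono_null hsub (measure_union_null h1 hz)

lemma llr_chain {q pstar P : Measure H} [IsFiniteMeasure q] [IsFiniteMeasure pstar]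
    [IsFiniteMeasure P]
    (hq : q ≪ P) (hqs : q ≪ pstar) (hz : q {x | pstar.rnDeriv P x = 0} = 0) :
    llr q P =ᵐ[q] fun x => llr q pstar x + llr pstar P x := by
  have hmul := Measure.rnDeriv_mul_rnDeriv hqs (κ := P)
  have hz' : ∀ᵐ x ∂q, pstar.rnDeriv P x ≠ 0 := by
    rw [ae_iff]
    convert hz using 2
    simp
  filter_upwards [hq.ae_le hmul, Measure.rnDeriv_pos hqs,
    hqs.ae_le (Measure.rnDeriv_lt_top q pstar), hz',
    hq.ae_le (Measure.rnDeriv_lt_top pstar P)] with x hx hpos hfin hgz hgfin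
  have h1 : (q.rnDeriv P x).toReal
      = (q.rnDeriv pstar x).toReal * (pstar.rnDeriv P x).toReal := by
    rw [← hx]; simp [ENNReal.toReal_mul]
  rw [llr, h1, Real.log_mul, llr, llr]
  · simp [ENNReal.toReal_eq_zero_iff, hpos.ne', hfin.ne]
  · simp [ENNReal.toReal_eq_zero_iff, hgz, hgfin.ne]

lemma ofReal_identity {a c : ℝ} (ha : 0 ≤ a) (hac : 0 ≤ a - c) :
    ENNReal.ofReal (a - c) + ENNReal.ofReal c
      = ENNReal.ofReal a + ENNReal.ofReal (-c) := by
  rcases le_total 0 c with h | h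
  · rw [← ENNReal.ofReal_add hac h, ENNReal.ofReal_of_nonpos (neg_nonpos.mpr h), sub_add_cancel,
      add_zero]
  · rw [ENNReal.ofReal_of_nonpos h, ← ENNReal.ofReal_add ha (by linarith), add_zero, sub_eq_add_neg]

lemma tsub_add_min_eq {a b : ℝ≥0∞} (hb : b ≠ ∞) : a - b + min a b = a := by
  rcases le_total a b with h | h
  · rw [tsub_eq_zero_of_le h, min_eq_left h, zero_add]
  · rw [min_eq_right h, tsub_add_cancel_of_le h]

end helpers

-- **The oracle prior minimizes the expected linear PAC-Bayes bound.**
theorem oracle_prior_minimizes_expected_linear_bound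
    {Z H : Type*} [MeasurableSpace Z] [MeasurableSpace H]
    (ℓ : H → Z → ℝ) (hℓmeas : Measurable (Function.uncurry ℓ))
    (hℓ : ∀ h z, ℓ h z ∈ Icc (0 : ℝ) 1)
    {n : ℕ} (hn : 0 < n)
    (Q : (Fin n → Z) → Measure H) (hQmeas : Measurable Q)
    (hQprob : ∀ S, IsProbabilityMeasure (Q S))
    {β δ : ℝ} (hβ : β ∈ Ioo (0 : ℝ) 1) (hδ : δ ∈ Ioo (0 : ℝ) 1)
    (D : Measure Z) [IsProbabilityMeasure D]
    (P : Measure H) [IsProbabilityMeasure P] :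
    ∫⁻ S, Psi ℓ β δ (Q S) ((Measure.pi fun _ : Fin n => D).bind Q) S
        ∂(Measure.pi fun _ : Fin n => D) ≤
      ∫⁻ S, Psi ℓ β δ (Q S) P S ∂(Measure.pi fun _ : Fin n => D) := by
  classical
  set μ : Measure (Fin n → Z) := Measure.pi fun _ : Fin n => D with hμdef
  set pstar : Measure H := μ.bind Q with hpstardef
  haveI hpsprob : IsProbabilityMeasure pstar := by
    constructor
    rw [hpstardef, Measure.bind_apply MeasurableSet.univ hQmeas.aemeasurable]
    simp
  by_cases hB : ∫⁻ S, Psi ℓ β δ (Q S) P S ∂μ = ∞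
  · rw [hB]; exact le_top
  have hc3pos : (0:ℝ) < 2 * β * (1 - β) * n := by
    have h1 : (0:ℝ) < β := hβ.1
    have h2 : β < 1 := hβ.2
    have h3 : (0:ℝ) < 1 - β := by linarith
    have h4 : (0:ℝ) < n := by exact_mod_cast hn
    positivity
  set c3 : ℝ≥0∞ := ENNReal.ofReal (2 * β * (1 - β) * n) with hc3def
  have hc3ne0 : c3 ≠ 0 := (ENNReal.ofReal_pos.mpr hc3pos).ne'
  have hc3top : c3 ≠ ∞ := ENNReal.ofReal_ne_top
  -- If the KL term is infinite, so is Psi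
  have hPsi_top : ∀ q (S : Fin n → Z), klDivE q P = ∞ → Psi ℓ β δ q P S = ∞ := by
    intro q S h
    simp only [Psi, h, ← hc3def]
    rw [top_add, ENNReal.top_div_of_ne_top hc3top, add_top]
  by_cases hsing : pstar.singularPart P = 0
  swap
  · -- singular part nonzero : RHS is infinite, contradiction
    exfalso; apply hB
    obtain ⟨W, hWm, hW1, hW2⟩ := Measure.mutuallySingular_singularPart pstar P
    have htWc : pstar.singularPart P Wᶜ ≠ 0 := by
      intro h0
      apply hsing
      have huniv : pstar.singularPart P Set.univ = 0 := by
        rw [← Set.union_compl_self W]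
        exact measure_union_null hW1 h0
      exact Measure.measure_univ_eq_zero.mp huniv
    have hpsWc : pstar Wᶜ ≠ 0 := by
      intro h0
      exact htWc (le_antisymm (le_trans (Measure.singularPart_le pstar P Wᶜ) h0.le) zero_le)
    have hbind : pstar Wᶜ = ∫⁻ S, Q S Wᶜ ∂μ := Measure.bind_apply hWm.compl hQmeas.aemeasurable
    have hcoe : Measurable fun S => Q S Wᶜ := (Measure.measurable_coe hWm.compl).comp hQmeas
    set G := {S : Fin n → Z | Q S Wᶜ ≠ 0} with hGdef
    have hGm : MeasurableSet G := by
      have : G = (fun S => Q S Wᶜ) ⁻¹' ({0}ᶜ) := by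
        ext S; simp [hGdef]
      rw [this]
      exact hcoe (measurableSet_singleton 0).compl
    have hμG : μ G ≠ 0 := by
      intro h0
      apply hpsWc
      rw [hbind]
      have hae : (fun S => Q S Wᶜ) =ᵐ[μ] 0 := by
        rw [Filter.EventuallyEq, ae_iff]
        simpa [hGdef] using h0
      rw [lintegral_congr_ae hae]; simp
    have hge : ∀ᵐ S ∂μ, G.indicator (fun _ => (∞ : ℝ≥0∞)) S ≤ Psi ℓ β δ (Q S) P S := by
      refine Filter.Eventually.of_forall fun S => ?_
      by_cases hSG : S ∈ G
      · rw [Set.indicator_of_mem hSG]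
        have hnot : ¬ (Q S ≪ P) := fun hac => hSG (by simpa using hac hW2)
        have hkl : klDivE (Q S) P = ∞ := by
          rw [klDivE, if_neg]; tauto
        exact (hPsi_top _ S hkl).ge
      · rw [Set.indicator_of_notMem hSG]; exact zero_le
    have hlow := lintegral_mono_ae hge
    rw [lintegral_indicator hGm, setLIntegral_const, ENNReal.top_mul hμG] at hlow
    exact top_le_iff.mp hlow
  · -- singular part zero
    set g : H → ℝ≥0∞ := pstar.rnDeriv P with hgdef
    have hgm : Measurable g := Measure.measurable_rnDeriv pstar P
    have hdecomp : pstar = P.withDensity g := by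
      have hspec := (Measure.haveLebesgueDecomposition_spec pstar P).2.2
      rwa [hsing, zero_add] at hspec
    have hac : pstar ≪ P := hdecomp ▸ withDensity_absolutelyContinuous P g
    have hZ0m : MeasurableSet {x | g x = 0} := hgm (measurableSet_singleton 0)
    have hpsZ0 : pstar {x | g x = 0} = 0 := by
      rw [hdecomp, withDensity_apply _ hZ0m]
      calc ∫⁻ x in {x | g x = 0}, g x ∂P
          = ∫⁻ _ in {x | g x = 0}, 0 ∂P :=
            setLIntegral_congr_fun hZ0m (fun x hx => hx)
        _ = 0 := by simp
    have hQSm : Measurable fun S => Q S {x | g x = 0} := (Measure.measurable_coe hZ0m).comp hQmeas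
    have hzero : ∀ᵐ S ∂μ, Q S {x | g x = 0} = 0 := by
      have hz0 : ∫⁻ S, Q S {x | g x = 0} ∂μ = 0 := by
        rw [← Measure.bind_apply hZ0m hQmeas.aemeasurable, ← hpstardef]
        exact hpsZ0
      rw [lintegral_eq_zero_iff hQSm] at hz0
      filter_upwards [hz0] with S hS using hS
    have hllrm : Measurable (llr pstar P) := measurable_llr _ _
    set U : (Fin n → Z) → ℝ≥0∞ := fun S => ∫⁻ x, ENNReal.ofReal (llr pstar P x) ∂(Q S)
      with hUdef
    set V : (Fin n → Z) → ℝ≥0∞ := fun S => ∫⁻ x, ENNReal.ofReal (-llr pstar P x) ∂(Q S)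
      with hVdef
    have hUm : Measurable U :=
      (Measure.measurable_lintegral hllrm.ennreal_ofReal).comp hQmeas
    have hVm : Measurable V :=
      (Measure.measurable_lintegral hllrm.neg.ennreal_ofReal).comp hQmeas
    have hUbar : ∫⁻ S, U S ∂μ = ∫⁻ x, ENNReal.ofReal (llr pstar P x) ∂pstar :=
      (Measure.lintegral_bind hQmeas.aemeasurable hllrm.ennreal_ofReal.aemeasurable).symm
    have hVbar : ∫⁻ S, V S ∂μ = ∫⁻ x, ENNReal.ofReal (-llr pstar P x) ∂pstar :=
      (Measure.lintegral_bind hQmeas.aemeasurable hllrm.neg.ennreal_ofReal.aemeasurable).symm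
    have hVbar_le : ∫⁻ S, V S ∂μ ≤ 1 := by
      rw [hVbar]; exact lint_negllr_le_one pstar P hac
    have hVfin : ∀ᵐ S ∂μ, V S < ∞ :=
      ae_lt_top hVm (lt_of_le_of_lt hVbar_le ENNReal.one_lt_top).ne
    by_cases hUinf : μ {S | U S = ∞} = 0
    swap
    · -- U infinite on a non-null set : RHS infinite, contradiction
      exfalso; apply hB
      have haeimp : ∀ᵐ S ∂μ,
          (Q S ≪ P ∧ Integrable (llr (Q S) P) (Q S)) → U S ≠ ∞ := by
        filter_upwards [hzero] with S hz
        rintro ⟨hqp, hint⟩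
        haveI := hQprob S
        have hqps : Q S ≪ pstar := ac_mixture hgm hdecomp hqp hz
        have hch := llr_chain hqp hqps hz
        have hmono : U S ≤ ∫⁻ x, (ENNReal.ofReal (llr (Q S) P x)
            + ENNReal.ofReal (-llr (Q S) pstar x)) ∂(Q S) := by
          rw [hUdef]
          apply lintegral_mono_ae
          filter_upwards [hch] with x hx
          have hxr : llr pstar P x = llr (Q S) P x + (- llr (Q S) pstar x) := by
            rw [hx]; ring
          rw [hxr]
          exact ENNReal.ofReal_add_le
        have hfin1 : ∫⁻ x, ENNReal.ofReal (llr (Q S) P x) ∂(Q S) ≠ ∞ :=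
          ((integrable_iff_lint (measurable_llr _ _) (Q S)).1 hint).1
        have hfin2 : ∫⁻ x, ENNReal.ofReal (-llr (Q S) pstar x) ∂(Q S) ≤ 1 :=
          lint_negllr_le_one (Q S) pstar hqps
        intro hUS
        rw [hUS] at hmono
        rw [lintegral_add_left (measurable_llr (Q S) P).ennreal_ofReal] at hmono
        have : (∞ : ℝ≥0∞) ≤ ∫⁻ x, ENNReal.ofReal (llr (Q S) P x) ∂(Q S) + 1 :=
          le_trans hmono (add_le_add_right hfin2 _)
        have hne : ∫⁻ x, ENNReal.ofReal (llr (Q S) P x) ∂(Q S) + 1 ≠ ∞ := by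
          simp [ENNReal.add_eq_top, hfin1]
        exact hne (top_le_iff.mp this)
      have hUinfm : MeasurableSet {S | U S = ∞} := hUm (measurableSet_singleton ∞)
      have hge : ∀ᵐ S ∂μ,
          {S | U S = ∞}.indicator (fun _ => (∞ : ℝ≥0∞)) S ≤ Psi ℓ β δ (Q S) P S := by
        filter_upwards [haeimp] with S h
        by_cases hS : S ∈ {S | U S = ∞}
        · rw [Set.indicator_of_mem hS]
          have hS' : U S = ∞ := hS
          have hkl : klDivE (Q S) P = ∞ := by
            rw [klDivE, if_neg (fun hcond => (h hcond) hS')]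
          exact (hPsi_top _ S hkl).ge
        · rw [Set.indicator_of_notMem hS]; exact zero_le
      have hlow := lintegral_mono_ae hge
      rw [lintegral_indicator hUinfm, setLIntegral_const, ENNReal.top_mul hUinf] at hlow
      exact top_le_iff.mp hlow
    · -- main case
      have hUfin : ∀ᵐ S ∂μ, U S < ∞ := by
        have h1 : ∀ᵐ S ∂μ, ¬ (U S = ∞) := by
          rw [ae_iff]; simpa using hUinf
        filter_upwards [h1] with S h using lt_top_iff_ne_top.mpr h
      set c : (Fin n → Z) → ℝ := fun S => (U S).toReal - (V S).toReal with hcdef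
      have hcm : Measurable c := hUm.ennreal_toReal.sub hVm.ennreal_toReal
      -- key pointwise inequality
      have hkey : ∀ᵐ S ∂μ, Psi ℓ β δ (Q S) pstar S + ENNReal.ofReal (c S) / c3
          ≤ Psi ℓ β δ (Q S) P S + ENNReal.ofReal (-c S) / c3 := by
        filter_upwards [hzero, hVfin, hUfin] with S hz hV hU
        haveI := hQprob S
        by_cases hcond : Q S ≪ P ∧ Integrable (llr (Q S) P) (Q S)
        swap
        · have hkl : klDivE (Q S) P = ∞ := by rw [klDivE, if_neg hcond]
          rw [hPsi_top _ S hkl, top_add]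
          exact le_top
        · obtain ⟨hqp, hint⟩ := hcond
          have hqps : Q S ≪ pstar := ac_mixture hgm hdecomp hqp hz
          have hch := llr_chain hqp hqps hz
          have hlgint : Integrable (llr pstar P) (Q S) :=
            (integrable_iff_lint hllrm (Q S)).2 ⟨hU.ne, hV.ne⟩
          have hllrstar_eq : llr (Q S) pstar
              =ᵐ[Q S] fun x => llr (Q S) P x - llr pstar P x := by
            filter_upwards [hch] with x hx
            rw [hx]; ring
          have hstarint : Integrable (llr (Q S) pstar) (Q S) :=
            (integrable_congr hllrstar_eq).2 (hint.sub hlgint)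
          have hcS : ∫ x, llr pstar P x ∂(Q S) = c S := by
            rw [integral_eq_lintegral_pos_part_sub_lintegral_neg_part hlgint]
          have hval : ∫ x, llr (Q S) pstar x ∂(Q S)
              = (∫ x, llr (Q S) P x ∂(Q S)) - c S := by
            rw [integral_congr_ae hllrstar_eq, integral_sub hint hlgint, hcS]
          have hklP : klDivE (Q S) P = ENNReal.ofReal (∫ x, llr (Q S) P x ∂(Q S)) := by
            rw [klDivE, if_pos ⟨hqp, hint⟩]
          have hklstar : klDivE (Q S) pstar
              = ENNReal.ofReal ((∫ x, llr (Q S) P x ∂(Q S)) - c S) := by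
            rw [klDivE, if_pos ⟨hqps, hstarint⟩, hval]
          have hgibbs1 : 0 ≤ ∫ x, llr (Q S) P x ∂(Q S) :=
            integral_llr_nonneg (Q S) P hqp hint
          have hgibbs2 : 0 ≤ (∫ x, llr (Q S) P x ∂(Q S)) - c S := by
            rw [← hval]; exact integral_llr_nonneg (Q S) pstar hqps hstarint
          have hid : klDivE (Q S) pstar + ENNReal.ofReal (c S)
              = klDivE (Q S) P + ENNReal.ofReal (-c S) := by
            rw [hklP, hklstar]
            exact ofReal_identity hgibbs1 hgibbs2
          simp only [Psi, ← hc3def]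
          rw [add_assoc, add_assoc]
          apply add_le_add_right
          rw [ENNReal.div_add_div_same, ENNReal.div_add_div_same]
          apply ENNReal.div_le_div_right
          rw [add_right_comm, hid, add_right_comm]
      -- integrate the key inequality
      have hmono := lintegral_mono_ae hkey
      have hXmeas : Measurable fun S => ENNReal.ofReal (c S) / c3 :=
        hcm.ennreal_ofReal.div_const c3
      have hYmeas : Measurable fun S => ENNReal.ofReal (-c S) / c3 :=
        hcm.neg.ennreal_ofReal.div_const c3
      rw [lintegral_add_right _ hXmeas, lintegral_add_right _ hYmeas] at hmono
      have hXdiv : ∫⁻ S, ENNReal.ofReal (c S) / c3 ∂μ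
          = (∫⁻ S, ENNReal.ofReal (c S) ∂μ) / c3 := by
        simp_rw [div_eq_mul_inv]
        rw [lintegral_mul_const _ hcm.ennreal_ofReal]
      have hYdiv : ∫⁻ S, ENNReal.ofReal (-c S) / c3 ∂μ
          = (∫⁻ S, ENNReal.ofReal (-c S) ∂μ) / c3 := by
        simp_rw [div_eq_mul_inv]
        rw [lintegral_mul_const _ (show Measurable fun S => ENNReal.ofReal (-c S) from hcm.neg.ennreal_ofReal)]
      set X := ∫⁻ S, ENNReal.ofReal (c S) ∂μ with hXdef
      set Y := ∫⁻ S, ENNReal.ofReal (-c S) ∂μ with hYdef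
      have hYleV : Y ≤ ∫⁻ S, V S ∂μ := by
        rw [hYdef]
        apply lintegral_mono_ae
        filter_upwards [hVfin] with S hV
        have h1 : -c S ≤ (V S).toReal := by
          rw [hcdef]; simp only [neg_sub]
          exact sub_le_self _ ENNReal.toReal_nonneg
        calc ENNReal.ofReal (-c S) ≤ ENNReal.ofReal (V S).toReal :=
              ENNReal.ofReal_le_ofReal h1
          _ = V S := ENNReal.ofReal_toReal hV.ne
      have hYne : Y ≠ ∞ := (lt_of_le_of_lt (hYleV.trans hVbar_le) ENNReal.one_lt_top).ne
      have hYdivne : Y / c3 ≠ ∞ := by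
        rw [div_eq_mul_inv]
        exact ENNReal.mul_ne_top hYne (ENNReal.inv_ne_top.mpr hc3ne0)
      rw [hXdiv, hYdiv] at hmono
      have hXdivne : X / c3 ≠ ∞ := by
        intro hXtop
        have hrhs : ∫⁻ S, Psi ℓ β δ (Q S) P S ∂μ + Y / c3 ≠ ∞ := by
          simp [ENNReal.add_eq_top, hB, hYdivne]
        apply hrhs
        rw [← top_le_iff]
        calc (∞:ℝ≥0∞) = X / c3 := hXtop.symm
          _ ≤ ∫⁻ S, Psi ℓ β δ (Q S) pstar S ∂μ + X / c3 := le_add_self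
          _ ≤ _ := hmono
      have hXne : X ≠ ∞ := by
        intro h
        apply hXdivne
        rw [h, ENNReal.top_div_of_ne_top hc3top]
      -- min decomposition and global Gibbs
      have hMm : Measurable fun S => min (U S) (V S) := hUm.min hVm
      have hXeq : ∫⁻ S, U S ∂μ = X + ∫⁻ S, min (U S) (V S) ∂μ := by
        rw [hXdef, ← lintegral_add_right _ hMm]
        apply lintegral_congr_ae
        filter_upwards [hUfin, hVfin] with S hU hV
        have h1 : ENNReal.ofReal (c S) = U S - V S := by
          rw [hcdef]
          simp only
          rw [ENNReal.ofReal_sub _ ENNReal.toReal_nonneg, ENNReal.ofReal_toReal hU.ne,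
            ENNReal.ofReal_toReal hV.ne]
        rw [h1, tsub_add_min_eq hV.ne]
      have hYeq : ∫⁻ S, V S ∂μ = Y + ∫⁻ S, min (U S) (V S) ∂μ := by
        rw [hYdef, ← lintegral_add_right _ hMm]
        apply lintegral_congr_ae
        filter_upwards [hUfin, hVfin] with S hU hV
        have h1 : ENNReal.ofReal (-c S) = V S - U S := by
          rw [hcdef]
          simp only [neg_sub]
          rw [ENNReal.ofReal_sub _ ENNReal.toReal_nonneg, ENNReal.ofReal_toReal hU.ne,
            ENNReal.ofReal_toReal hV.ne]
        rw [h1, min_comm, tsub_add_min_eq hU.ne]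
      have hMne : ∫⁻ S, min (U S) (V S) ∂μ ≠ ∞ := by
        have : ∫⁻ S, min (U S) (V S) ∂μ ≤ ∫⁻ S, V S ∂μ :=
          lintegral_mono fun S => min_le_right _ _
        exact (lt_of_le_of_lt (this.trans hVbar_le) ENNReal.one_lt_top).ne
      have hUbarne : ∫⁻ S, U S ∂μ ≠ ∞ := by
        rw [hXeq]
        simp [ENNReal.add_eq_top, hXne, hMne]
      have hVbarne : ∫⁻ S, V S ∂μ ≠ ∞ :=
        (lt_of_le_of_lt hVbar_le ENNReal.one_lt_top).ne
      have hlgint : Integrable (llr pstar P) pstar := by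
        rw [integrable_iff_lint hllrm pstar]
        constructor
        · rw [← hUbar]; exact hUbarne
        · rw [← hVbar]; exact hVbarne
      have hgibbs : 0 ≤ ∫ x, llr pstar P x ∂pstar :=
        integral_llr_nonneg pstar P hac hlgint
      have hbarle : ∫⁻ S, V S ∂μ ≤ ∫⁻ S, U S ∂μ := by
        rw [integral_eq_lintegral_pos_part_sub_lintegral_neg_part hlgint] at hgibbs
        rw [hUbar, hVbar]
        have h1 : (∫⁻ x, ENNReal.ofReal (-llr pstar P x) ∂pstar).toReal
            ≤ (∫⁻ x, ENNReal.ofReal (llr pstar P x) ∂pstar).toReal := by linarith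
        rw [← ENNReal.toReal_le_toReal]
        · exact h1
        · rw [← hVbar]; exact hVbarne
        · rw [← hUbar]; exact hUbarne
      have hYX : Y ≤ X := by
        rw [hXeq, hYeq] at hbarle
        exact (ENNReal.add_le_add_iff_right hMne).1 hbarle
      have hYX' : Y / c3 ≤ X / c3 := ENNReal.div_le_div_right hYX c3
      have hfinal : ∫⁻ S, Psi ℓ β δ (Q S) pstar S ∂μ + X / c3
          ≤ ∫⁻ S, Psi ℓ β δ (Q S) P S ∂μ + X / c3 :=
        hmono.trans (add_le_add_right hYX' _)
      exact (ENNReal.add_le_add_iff_right hXdivne).1 hfinal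
end

section
/- Let Q : Z^n → P(H) be a measurable probability kernel, D a probability distribution on Z, S ∼ D^n, and let P* = E_{S∼D^n}[Q(S)] be the mixture distribution defined by P*(B) = E_{S∼D^n}[Q(S)(B)]. Then for every probability distribution P' on H, E_{S∼D^n}[KL(Q(S)‖P*)] ≤ E_{S∼D^n}[KL(Q(S)‖P')]; that is, the expected KL divergence from the posterior to a fixed prior is minimized by the expected posterior. -/
open MeasureTheory Set
open scoped ENNReal NNReal

section helpers

variable {α : Type*} {mα : MeasurableSpace α} {μ ν : Measure α}

lemma ofReal_max_zero (t : ℝ) : ENNReal.ofReal (max t 0) = ENNReal.ofReal t := by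
  rcases le_total t 0 with h | h
  · simp [max_eq_right h, ENNReal.ofReal_eq_zero.2 h]
  · simp [max_eq_left h]

lemma lint_ofReal_neg_llr_le [SigmaFinite μ] [SigmaFinite ν] (h : μ ≪ ν) :
    ∫⁻ x, ENNReal.ofReal (-(llr μ ν x)) ∂μ ≤ ν Set.univ := by
  calc ∫⁻ x, ENNReal.ofReal (-(llr μ ν x)) ∂μ
      ≤ ∫⁻ x, ν.rnDeriv μ x ∂μ := by
        refine lintegral_mono_ae ?_
        filter_upwards [exp_neg_llr h] with x hx
        calc ENNReal.ofReal (-(llr μ ν x))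
            ≤ ENNReal.ofReal (Real.exp (-(llr μ ν x))) :=
              ENNReal.ofReal_le_ofReal
                ((le_add_of_nonneg_right zero_le_one).trans (Real.add_one_le_exp _))
          _ = ENNReal.ofReal ((ν.rnDeriv μ x).toReal) := by rw [hx]
          _ ≤ ν.rnDeriv μ x := ENNReal.ofReal_toReal_le
    _ ≤ ν Set.univ := Measure.lintegral_rnDeriv_le

lemma gibbs_real [IsProbabilityMeasure μ] [IsProbabilityMeasure ν] (h : μ ≪ ν)
    (hint : Integrable (llr μ ν) μ) : 0 ≤ ∫ x, llr μ ν x ∂μ := by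
  have hint' : Integrable (llr ν μ) μ := hint.neg.congr (neg_llr h)
  have hbound : ∀ᵐ x ∂μ, llr ν μ x ≤ (ν.rnDeriv μ x).toReal - 1 := by
    filter_upwards [Measure.inv_rnDeriv h, Measure.rnDeriv_pos h,
      h.ae_le (Measure.rnDeriv_lt_top μ ν)] with x hinv hpos hlt
    have hpos' : 0 < (ν.rnDeriv μ x).toReal := by
      rw [← hinv, Pi.inv_apply]
      refine ENNReal.toReal_pos ?_ ?_
      · exact ENNReal.inv_ne_zero.2 hlt.ne
      · exact ENNReal.inv_ne_top.2 hpos.ne'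
    exact Real.log_le_sub_one_of_pos hpos'
  have hintr : Integrable (fun x => (ν.rnDeriv μ x).toReal - 1) μ :=
    Measure.integrable_toReal_rnDeriv.sub (integrable_const 1)
  have h1 := integral_mono_ae hint' hintr hbound
  have h2 : ∫ x, ((ν.rnDeriv μ x).toReal - 1) ∂μ ≤ 0 := by
    rw [integral_sub Measure.integrable_toReal_rnDeriv (integrable_const 1)]
    have h3 := Measure.integral_toReal_rnDeriv' (μ := ν) (ν := μ)
    simp only [measureReal_def, measure_univ, ENNReal.toReal_one] at h3 ⊢
    rw [h3, integral_const]
    simp only [measureReal_def, measure_univ, ENNReal.toReal_one, one_smul, smul_eq_mul]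
    have : (0:ℝ) ≤ (ν.singularPart μ Set.univ).toReal := ENNReal.toReal_nonneg
    linarith
  have h4 : ∫ x, llr ν μ x ∂μ = - ∫ x, llr μ ν x ∂μ := by
    rw [← integral_neg]
    exact (integral_congr_ae (neg_llr h)).symm
  linarith [h1.trans h2]

lemma integrable_llr_iff [IsProbabilityMeasure μ] [IsFiniteMeasure ν] (h : μ ≪ ν) :
    Integrable (llr μ ν) μ ↔ ∫⁻ x, ENNReal.ofReal (llr μ ν x) ∂μ ≠ ⊤ := by
  constructor
  · intro hint
    refine ne_top_of_le_ne_top hint.2.ne (lintegral_mono fun x => ?_)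
    rw [Real.enorm_eq_ofReal_abs]
    exact ENNReal.ofReal_le_ofReal (le_abs_self _)
  · intro hfin
    refine ⟨(measurable_llr μ ν).aestronglyMeasurable, ?_⟩
    have hb : ∀ x : α, (‖llr μ ν x‖₊ : ℝ≥0∞)
        ≤ ENNReal.ofReal (llr μ ν x) + ENNReal.ofReal (-(llr μ ν x)) := by
      intro x
      rw [← enorm_eq_nnnorm, Real.enorm_eq_ofReal_abs]
      rcases le_total 0 (llr μ ν x) with hx | hx
      · rw [abs_of_nonneg hx]; exact le_add_of_le_of_nonneg le_rfl zero_le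
      · rw [abs_of_nonpos hx]; exact le_add_of_nonneg_of_le zero_le le_rfl
    have : HasFiniteIntegral (llr μ ν) μ := by
      rw [HasFiniteIntegral]
      calc ∫⁻ x, (‖llr μ ν x‖₊ : ℝ≥0∞) ∂μ
          ≤ ∫⁻ x, (ENNReal.ofReal (llr μ ν x) + ENNReal.ofReal (-(llr μ ν x))) ∂μ :=
            lintegral_mono hb
        _ = (∫⁻ x, ENNReal.ofReal (llr μ ν x) ∂μ)
            + ∫⁻ x, ENNReal.ofReal (-(llr μ ν x)) ∂μ :=
            lintegral_add_left (measurable_llr μ ν).ennreal_ofReal _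
        _ < ⊤ := by
            refine ENNReal.add_lt_top.2 ⟨hfin.lt_top, ?_⟩
            exact (lint_ofReal_neg_llr_le h).trans_lt (measure_lt_top ν _)
    exact this

lemma gibbs_lint [IsProbabilityMeasure μ] [IsProbabilityMeasure ν] (h : μ ≪ ν) :
    ∫⁻ x, ENNReal.ofReal (-(llr μ ν x)) ∂μ ≤ ∫⁻ x, ENNReal.ofReal (llr μ ν x) ∂μ := by
  by_cases htop : ∫⁻ x, ENNReal.ofReal (llr μ ν x) ∂μ = ⊤
  · exact htop ▸ le_top
  have hint : Integrable (llr μ ν) μ := (integrable_llr_iff h).2 htop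
  have hneg : ∫⁻ x, ENNReal.ofReal (-(llr μ ν x)) ∂μ ≠ ⊤ :=
    ((lint_ofReal_neg_llr_le h).trans_lt (measure_lt_top ν _)).ne
  have heq := integral_eq_lintegral_pos_part_sub_lintegral_neg_part hint
  have h0 := gibbs_real h hint
  rw [heq] at h0
  exact (ENNReal.toReal_le_toReal hneg htop).1 (sub_nonneg.1 h0)

end helpers

theorem expected_posterior_minimizes_expected_kl
    {Z H : Type*} [MeasurableSpace Z] [MeasurableSpace H]
    {n : ℕ}
    (Q : (Fin n → Z) → Measure H) (hQmeas : Measurable Q)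
    (hQprob : ∀ S, IsProbabilityMeasure (Q S))
    (D : Measure Z) [IsProbabilityMeasure D]
    (P' : Measure H) [IsProbabilityMeasure P'] :
    ∫⁻ S, klDivE (Q S) ((Measure.pi fun _ : Fin n => D).bind Q)
        ∂(Measure.pi fun _ : Fin n => D) ≤
      ∫⁻ S, klDivE (Q S) P' ∂(Measure.pi fun _ : Fin n => D) := by
  set μ : Measure (Fin n → Z) := Measure.pi fun _ : Fin n => D with hμdef
  set Pstar : Measure H := μ.bind Q with hPdef
  haveI hPstarProb : IsProbabilityMeasure Pstar := by
    constructor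
    rw [hPdef, Measure.bind_apply MeasurableSet.univ hQmeas.aemeasurable]
    calc ∫⁻ S, Q S Set.univ ∂μ = ∫⁻ _S, 1 ∂μ :=
          lintegral_congr fun S => (hQprob S).measure_univ
      _ = 1 := by simp
  by_cases hPP' : Pstar ≪ P'
  swap
  · -- `Pstar` is not absolutely continuous w.r.t. `P'`: the RHS is infinite.
    obtain ⟨s, hsm, hs0, hsne⟩ : ∃ s, MeasurableSet s ∧ P' s = 0 ∧ Pstar s ≠ 0 := by
      by_contra hc
      push_neg at hc
      exact hPP' (Measure.AbsolutelyContinuous.mk hc)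
    have hmeasc : Measurable fun S => Q S s := (Measure.measurable_coe hsm).comp hQmeas
    have hU : MeasurableSet {S | Q S s ≠ 0} :=
      hmeasc (measurableSet_singleton (0 : ℝ≥0∞)).compl
    have hUne : μ {S | Q S s ≠ 0} ≠ 0 := by
      intro h0
      apply hsne
      rw [hPdef, Measure.bind_apply hsm hQmeas.aemeasurable]
      have hz : (fun S => Q S s) =ᵐ[μ] 0 := by
        rw [Filter.EventuallyEq, ae_iff]
        simpa using h0
      rw [lintegral_congr_ae hz]
      simp
    have hrhs : ∫⁻ S, klDivE (Q S) P' ∂μ = ⊤ := by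
      have hle : ∀ S, {S | Q S s ≠ 0}.indicator (fun _ => (⊤ : ℝ≥0∞)) S
          ≤ klDivE (Q S) P' := by
        intro S
        by_cases hS : Q S s ≠ 0
        · rw [Set.indicator_of_mem (show S ∈ {S | Q S s ≠ 0} from hS)]
          have hnac : ¬ (Q S ≪ P') := fun hac => hS (hac hs0)
          unfold klDivE
          rw [if_neg (fun hh => hnac hh.1)]
        · rw [Set.indicator_of_notMem (show S ∉ {S | Q S s ≠ 0} from hS)]
          exact zero_le
      refine top_le_iff.1 ?_
      calc (⊤ : ℝ≥0∞) = ⊤ * μ {S | Q S s ≠ 0} := (ENNReal.top_mul hUne).symm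
        _ = ∫⁻ S, {S | Q S s ≠ 0}.indicator (fun _ => (⊤ : ℝ≥0∞)) S ∂μ :=
            (lintegral_indicator_const hU ⊤).symm
        _ ≤ _ := lintegral_mono hle
    rw [hrhs]
    exact le_top
  -- Main case: `Pstar ≪ P'`.
  set g : H → ℝ := llr Pstar P' with hgdef
  have hgmeas : Measurable g := measurable_llr _ _
  set Z0 : Set H := {h | Pstar.rnDeriv P' h = 0} with hZ0def
  have hZ0m : MeasurableSet Z0 :=
    Measure.measurable_rnDeriv _ _ (measurableSet_singleton 0)
  have hZ0null : Pstar Z0 = 0 := by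
    rw [← Measure.setLIntegral_rnDeriv' hPP' hZ0m,
      setLIntegral_congr_fun hZ0m (fun x hx => hx), lintegral_zero]
  have haeZ : ∀ᵐ S ∂μ, Q S Z0 = 0 := by
    have hmeasc : Measurable fun S => Q S Z0 := (Measure.measurable_coe hZ0m).comp hQmeas
    have h0 : ∫⁻ S, Q S Z0 ∂μ = 0 := by
      rw [← Measure.bind_apply hZ0m hQmeas.aemeasurable]
      exact hZ0null
    filter_upwards [(lintegral_eq_zero_iff hmeasc).1 h0] with S hS using hS
  have hupgrade : ∀ S, Q S Z0 = 0 → Q S ≪ P' → Q S ≪ Pstar := by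
    intro S hZS hac
    refine Measure.AbsolutelyContinuous.mk fun B hBm hB0 => ?_
    have h1 : ∫⁻ x in B, Pstar.rnDeriv P' x ∂P' = 0 := by
      rw [Measure.setLIntegral_rnDeriv' hPP' hBm]
      exact hB0
    have h2 : ∀ᵐ x ∂P', x ∈ B → Pstar.rnDeriv P' x = 0 :=
      (setLIntegral_eq_zero_iff hBm (Measure.measurable_rnDeriv _ _)).1 h1
    have h3 : P' (B \ Z0) = 0 := by
      refine measure_mono_null ?_ (ae_iff.1 h2)
      intro x hx
      simp only [Set.mem_setOf_eq]
      intro hcon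
      exact hx.2 (hcon hx.1)
    have h5 : Q S (B \ Z0) = 0 := hac h3
    have h6 : Q S (B ∩ Z0) = 0 := measure_mono_null Set.inter_subset_right hZS
    refine le_antisymm ?_ zero_le
    calc Q S B ≤ Q S ((B \ Z0) ∪ (B ∩ Z0)) := by
          refine measure_mono fun x hx => ?_
          by_cases hxz : x ∈ Z0
          · exact Or.inr ⟨hx, hxz⟩
          · exact Or.inl ⟨hx, hxz⟩
      _ ≤ Q S (B \ Z0) + Q S (B ∩ Z0) := measure_union_le _ _
      _ = 0 := by rw [h5, h6, add_zero]
  set Pf : (Fin n → Z) → ℝ≥0∞ := fun S => ∫⁻ h, ENNReal.ofReal (g h) ∂(Q S) with hPfdef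
  set Mf : (Fin n → Z) → ℝ≥0∞ := fun S => ∫⁻ h, ENNReal.ofReal (-(g h)) ∂(Q S) with hMfdef
  have hPfmeas : Measurable Pf :=
    (Measure.measurable_lintegral hgmeas.ennreal_ofReal).comp hQmeas
  have hMfmeas : Measurable Mf :=
    (Measure.measurable_lintegral hgmeas.neg.ennreal_ofReal).comp hQmeas
  have star : ∀ᵐ S ∂μ, klDivE (Q S) Pstar + Pf S ≤ klDivE (Q S) P' + Mf S := by
    filter_upwards [haeZ] with S hZS
    haveI := hQprob S
    by_cases hgood : Q S ≪ P' ∧ Integrable (llr (Q S) P') (Q S)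
    · obtain ⟨hac, hint⟩ := hgood
      have hQs : Q S ≪ Pstar := hupgrade S hZS hac
      have hd : ∀ᵐ x ∂(Q S), llr (Q S) P' x = llr (Q S) Pstar x + g x := by
        filter_upwards [Measure.rnDeriv_pos hQs,
          hQs.ae_le (Measure.rnDeriv_lt_top (Q S) Pstar),
          hQs.ae_le (Measure.rnDeriv_pos hPP'),
          hac.ae_le (Measure.rnDeriv_lt_top Pstar P'),
          hac.ae_le (Measure.rnDeriv_mul_rnDeriv hQs)] with x h1 h2 h3 h4 h5
        rw [hgdef]
        show Real.log ((Q S).rnDeriv P' x).toReal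
            = Real.log ((Q S).rnDeriv Pstar x).toReal
              + Real.log ((Pstar.rnDeriv P') x).toReal
        rw [← h5, Pi.mul_apply, ENNReal.toReal_mul,
          Real.log_mul (ENNReal.toReal_pos h1.ne' h2.ne).ne'
            (ENNReal.toReal_pos h3.ne' h4.ne).ne']
      by_cases hB : Integrable (llr (Q S) Pstar) (Q S)
      · have hgint : Integrable g (Q S) := by
          have h6 : Integrable (fun x => llr (Q S) P' x - llr (Q S) Pstar x) (Q S) :=
            hint.sub hB
          refine h6.congr ?_
          filter_upwards [hd] with x hx
          rw [hx]; ring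
        have hgp : Integrable (fun x => max (g x) 0) (Q S) := hgint.pos_part
        have hgm : Integrable (fun x => max (-(g x)) 0) (Q S) := hgint.neg.pos_part
        have hklP' : klDivE (Q S) P' = ENNReal.ofReal (∫ h, llr (Q S) P' h ∂(Q S)) := by
          unfold klDivE
          rw [if_pos ⟨hac, hint⟩]
        have hklPs : klDivE (Q S) Pstar
            = ENNReal.ofReal (∫ h, llr (Q S) Pstar h ∂(Q S)) := by
          unfold klDivE
          rw [if_pos ⟨hQs, hB⟩]
        have hPfS : Pf S = ENNReal.ofReal (∫ x, max (g x) 0 ∂(Q S)) := by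
          rw [ofReal_integral_eq_lintegral_ofReal hgp
            (ae_of_all _ fun x => le_max_right _ _)]
          simp only [hPfdef]
          exact lintegral_congr fun x => (ofReal_max_zero (g x)).symm
        have hMfS : Mf S = ENNReal.ofReal (∫ x, max (-(g x)) 0 ∂(Q S)) := by
          rw [ofReal_integral_eq_lintegral_ofReal hgm
            (ae_of_all _ fun x => le_max_right _ _)]
          simp only [hMfdef]
          exact lintegral_congr fun x => (ofReal_max_zero (-(g x))).symm
        rw [hklP', hklPs, hPfS, hMfS]
        have ha : 0 ≤ ∫ h, llr (Q S) P' h ∂(Q S) := gibbs_real hac hint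
        have hb : 0 ≤ ∫ h, llr (Q S) Pstar h ∂(Q S) := gibbs_real hQs hB
        have hp : 0 ≤ ∫ x, max (g x) 0 ∂(Q S) :=
          integral_nonneg fun x => le_max_right _ _
        have hm : 0 ≤ ∫ x, max (-(g x)) 0 ∂(Q S) :=
          integral_nonneg fun x => le_max_right _ _
        have hsum : ∫ h, llr (Q S) P' h ∂(Q S)
            = ∫ h, llr (Q S) Pstar h ∂(Q S) + ∫ x, g x ∂(Q S) := by
          rw [← integral_add hB hgint]
          exact integral_congr_ae hd
        have hpm : ∫ x, g x ∂(Q S)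
            = ∫ x, max (g x) 0 ∂(Q S) - ∫ x, max (-(g x)) 0 ∂(Q S) := by
          rw [← integral_sub hgp hgm]
          exact integral_congr_ae
            (ae_of_all _ fun x => (max_zero_sub_max_neg_zero_eq_self (g x)).symm)
        rw [← ENNReal.ofReal_add hb hp, ← ENNReal.ofReal_add ha hm]
        exact ENNReal.ofReal_le_ofReal (by linarith)
      · have hAfin : ∫⁻ x, ENNReal.ofReal (llr (Q S) P' x) ∂(Q S) ≠ ⊤ :=
          (integrable_llr_iff hac).1 hint
        have hBtop : ∫⁻ x, ENNReal.ofReal (llr (Q S) Pstar x) ∂(Q S) = ⊤ := by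
          by_contra hne
          exact hB ((integrable_llr_iff hQs).2 hne)
        have hMtop : Mf S = ⊤ := by
          have hpt : ∀ᵐ x ∂(Q S), ENNReal.ofReal (llr (Q S) Pstar x)
              ≤ ENNReal.ofReal (llr (Q S) P' x) + ENNReal.ofReal (-(g x)) := by
            filter_upwards [hd] with x hx
            have hx' : llr (Q S) Pstar x = llr (Q S) P' x + -(g x) := by linarith
            rw [hx']
            exact ENNReal.ofReal_add_le
          have hle := lintegral_mono_ae hpt
          rw [lintegral_add_left (measurable_llr _ _).ennreal_ofReal, hBtop] at hle
          by_contra hMne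
          exact (ENNReal.add_ne_top.2 ⟨hAfin, hMne⟩) (top_le_iff.1 hle)
        rw [hMtop, add_top]
        exact le_top
    · have hT : klDivE (Q S) P' = ⊤ := by
        unfold klDivE
        rw [if_neg hgood]
      rw [hT, top_add]
      exact le_top
  have key : (∫⁻ S, klDivE (Q S) Pstar ∂μ) + ∫⁻ S, Pf S ∂μ
      ≤ (∫⁻ S, klDivE (Q S) P' ∂μ) + ∫⁻ S, Mf S ∂μ := by
    rw [← lintegral_add_right _ hPfmeas, ← lintegral_add_right _ hMfmeas]
    exact lintegral_mono_ae star
  have hPbind : ∫⁻ S, Pf S ∂μ = ∫⁻ h, ENNReal.ofReal (g h) ∂Pstar := by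
    simp only [hPfdef, hPdef]
    exact (Measure.lintegral_bind hQmeas.aemeasurable hgmeas.ennreal_ofReal.aemeasurable).symm
  have hMbind : ∫⁻ S, Mf S ∂μ = ∫⁻ h, ENNReal.ofReal (-(g h)) ∂Pstar := by
    simp only [hMfdef, hPdef]
    exact (Measure.lintegral_bind hQmeas.aemeasurable hgmeas.neg.ennreal_ofReal.aemeasurable).symm
  have hMfin : ∫⁻ S, Mf S ∂μ ≠ ⊤ := by
    rw [hMbind]
    exact ((lint_ofReal_neg_llr_le hPP').trans_lt (measure_lt_top P' _)).ne
  have hMP : ∫⁻ S, Mf S ∂μ ≤ ∫⁻ S, Pf S ∂μ := by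
    rw [hMbind, hPbind]
    exact gibbs_lint hPP'
  by_cases hPfin : ∫⁻ S, Pf S ∂μ = ⊤
  · have hrt : ∫⁻ S, klDivE (Q S) P' ∂μ = ⊤ := by
      by_contra hne
      have hk := key
      rw [hPfin, add_top] at hk
      exact (ENNReal.add_ne_top.2 ⟨hne, hMfin⟩) (top_le_iff.1 hk)
    rw [hrt]
    exact le_top
  · exact (ENNReal.add_le_add_iff_right hPfin).1 (key.trans (add_le_add_right hMP _))
end

section
/- Let β, δ ∈ (0,1), m < n, J ⊆ [n] a fixed subset of size m, D a probability distribution on Z, and P : Z^m → P(H) a measurable probability kernel. Then with probability at least 1−δ over S ∼ D^n, simultaneously for all probability distributions Q on H: L_D(Q) ≤ (1/β)·L̂_{S∖S_J}(Q) + (KL(Q‖P(S_J)) + log(1/δ))/(2β(1−β)·(n−m)), where the empirical risk is computed only on the complementary subsequence S∖S_J, which is independent of the data S_J used to choose the prior. -/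
open MeasureTheory Set
open scoped ENNReal NNReal

-- Empirical risk of a Gibbs classifier `Q` on the subsequence `S∖S_J` of the
-- sample `S` with indices outside `J` (of size `n − m` when `|J| = m`).
noncomputable def gibbsEmpRiskCompl {H Z : Type*} [MeasurableSpace H]
    (ℓ : H → Z → ℝ) {n : ℕ} (J : Finset (Fin n)) (S : Fin n → Z) (Q : Measure H) : ℝ :=
  ∫ h, (∑ i ∈ Jᶜ, ℓ h (S i)) / (n - J.card : ℝ) ∂Q

-- **Linear PAC-Bayes bound with a data-dependent prior.** Let `J ⊆ [n]` be a
-- fixed subset of size `m < n` and `P : Z^m → P(H)` a measurable probability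
-- kernel. With probability at least `1 − δ` over `S ∼ D^n`, simultaneously for
-- all posteriors `Q`:
-- `L_D(Q) ≤ (1/β)·L̂_{S∖S_J}(Q) + (KL(Q‖P(S_J)) + log(1/δ)) / (2β(1−β)(n−m))`,
-- the empirical risk being computed only on `S∖S_J`, which is independent of
-- the data `S_J` used to choose the prior.
section Aux

open Real ProbabilityTheory

lemma pb_exp_neg_le (t : ℝ) (ht : 0 ≤ t) : Real.exp (-t) ≤ 1 - t + t ^ 2 / 2 := by
  have h1 : 1 + t + t ^ 2 / 2 ≤ Real.exp t := Real.quadratic_le_exp_of_nonneg ht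
  have h2 : 0 < 1 + t + t ^ 2 / 2 := by nlinarith
  rw [Real.exp_neg t]
  have h4 : (Real.exp t)⁻¹ ≤ (1 + t + t ^ 2 / 2)⁻¹ := by
    apply inv_anti₀ h2 h1
  refine h4.trans ?_
  rw [inv_le_iff_one_le_mul₀ h2]
  nlinarith

lemma pb_pointwise {β : ℝ} (hβ0 : 0 < β) (hβ1 : β < 1) {x : ℝ} (hx0 : 0 ≤ x) (hx1 : x ≤ 1) :
    Real.exp (-(2 * (1 - β)) * x) ≤ 1 - 2 * (1 - β) * β * x := by
  have hl : 0 ≤ 2 * (1 - β) * x := by nlinarith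
  have h := pb_exp_neg_le (2 * (1 - β) * x) hl
  have hx2 : x ^ 2 ≤ x := by nlinarith
  calc Real.exp (-(2 * (1 - β)) * x) = Real.exp (-(2 * (1 - β) * x)) := by rw [neg_mul]
    _ ≤ 1 - 2 * (1 - β) * x + (2 * (1 - β) * x) ^ 2 / 2 := h
    _ ≤ 1 - 2 * (1 - β) * β * x := by
        nlinarith [mul_le_mul_of_nonneg_left hx2 (sq_nonneg (1 - β))]

lemma pb_lintegral_fin_pi_prod {n : ℕ} {E : Fin n → Type*} [∀ i, MeasurableSpace (E i)]
    (μ : ∀ i, Measure (E i)) [∀ i, SigmaFinite (μ i)]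
    (g : ∀ i, E i → ℝ≥0∞) (hg : ∀ i, Measurable (g i)) :
    ∫⁻ x, ∏ i, g i (x i) ∂Measure.pi μ = ∏ i, ∫⁻ x, g i x ∂μ i := by
  induction n with
  | zero => simp
  | succ n ih =>
    have hmp := (measurePreserving_piFinSuccAbove μ 0).symm
    have hG : Measurable fun x : ∀ i, E i => ∏ i, g i (x i) :=
      Finset.measurable_prod _ fun i _ => (hg i).comp (measurable_pi_apply i)
    rw [← hmp.lintegral_comp hG]
    simp_rw [MeasurableEquiv.piFinSuccAbove_symm_apply, Fin.insertNthEquiv,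
      Fin.prod_univ_succ, Fin.insertNth_zero]
    simp only [Fin.zero_succAbove, Nat.cast_eq_zero, Equiv.coe_fn_mk, Fin.cons_zero, Fin.cons_succ,
      cast_eq]
    refine (lintegral_prod_mul (μ := μ 0) (ν := Measure.pi fun j => μ (Fin.succAbove 0 j))
      (f := g 0) (g := fun y : (j : Fin n) → E j.succ => ∏ x : Fin n, g x.succ (y x))
      (hg 0).aemeasurable
      ((Finset.measurable_prod _ fun i _ => (hg _).comp (measurable_pi_apply i)).aemeasurable)).trans ?_
    congr 1
    exact ih (fun i => μ i.succ) (fun i => g i.succ) (fun i => hg _)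

lemma pb_lintegral_pi_prod {ι : Type*} [Fintype ι] {E : Type*} [MeasurableSpace E]
    (μ : Measure E) [SigmaFinite μ] (g : ι → E → ℝ≥0∞) (hg : ∀ i, Measurable (g i)) :
    ∫⁻ x : ι → E, ∏ i, g i (x i) ∂Measure.pi (fun _ => μ) = ∏ i, ∫⁻ z, g i z ∂μ := by
  let e := (Fintype.equivFin ι).symm
  have hmp := measurePreserving_piCongrLeft (fun _ : ι => μ) e
  have hG : Measurable fun x : ι → E => ∏ i, g i (x i) :=
    Finset.measurable_prod _ fun i _ => (hg i).comp (measurable_pi_apply i)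
  rw [← hmp.lintegral_comp hG]
  simp_rw [← e.prod_comp, MeasurableEquiv.coe_piCongrLeft, Equiv.piCongrLeft_apply_apply]
  rw [pb_lintegral_fin_pi_prod (fun _ => μ) (fun i => g (e i)) (fun i => hg _)]

lemma pb_sample_bound {Z : Type*} [MeasurableSpace Z] (D : Measure Z) [IsProbabilityMeasure D]
    (g : Z → ℝ) (hg : Measurable g) (hg01 : ∀ z, g z ∈ Icc (0:ℝ) 1)
    {β : ℝ} (hβ0 : 0 < β) (hβ1 : β < 1) :
    ∫⁻ z, ENNReal.ofReal (Real.exp (-(2*(1-β)) * g z)) ∂D ≤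
      ENNReal.ofReal (Real.exp (-(2*(1-β)*β) * ∫ z, g z ∂D)) := by
  have hgint : Integrable g D := by
    refine (integrable_const (1:ℝ)).mono' hg.aestronglyMeasurable ?_
    exact ae_of_all _ fun z => by
      rw [Real.norm_eq_abs, abs_of_nonneg (hg01 z).1]; exact (hg01 z).2
  have hexpint : Integrable (fun z => Real.exp (-(2*(1-β)) * g z)) D := by
    refine (integrable_const (1:ℝ)).mono' ?_ ?_
    · exact (Real.measurable_exp.comp (hg.const_mul _)).aestronglyMeasurable
    · refine ae_of_all _ fun z => ?_
      rw [Real.norm_eq_abs, abs_of_nonneg (Real.exp_nonneg _)]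
      rw [Real.exp_le_one_iff]
      nlinarith [(hg01 z).1]
  rw [← ofReal_integral_eq_lintegral_ofReal hexpint (ae_of_all _ fun z => (Real.exp_nonneg _))]
  apply ENNReal.ofReal_le_ofReal
  calc ∫ z, Real.exp (-(2*(1-β)) * g z) ∂D
      ≤ ∫ z, (1 - 2*(1-β)*β * g z) ∂D := by
        apply integral_mono hexpint ((integrable_const (1:ℝ)).sub (hgint.const_mul _))
        intro z
        exact pb_pointwise hβ0 hβ1 (hg01 z).1 (hg01 z).2
    _ = 1 - 2*(1-β)*β * ∫ z, g z ∂D := by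
        rw [integral_sub (integrable_const _) (hgint.const_mul _), integral_const,
          integral_const_mul]
        simp
    _ ≤ Real.exp (-(2*(1-β)*β) * ∫ z, g z ∂D) := by
        have := Real.add_one_le_exp (-(2*(1-β)*β) * ∫ z, g z ∂D)
        linarith

end Aux

theorem linear_pac_bayes_bound_data_dependent_prior
    {Z H : Type*} [MeasurableSpace Z] [MeasurableSpace H]
    (ℓ : H → Z → ℝ) (hℓmeas : Measurable (Function.uncurry ℓ))
    (hℓ : ∀ h z, ℓ h z ∈ Icc (0 : ℝ) 1)
    {β δ : ℝ} (hβ : β ∈ Ioo (0 : ℝ) 1) (hδ : δ ∈ Ioo (0 : ℝ) 1)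
    {n m : ℕ} (hm : m < n) (J : Finset (Fin n)) (hJ : J.card = m)
    (D : Measure Z) [IsProbabilityMeasure D]
    (P : ({i : Fin n // i ∈ J} → Z) → Measure H) (hPmeas : Measurable P)
    (hPprob : ∀ x, IsProbabilityMeasure (P x)) :
    ENNReal.ofReal (1 - δ) ≤
      (Measure.pi fun _ : Fin n => D)
        {S | ∀ Q : Measure H, IsProbabilityMeasure Q →
          ENNReal.ofReal (gibbsRisk ℓ D Q) ≤
            ENNReal.ofReal ((1 / β) * gibbsEmpRiskCompl ℓ J S Q) +
              (klDivE Q (P fun i => S i.1) + ENNReal.ofReal (Real.log (1 / δ))) /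
                ENNReal.ofReal (2 * β * (1 - β) * (n - m : ℝ))} := by
  classical
  obtain ⟨hβ0, hβ1⟩ := hβ
  obtain ⟨hδ0, hδ1⟩ := hδ
  set lam : ℝ := 2 * (1 - β) with hlam_def
  have hlam0 : 0 < lam := by simp only [hlam_def]; nlinarith
  set K : ℝ := (n : ℝ) - m with hK_def
  have hK0 : 0 < K := by
    simp only [hK_def, sub_pos]; exact_mod_cast hm
  -- the mean risk of a hypothesis
  set μrisk : H → ℝ := fun h => ∫ z, ℓ h z ∂D with hμrisk_def
  have hμmeas : Measurable μrisk := by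
    have : StronglyMeasurable (Function.uncurry ℓ) := hℓmeas.stronglyMeasurable
    exact this.integral_prod_right'.measurable
  have hμ01 : ∀ h, μrisk h ∈ Icc (0:ℝ) 1 := by
    intro h
    constructor
    · exact integral_nonneg fun z => (hℓ h z).1
    · calc ∫ z, ℓ h z ∂D ≤ ∫ _, (1:ℝ) ∂D := by
            apply integral_mono ?_ (integrable_const _) fun z => (hℓ h z).2
            refine (integrable_const (1:ℝ)).mono'
              (hℓmeas.comp measurable_prodMk_left).aestronglyMeasurable ?_
            exact ae_of_all _ fun z => by
              rw [Real.norm_eq_abs, abs_of_nonneg (hℓ h z).1]; exact (hℓ h z).2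
        _ = 1 := by simp
  -- empirical sum on the complement of J
  set sumC : H → (Fin n → Z) → ℝ := fun h S => ∑ i ∈ Jᶜ, ℓ h (S i) with hsumC_def
  have hsumCmeas : Measurable (fun p : (Fin n → Z) × H => sumC p.2 p.1) := by
    apply Finset.measurable_sum
    intro i _
    exact hℓmeas.comp ((measurable_snd).prodMk ((measurable_pi_apply i).comp measurable_fst))
  have hcardJc : (Jᶜ.card : ℝ) = K := by
    rw [Finset.card_compl, Fintype.card_fin, hJ, Nat.cast_sub hm.le]
  have hsumC_bounds : ∀ h S, sumC h S ∈ Icc (0:ℝ) K := by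
    intro h S
    constructor
    · exact Finset.sum_nonneg fun i _ => (hℓ h (S i)).1
    · calc sumC h S ≤ ∑ _i ∈ Jᶜ, (1:ℝ) := Finset.sum_le_sum fun i _ => (hℓ h (S i)).2
        _ = Jᶜ.card := by simp
        _ = K := hcardJc
  -- the exponent function
  set fE : H → (Fin n → Z) → ℝ := fun h S => lam * (K * β * μrisk h - sumC h S) with hfE_def
  -- the data-dependent prior, as a function of the full sample
  set prior : (Fin n → Z) → Measure H := fun S => P (fun i => S i.1) with hprior_def
  have hprior_meas : Measurable prior := by
    apply hPmeas.comp
    exact measurable_pi_lambda _ fun i => measurable_pi_apply i.1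
  haveI : ∀ S, IsProbabilityMeasure (prior S) := fun S => hPprob _
  -- as a kernel
  set κ : ProbabilityTheory.Kernel (Fin n → Z) H :=
    ⟨prior, hprior_meas⟩ with hκ_def
  haveI : ProbabilityTheory.IsMarkovKernel κ := ⟨fun S => hPprob _⟩
  have hκ_app : ∀ S, κ S = prior S := fun S => rfl
  -- the key random variable
  set F : (Fin n → Z) → ℝ≥0∞ :=
    fun S => ∫⁻ h, ENNReal.ofReal (Real.exp (fE h S)) ∂(prior S) with hF_def
  have hfE_joint : Measurable (Function.uncurry
      fun (S : Fin n → Z) (h : H) => ENNReal.ofReal (Real.exp (fE h S))) := by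
    apply ENNReal.measurable_ofReal.comp
    apply Real.measurable_exp.comp
    apply Measurable.const_mul
    exact ((hμmeas.comp measurable_snd).const_mul _).sub hsumCmeas
  have hFmeas : Measurable F := by
    have := Measurable.lintegral_kernel_prod_right (κ := κ) hfE_joint
    simpa [hκ_app] using this
  -- bounds on fE
  have hfE_bound : ∀ h S, |fE h S| ≤ lam * K := by
    intro h S
    rw [abs_le]
    have h1 := hμ01 h
    have h2 := hsumC_bounds h S
    have hb1 : K * β * μrisk h ≤ K := by
      nlinarith [mul_le_mul_of_nonneg_left h1.2 (mul_nonneg hK0.le hβ0.le)]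
    have hb0 : 0 ≤ K * β * μrisk h := mul_nonneg (mul_nonneg hK0.le hβ0.le) h1.1
    constructor
    · have := mul_le_mul_of_nonneg_left
        (show (0:ℝ) - K ≤ K * β * μrisk h - sumC h S by linarith [h2.2]) hlam0.le
      simp only [hfE_def]
      linarith
    · have := mul_le_mul_of_nonneg_left
        (show K * β * μrisk h - sumC h S ≤ K by linarith [h2.1]) hlam0.le
      simp only [hfE_def]
      linarith
  -- Step 1: expectation of F is at most 1
  have hF1 : ∫⁻ S, F S ∂(Measure.pi fun _ : Fin n => D) ≤ 1 := by
    have hmp := measurePreserving_piEquivPiSubtypeProd (fun _ : Fin n => D)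
      (fun i : Fin n => i ∈ J)
    set e := MeasurableEquiv.piEquivPiSubtypeProd (fun _ : Fin n => Z)
      (fun i : Fin n => i ∈ J) with he_def
    have heq : ∫⁻ S, F S ∂(Measure.pi fun _ : Fin n => D)
        = ∫⁻ y, F (e.symm y) ∂(Measure.map e (Measure.pi fun _ : Fin n => D)) := by
      rw [MeasureTheory.lintegral_map_equiv]
      exact (lintegral_congr fun S => by rw [MeasurableEquiv.symm_apply_apply]).symm
    rw [heq, hmp.map_eq, lintegral_prod (fun y => F (e.symm y)) ((hFmeas.comp e.symm.measurable).aemeasurable)]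
    have key : ∀ a : {i : Fin n // i ∈ J} → Z,
        ∫⁻ b, F (e.symm (a, b))
          ∂(Measure.pi fun _ : {i : Fin n // ¬ i ∈ J} => D) ≤ 1 := by
      intro a
      haveI : IsProbabilityMeasure (P a) := hPprob a
      have hfst : ∀ b : {i : Fin n // ¬ i ∈ J} → Z,
          (fun i : {i : Fin n // i ∈ J} => (e.symm (a, b)) i.1) = a := by
        intro b
        funext i
        simp only [he_def, MeasurableEquiv.piEquivPiSubtypeProd, MeasurableEquiv.symm_mk,
          MeasurableEquiv.coe_mk, Equiv.symm_symm, Equiv.piEquivPiSubtypeProd_symm_apply,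
          i.2, dif_pos]
      have hsnd : ∀ (b : {i : Fin n // ¬ i ∈ J} → Z) (j : {i : Fin n // ¬ i ∈ J}),
          (e.symm (a, b)) j.1 = b j := by
        intro b j
        simp only [he_def, MeasurableEquiv.piEquivPiSubtypeProd, MeasurableEquiv.symm_mk,
          MeasurableEquiv.coe_mk, Equiv.symm_symm, Equiv.piEquivPiSubtypeProd_symm_apply,
          j.2, dif_neg, not_false_iff]
      have hsum : ∀ (h : H) (b : {i : Fin n // ¬ i ∈ J} → Z),
          sumC h (e.symm (a, b)) = ∑ j : {i : Fin n // ¬ i ∈ J}, ℓ h (b j) := by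
        intro h b
        simp only [hsumC_def]
        rw [Finset.sum_subtype Jᶜ (fun i => Finset.mem_compl)
          (fun i => ℓ h ((e.symm (a,b)) i))]
        exact Finset.sum_congr rfl fun j _ => by rw [hsnd b j]
      set G : H → ({i : Fin n // ¬ i ∈ J} → Z) → ℝ≥0∞ := fun h b =>
        ENNReal.ofReal (Real.exp (lam * (K * β * μrisk h
          - ∑ j : {i : Fin n // ¬ i ∈ J}, ℓ h (b j)))) with hG_def
      have hFab : ∀ b, F (e.symm (a, b)) = ∫⁻ h, G h b ∂(P a) := by
        intro b
        simp only [hF_def]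
        have hp : prior (e.symm (a, b)) = P a := by
          simp only [hprior_def]
          exact congrArg P (hfst b)
        rw [hp]
        exact lintegral_congr fun h => by simp only [hG_def, hfE_def, hsum h b]
      have hGmeas : Measurable (Function.uncurry
          fun (b : {i : Fin n // ¬ i ∈ J} → Z) (h : H) => G h b) := by
        apply ENNReal.measurable_ofReal.comp
        apply Real.measurable_exp.comp
        apply Measurable.const_mul
        refine Measurable.sub ?_ ?_
        · exact (hμmeas.comp measurable_snd).const_mul _
        · exact Finset.measurable_sum Finset.univ fun j _ =>
            hℓmeas.comp (measurable_snd.prodMk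
              ((measurable_pi_apply j).comp measurable_fst))
      have hinner : ∀ h : H,
          ∫⁻ b, G h b ∂(Measure.pi fun _ : {i : Fin n // ¬ i ∈ J} => D) ≤ 1 := by
        intro h
        have hsplit : ∀ b, G h b = ENNReal.ofReal (Real.exp (lam * (K * β * μrisk h))) *
            ∏ j : {i : Fin n // ¬ i ∈ J},
              ENNReal.ofReal (Real.exp (-(2*(1-β)) * ℓ h (b j))) := by
          intro b
          have harg : lam * (K * β * μrisk h - ∑ j : {i : Fin n // ¬ i ∈ J}, ℓ h (b j))
              = lam * (K * β * μrisk h)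
                + ∑ j : {i : Fin n // ¬ i ∈ J}, (-(2*(1-β)) * ℓ h (b j)) := by
            rw [← Finset.mul_sum, hlam_def]
            ring
          simp only [hG_def]
          rw [harg, Real.exp_add, ENNReal.ofReal_mul (Real.exp_nonneg _), Real.exp_sum,
            ENNReal.ofReal_prod_of_nonneg (fun j _ => Real.exp_nonneg _)]
        have hprodmeas : Measurable fun b : {i : Fin n // ¬ i ∈ J} → Z =>
            ∏ j : {i : Fin n // ¬ i ∈ J},
              ENNReal.ofReal (Real.exp (-(2*(1-β)) * ℓ h (b j))) :=
          Finset.measurable_prod _ fun j _ => ENNReal.measurable_ofReal.comp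
            ((Real.measurable_exp.comp (((hℓmeas.comp
              measurable_prodMk_left).comp (measurable_pi_apply j)).const_mul _)))
        have hzmeas : ∀ j : {i : Fin n // ¬ i ∈ J}, Measurable fun z : Z =>
            ENNReal.ofReal (Real.exp (-(2*(1-β)) * ℓ h z)) := fun j =>
          ENNReal.measurable_ofReal.comp (Real.measurable_exp.comp
            ((hℓmeas.comp measurable_prodMk_left).const_mul _))
        have hcardnat : Fintype.card {i : Fin n // ¬ i ∈ J} = n - m := by
          simp [Fintype.card_subtype_compl, hJ]
        have hcard : ((Fintype.card {i : Fin n // ¬ i ∈ J} : ℕ) : ℝ) = K := by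
          rw [hK_def, hcardnat, Nat.cast_sub hm.le]
        calc ∫⁻ b, G h b ∂(Measure.pi fun _ : {i : Fin n // ¬ i ∈ J} => D)
            = ENNReal.ofReal (Real.exp (lam * (K * β * μrisk h))) *
              ∫⁻ b, ∏ j : {i : Fin n // ¬ i ∈ J},
                ENNReal.ofReal (Real.exp (-(2*(1-β)) * ℓ h (b j)))
                ∂(Measure.pi fun _ : {i : Fin n // ¬ i ∈ J} => D) := by
              rw [lintegral_congr hsplit, lintegral_const_mul _ hprodmeas]
          _ = ENNReal.ofReal (Real.exp (lam * (K * β * μrisk h))) *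
              ∏ j : {i : Fin n // ¬ i ∈ J},
                ∫⁻ z, ENNReal.ofReal (Real.exp (-(2*(1-β)) * ℓ h z)) ∂D := by
              rw [pb_lintegral_pi_prod D _ hzmeas]
          _ ≤ ENNReal.ofReal (Real.exp (lam * (K * β * μrisk h))) *
              ∏ _j : {i : Fin n // ¬ i ∈ J},
                ENNReal.ofReal (Real.exp (-(2*(1-β)*β) * μrisk h)) := by
              refine mul_le_mul_right (Finset.prod_le_prod' fun j _ => ?_) _
              exact pb_sample_bound D (ℓ h) (hℓmeas.comp measurable_prodMk_left)
                (hℓ h) hβ0 hβ1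
          _ = ENNReal.ofReal (Real.exp (lam * (K * β * μrisk h)) *
                Real.exp (-(2*(1-β)*β) * μrisk h) ^
                  (Fintype.card {i : Fin n // ¬ i ∈ J})) := by
              rw [Finset.prod_const, Finset.card_univ,
                ← ENNReal.ofReal_pow (Real.exp_nonneg _),
                ← ENNReal.ofReal_mul (Real.exp_nonneg _)]
          _ = 1 := by
              rw [← Real.exp_nat_mul, ← Real.exp_add]
              have h0 : lam * (K * β * μrisk h)
                  + ((Fintype.card {i : Fin n // ¬ i ∈ J} : ℕ) : ℝ) *
                    (-(2*(1-β)*β) * μrisk h) = 0 := by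
                rw [hcard, hlam_def]
                ring
              rw [h0, Real.exp_zero, ENNReal.ofReal_one]
      calc ∫⁻ b, F (e.symm (a, b)) ∂(Measure.pi fun _ : {i : Fin n // ¬ i ∈ J} => D)
          = ∫⁻ b, ∫⁻ h, G h b ∂(P a)
              ∂(Measure.pi fun _ : {i : Fin n // ¬ i ∈ J} => D) :=
            lintegral_congr hFab
        _ = ∫⁻ h, ∫⁻ b, G h b ∂(Measure.pi fun _ : {i : Fin n // ¬ i ∈ J} => D)
              ∂(P a) := lintegral_lintegral_swap hGmeas.aemeasurable
        _ ≤ ∫⁻ _, 1 ∂(P a) := lintegral_mono fun h => hinner h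
        _ = 1 := by simp
    refine le_trans (lintegral_mono fun a => key a) ?_
    simp
  -- Step 2: Markov's inequality
  set A : Set (Fin n → Z) := {S | F S ≤ ENNReal.ofReal (1/δ)} with hA_def
  have hAmeas : MeasurableSet A := measurableSet_le hFmeas measurable_const
  have hmarkov : (Measure.pi fun _ : Fin n => D) Aᶜ ≤ ENNReal.ofReal δ := by
    have hc : Aᶜ ⊆ {S | ENNReal.ofReal (1/δ) ≤ F S} := by
      intro S hS
      simp only [hA_def, Set.mem_compl_iff, Set.mem_setOf_eq, not_le] at hS
      exact hS.le
    refine (measure_mono hc).trans ?_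
    have hmk := mul_meas_ge_le_lintegral₀ (μ := Measure.pi fun _ : Fin n => D)
      hFmeas.aemeasurable (ENNReal.ofReal (1/δ))
    have h2 : ENNReal.ofReal (1/δ) *
        (Measure.pi fun _ : Fin n => D) {S | ENNReal.ofReal (1/δ) ≤ F S} ≤ 1 := hmk.trans hF1
    have hinv : ENNReal.ofReal (1/δ) = (ENNReal.ofReal δ)⁻¹ := by
      rw [one_div, ← ENNReal.ofReal_inv_of_pos hδ0]
    calc (Measure.pi fun _ : Fin n => D) {S | ENNReal.ofReal (1/δ) ≤ F S}
        = ENNReal.ofReal δ * ((ENNReal.ofReal δ)⁻¹ *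
            (Measure.pi fun _ : Fin n => D) {S | ENNReal.ofReal (1/δ) ≤ F S}) := by
          rw [← mul_assoc, ENNReal.mul_inv_cancel (by simp [hδ0]) ENNReal.ofReal_ne_top, one_mul]
      _ ≤ ENNReal.ofReal δ * 1 := by
          refine mul_le_mul_right ?_ _
          rw [← hinv]
          exact h2
      _ = ENNReal.ofReal δ := mul_one _
  have hAbound : ENNReal.ofReal (1 - δ) ≤ (Measure.pi fun _ : Fin n => D) A := by
    have hsum := prob_add_prob_compl (μ := Measure.pi fun _ : Fin n => D) hAmeas
    have h1 : (1:ℝ≥0∞) ≤ (Measure.pi fun _ : Fin n => D) A + ENNReal.ofReal δ :=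
      hsum.symm.le.trans (add_le_add_right hmarkov _)
    rw [ENNReal.ofReal_sub _ hδ0.le, ENNReal.ofReal_one]
    exact tsub_le_iff_right.2 h1
  -- Step 3: on the event A, the PAC-Bayes inequality holds for all Q
  refine hAbound.trans (measure_mono ?_)
  intro S hS
  simp only [hA_def, Set.mem_setOf_eq] at hS
  simp only [Set.mem_setOf_eq]
  intro Q hQprob
  set PS : Measure H := P (fun i => S i.1) with hPS_def
  haveI : IsProbabilityMeasure PS := hPprob _
  by_cases hklfin : Q ≪ PS ∧ Integrable (MeasureTheory.llr Q PS) Q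
  · -- finite KL case
    obtain ⟨hQP, hllrint⟩ := hklfin
    have hgmeas : Measurable (fun h => fE h S) := by
      simp only [hfE_def]
      refine Measurable.const_mul (Measurable.sub (hμmeas.const_mul _) ?_) _
      exact Finset.measurable_sum _ fun i _ =>
        hℓmeas.comp (measurable_id.prodMk measurable_const)
    have hIntg : Integrable (fun h => fE h S) Q := by
      refine (integrable_const (lam * K)).mono' hgmeas.aestronglyMeasurable ?_
      exact ae_of_all _ fun h => by rw [Real.norm_eq_abs]; exact hfE_bound h S
    have hIntsub : Integrable (fun h => fE h S - MeasureTheory.llr Q PS h) Q :=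
      hIntg.sub hllrint
    have hexp_ae : (fun h => Real.exp (fE h S - MeasureTheory.llr Q PS h))
        =ᵐ[Q] fun h => Real.exp (fE h S) * (PS.rnDeriv Q h).toReal := by
      filter_upwards [exp_neg_llr hQP] with h hh
      rw [sub_eq_add_neg, Real.exp_add, hh]
    have hrnInt : Integrable (fun h => (PS.rnDeriv Q h).toReal) Q :=
      Measure.integrable_toReal_rnDeriv
    have hexpmeas : Measurable (fun h => Real.exp (fE h S - MeasureTheory.llr Q PS h)) :=
      Real.measurable_exp.comp (hgmeas.sub (measurable_llr _ _))
    have hIntexp : Integrable (fun h => Real.exp (fE h S - MeasureTheory.llr Q PS h)) Q := by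
      refine Integrable.mono' (hrnInt.const_mul (Real.exp (lam * K)))
        hexpmeas.aestronglyMeasurable ?_
      filter_upwards [hexp_ae] with h hh
      rw [Real.norm_eq_abs, abs_of_nonneg (Real.exp_nonneg _), hh]
      refine mul_le_mul_of_nonneg_right ?_ ENNReal.toReal_nonneg
      exact Real.exp_le_exp.2 ((abs_le.1 (hfE_bound h S)).2)
    have hjensen : Real.exp (∫ h, (fE h S - MeasureTheory.llr Q PS h) ∂Q) ≤
        ∫ h, Real.exp (fE h S - MeasureTheory.llr Q PS h) ∂Q := by
      exact ConvexOn.map_integral_le convexOn_exp Real.continuous_exp.continuousOn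
        isClosed_univ (ae_of_all _ fun h => Set.mem_univ _) hIntsub hIntexp
    have hFS_ne_top : F S ≠ ⊤ := (lt_of_le_of_lt hS ENNReal.ofReal_lt_top).ne
    have hexpmeasENN : Measurable (fun h => ENNReal.ofReal (Real.exp (fE h S))) :=
      ENNReal.measurable_ofReal.comp (Real.measurable_exp.comp hgmeas)
    have hlint_le : ∫⁻ h, ENNReal.ofReal (Real.exp (fE h S - MeasureTheory.llr Q PS h)) ∂Q
        ≤ F S := by
      calc ∫⁻ h, ENNReal.ofReal (Real.exp (fE h S - MeasureTheory.llr Q PS h)) ∂Q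
          = ∫⁻ h, ENNReal.ofReal (Real.exp (fE h S)) *
              ENNReal.ofReal ((PS.rnDeriv Q h).toReal) ∂Q := by
            refine lintegral_congr_ae ?_
            filter_upwards [hexp_ae] with h hh
            rw [hh, ENNReal.ofReal_mul (Real.exp_nonneg _)]
        _ ≤ ∫⁻ h, ENNReal.ofReal (Real.exp (fE h S)) * PS.rnDeriv Q h ∂Q :=
            lintegral_mono fun h => mul_le_mul_right ENNReal.ofReal_toReal_le _
        _ = ∫⁻ h, ENNReal.ofReal (Real.exp (fE h S))
              ∂(Q.withDensity (PS.rnDeriv Q)) := by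
            rw [lintegral_withDensity_eq_lintegral_mul Q
              (Measure.measurable_rnDeriv PS Q) hexpmeasENN]
            exact lintegral_congr fun h => (mul_comm _ _)
        _ ≤ ∫⁻ h, ENNReal.ofReal (Real.exp (fE h S)) ∂PS :=
            lintegral_mono' (Measure.withDensity_rnDeriv_le PS Q) le_rfl
        _ = F S := by
            simp only [hF_def, hprior_def, hPS_def]
    have hlintle : ∫ h, Real.exp (fE h S - MeasureTheory.llr Q PS h) ∂Q ≤ (F S).toReal := by
      rw [integral_eq_lintegral_of_nonneg_ae (ae_of_all _ fun h => Real.exp_nonneg _)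
        hexpmeas.aestronglyMeasurable]
      exact ENNReal.toReal_mono hFS_ne_top hlint_le
    have h1δ : (F S).toReal ≤ 1/δ := by
      have := ENNReal.toReal_mono ENNReal.ofReal_ne_top hS
      rwa [ENNReal.toReal_ofReal (by positivity)] at this
    have hmain0 : ∫ h, (fE h S - MeasureTheory.llr Q PS h) ∂Q ≤ Real.log (1/δ) := by
      rw [Real.le_log_iff_exp_le (by positivity)]
      exact hjensen.trans (hlintle.trans h1δ)
    set KL : ℝ := ∫ h, MeasureTheory.llr Q PS h ∂Q with hKL_def
    have hmain : ∫ h, fE h S ∂Q ≤ KL + Real.log (1/δ) := by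
      have := integral_sub hIntg hllrint
      rw [this] at hmain0
      linarith
    -- compute the integral of fE
    have hIntμQ : Integrable μrisk Q := by
      refine (integrable_const (1:ℝ)).mono' hμmeas.aestronglyMeasurable ?_
      exact ae_of_all _ fun h => by
        rw [Real.norm_eq_abs, abs_of_nonneg (hμ01 h).1]; exact (hμ01 h).2
    have hsumSmeas : Measurable (fun h => sumC h S) := by
      simp only [hsumC_def]
      exact Finset.measurable_sum _ fun i _ =>
        hℓmeas.comp (measurable_id.prodMk measurable_const)
    have hIntsumQ : Integrable (fun h => sumC h S) Q := by
      refine (integrable_const K).mono' hsumSmeas.aestronglyMeasurable ?_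
      exact ae_of_all _ fun h => by
        rw [Real.norm_eq_abs, abs_of_nonneg (hsumC_bounds h S).1]
        exact (hsumC_bounds h S).2
    have hfEint : ∫ h, fE h S ∂Q
        = lam * (K * β * (∫ h, μrisk h ∂Q) - ∫ h, sumC h S ∂Q) := by
      simp only [hfE_def]
      rw [integral_const_mul, integral_sub (hIntμQ.const_mul _) hIntsumQ,
        integral_const_mul]
    have hL : gibbsRisk ℓ D Q = ∫ h, μrisk h ∂Q := rfl
    have hE : gibbsEmpRiskCompl ℓ J S Q = (∫ h, sumC h S ∂Q) / K := by
      rw [gibbsEmpRiskCompl, integral_div, hJ, ← hK_def]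
    have hfinal : gibbsRisk ℓ D Q ≤ (1/β) * gibbsEmpRiskCompl ℓ J S Q +
        (KL + Real.log (1/δ)) / (2 * β * (1 - β) * K) := by
      have hd0 : 0 < 2 * β * (1 - β) * K := mul_pos (mul_pos (mul_pos (by norm_num : (0:ℝ) < 2) hβ0) (by linarith : (0:ℝ) < 1 - β)) hK0
      have hSum : ∫ h, sumC h S ∂Q = K * gibbsEmpRiskCompl ℓ J S Q := by
        rw [hE]; field_simp
      have hmain2 : lam * (K * β * gibbsRisk ℓ D Q - K * gibbsEmpRiskCompl ℓ J S Q)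
          ≤ KL + Real.log (1/δ) := by
        rw [hL, ← hSum, ← hfEint]
        exact hmain
      have h2 : gibbsRisk ℓ D Q - (1/β) * gibbsEmpRiskCompl ℓ J S Q ≤
          (KL + Real.log (1/δ)) / (2 * β * (1 - β) * K) := by
        rw [le_div_iff₀ hd0]
        have heq2 : (gibbsRisk ℓ D Q - (1/β) * gibbsEmpRiskCompl ℓ J S Q) *
            (2 * β * (1 - β) * K)
            = lam * (K * β * gibbsRisk ℓ D Q - K * gibbsEmpRiskCompl ℓ J S Q) := by
          rw [hlam_def]
          field_simp
        rw [heq2]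
        exact hmain2
      linarith
    have hkl : klDivE Q PS = ENNReal.ofReal KL := by
      rw [klDivE, if_pos ⟨hQP, hllrint⟩]
    calc ENNReal.ofReal (gibbsRisk ℓ D Q)
        ≤ ENNReal.ofReal ((1/β) * gibbsEmpRiskCompl ℓ J S Q +
            (KL + Real.log (1/δ)) / (2 * β * (1 - β) * K)) :=
          ENNReal.ofReal_le_ofReal hfinal
      _ ≤ ENNReal.ofReal ((1/β) * gibbsEmpRiskCompl ℓ J S Q) +
            ENNReal.ofReal ((KL + Real.log (1/δ)) / (2 * β * (1 - β) * K)) :=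
          ENNReal.ofReal_add_le
      _ = ENNReal.ofReal ((1/β) * gibbsEmpRiskCompl ℓ J S Q) +
            ENNReal.ofReal (KL + Real.log (1/δ)) /
              ENNReal.ofReal (2 * β * (1 - β) * K) := by
          rw [ENNReal.ofReal_div_of_pos (mul_pos (mul_pos (mul_pos (by norm_num : (0:ℝ) < 2) hβ0) (by linarith : (0:ℝ) < 1 - β)) hK0)]
      _ ≤ ENNReal.ofReal ((1/β) * gibbsEmpRiskCompl ℓ J S Q) +
            (klDivE Q PS + ENNReal.ofReal (Real.log (1/δ))) /
              ENNReal.ofReal (2 * β * (1 - β) * K) := by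
          refine add_le_add_right (ENNReal.div_le_div_right ?_ _) _
          rw [hkl]
          exact ENNReal.ofReal_add_le
  · -- infinite KL case
    have hkl : klDivE Q PS = ⊤ := by
      rw [klDivE, if_neg hklfin]
    rw [hkl, top_add, ENNReal.top_div_of_ne_top ENNReal.ofReal_ne_top]
    exact le_top
end

section
/- Let β, δ ∈ (0,1), n ∈ ℕ, D a probability distribution on Z. Fix a measurable probability kernel Q : Z^n → P(H) and let J ⊆ [n] be a (possibly random) subset of nonrandom cardinality m < n, independent of S ∼ D^n. Let P* = E_S[Q(S)] be the oracle prior and P*(S_J) = E[Q(S) | S_J, J] the data-dependent oracle prior (conditional mixture). Define the information rate gain R_gain = E[KL(Q(S)‖P*)]/n − E[KL(Q(S)‖P*(S_J))]/(n−m) and the excess bias B_ex = E[L̂_{S∖S_J}(Q(S)) − L̂_S(Q(S))]. Then E_{J,S}[Ψ_{β,δ}(Q(S), P*(S_J); S∖S_J)] ≤ E_S[Ψ_{β,δ}(Q(S), P*; S)] if and only if R_gain ≥ 2(1−β)·B_ex + (log(1/δ)/n)·(m/(n−m)). -/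
open MeasureTheory Set
open scoped ENNReal NNReal

-- The linear PAC-Bayes bound functional `Ψ_{β,δ}(Q, P; S∖S_J)` on the
-- subsequence of `S` with indices outside `J` (a sample of size `n − |J|`).
noncomputable def PsiCompl {H Z : Type*} [MeasurableSpace H]
    (ℓ : H → Z → ℝ) (β δ : ℝ) {n : ℕ} (J : Finset (Fin n))
    (Q P : Measure H) (S : Fin n → Z) : ℝ≥0∞ :=
  ENNReal.ofReal ((1 / β) * gibbsEmpRiskCompl ℓ J S Q) +
    (klDivE Q P + ENNReal.ofReal (Real.log (1 / δ))) /
      ENNReal.ofReal (2 * β * (1 - β) * (n - J.card : ℝ))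

-- Reassemble a full sample from its coordinates inside `J` and outside `J`.
noncomputable def mergeSample {Z : Type*} {n : ℕ} (J : Finset (Fin n))
    (x : {i : Fin n // i ∈ J} → Z) (y : {i : Fin n // i ∉ J} → Z) : Fin n → Z :=
  fun i => if h : i ∈ J then x ⟨i, h⟩ else y ⟨i, h⟩

-- The data-dependent oracle prior `P*(S_J) = E[Q(S) | S_J]` (the conditional
-- mixture of `Q(S)` given the coordinates of `S` in `J`).
noncomputable def condOraclePrior {Z H : Type*} [MeasurableSpace Z] [MeasurableSpace H]
    {n : ℕ} (J : Finset (Fin n)) (D : Measure Z)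
    (Q : (Fin n → Z) → Measure H) (x : {i : Fin n // i ∈ J} → Z) : Measure H :=
  (Measure.pi fun _ : {i : Fin n // i ∉ J} => D).bind fun y => Q (mergeSample J x y)

-- **When do data-dependent oracle priors beat the oracle prior?**
-- Let `J` be a random subset of `[n]` of nonrandom cardinality `m < n` (with law
-- `ν`), independent of `S ∼ D^n`.  Let `P* = E_S[Q(S)]` be the oracle prior and
-- `P*(S_J) = E[Q(S) | S_J, J]` the data-dependent oracle prior.  With the
-- information rate gain `Rgain = E[KL(Q(S)‖P*)]/n − E[KL(Q(S)‖P*(S_J))]/(n−m)`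
-- and the excess bias `Bex = E[L̂_{S∖S_J}(Q(S)) − L̂_S(Q(S))]`, one has
-- `E_{J,S}[Ψ_{β,δ}(Q(S), P*(S_J); S∖S_J)] ≤ E_S[Ψ_{β,δ}(Q(S), P*; S)]`
-- if and only if `Rgain ≥ 2(1−β)·Bex + (log(1/δ)/n)·(m/(n−m))`.
lemma psi_alg {β lg a b k0 k1 N M : ℝ} (hβ0 : 0 < β) (hβ1 : β < 1) (hM : 0 ≤ M)
    (hMN : M < N) :
    (1 / β) * b + (k1 + lg) / (2 * β * (1 - β) * (N - M)) ≤
        (1 / β) * a + (k0 + lg) / (2 * β * (1 - β) * N) ↔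
      k0 / N - k1 / (N - M) ≥ 2 * (1 - β) * (b - a) + (lg / N) * (M / (N - M)) := by
  have hN : 0 < N := hM.trans_lt hMN
  have hNM : 0 < N - M := by linarith
  have hb1 : 0 < 1 - β := by linarith
  have hβne : β ≠ 0 := ne_of_gt hβ0
  have hNne : N ≠ 0 := ne_of_gt hN
  have hNMne : N - M ≠ 0 := ne_of_gt hNM
  have hb1ne : (1 : ℝ) - β ≠ 0 := ne_of_gt hb1
  have hd : (0:ℝ) < 2 * β * (1 - β) * N * (N - M) := by positivity
  have hd2 : (0:ℝ) < N * (N - M) := by positivity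
  set P : ℝ := 2 * (1 - β) * N * (N - M) * (a - b) + (N - M) * k0 - N * k1 - M * lg with hP
  have h1 : (1 / β) * a + (k0 + lg) / (2 * β * (1 - β) * N) -
      ((1 / β) * b + (k1 + lg) / (2 * β * (1 - β) * (N - M))) =
      P / (2 * β * (1 - β) * N * (N - M)) := by
    field_simp
    ring
  have h2 : k0 / N - k1 / (N - M) - (2 * (1 - β) * (b - a) + (lg / N) * (M / (N - M))) =
      P / (N * (N - M)) := by
    field_simp
    ring
  constructor <;> intro h
  · have h3 : 0 ≤ P / (2 * β * (1 - β) * N * (N - M)) := by rw [← h1]; linarith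
    have hP0 : 0 ≤ P := by
      by_contra hc
      push_neg at hc
      have := div_neg_of_neg_of_pos hc hd
      linarith
    rw [ge_iff_le, ← sub_nonneg, h2]
    exact div_nonneg hP0 hd2.le
  · rw [ge_iff_le, ← sub_nonneg, h2] at h
    have hP0 : 0 ≤ P := by
      by_contra hc
      push_neg at hc
      have := div_neg_of_neg_of_pos hc hd2
      linarith
    rw [← sub_nonneg, h1]
    exact div_nonneg hP0 hd.le

lemma measurable_empInt {Z H : Type*} [MeasurableSpace Z] [MeasurableSpace H] {n : ℕ}
    (ℓ : H → Z → ℝ) (hℓmeas : Measurable (Function.uncurry ℓ))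
    (Q : (Fin n → Z) → Measure H) (hQmeas : Measurable Q)
    (hQprob : ∀ S, IsProbabilityMeasure (Q S)) (T : Finset (Fin n)) (c : ℝ) :
    Measurable fun S : Fin n → Z => ∫ h, (∑ i ∈ T, ℓ h (S i)) / c ∂(Q S) := by
  let κ : ProbabilityTheory.Kernel (Fin n → Z) H := ⟨Q, hQmeas⟩
  haveI : ProbabilityTheory.IsMarkovKernel κ := ⟨fun S => hQprob S⟩
  have hf : StronglyMeasurable fun p : (Fin n → Z) × H => (∑ i ∈ T, ℓ p.2 (p.1 i)) / c := by
    apply Measurable.stronglyMeasurable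
    apply Measurable.div_const
    apply Finset.measurable_sum
    intro i _
    exact hℓmeas.comp (measurable_snd.prodMk ((measurable_pi_apply i).comp measurable_fst))
  exact (hf.integral_kernel_prod_right' (κ := κ)).measurable

lemma empInt_integrable {Z H : Type*} [MeasurableSpace Z] [MeasurableSpace H] {n : ℕ}
    (ℓ : H → Z → ℝ) (hℓmeas : Measurable (Function.uncurry ℓ))
    (hℓ : ∀ h z, ℓ h z ∈ Icc (0 : ℝ) 1)
    (Qm : Measure H) [IsProbabilityMeasure Qm] (T : Finset (Fin n)) {c : ℝ} (hc : 0 < c)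
    (S : Fin n → Z) :
    Integrable (fun h => (∑ i ∈ T, ℓ h (S i)) / c) Qm := by
  have hmeas : Measurable fun h => (∑ i ∈ T, ℓ h (S i)) / c := by
    apply Measurable.div_const
    apply Finset.measurable_sum
    intro i _
    exact hℓmeas.comp (measurable_id.prodMk measurable_const)
  refine (integrable_const ((T.card : ℝ) / c)).mono' hmeas.aestronglyMeasurable ?_
  refine ae_of_all _ fun h => ?_
  rw [Real.norm_eq_abs, abs_of_nonneg (div_nonneg (Finset.sum_nonneg fun i _ => (hℓ _ _).1) hc.le)]
  gcongr
  calc ∑ i ∈ T, ℓ h (S i) ≤ ∑ i ∈ T, 1 := Finset.sum_le_sum fun i _ => (hℓ _ _).2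
  _ = (T.card : ℝ) := by simp

lemma empInt_mem_Icc {Z H : Type*} [MeasurableSpace Z] [MeasurableSpace H] {n : ℕ}
    (ℓ : H → Z → ℝ) (hℓmeas : Measurable (Function.uncurry ℓ))
    (hℓ : ∀ h z, ℓ h z ∈ Icc (0 : ℝ) 1)
    (Qm : Measure H) [IsProbabilityMeasure Qm] (T : Finset (Fin n)) {c : ℝ} (hc : 0 < c)
    (hcard : (T.card : ℝ) ≤ c) (S : Fin n → Z) :
    (∫ h, (∑ i ∈ T, ℓ h (S i)) / c ∂Qm) ∈ Icc (0 : ℝ) 1 := by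
  have h0 : ∀ h, 0 ≤ (∑ i ∈ T, ℓ h (S i)) / c := fun h =>
    div_nonneg (Finset.sum_nonneg fun i _ => (hℓ _ _).1) hc.le
  have h1 : ∀ h, (∑ i ∈ T, ℓ h (S i)) / c ≤ 1 := fun h => by
    rw [div_le_one hc]
    calc ∑ i ∈ T, ℓ h (S i) ≤ ∑ i ∈ T, 1 := Finset.sum_le_sum fun i _ => (hℓ _ _).2
    _ = (T.card : ℝ) := by simp
    _ ≤ c := hcard
  constructor
  · exact integral_nonneg h0
  · calc (∫ h, (∑ i ∈ T, ℓ h (S i)) / c ∂Qm) ≤ ∫ _, (1 : ℝ) ∂Qm :=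
      integral_mono (empInt_integrable ℓ hℓmeas hℓ Qm T hc S) (integrable_const 1) h1
    _ = 1 := by simp

theorem data_dependent_oracle_prior_iff
    {Z H : Type*} [MeasurableSpace Z] [MeasurableSpace H]
    (ℓ : H → Z → ℝ) (hℓmeas : Measurable (Function.uncurry ℓ))
    (hℓ : ∀ h z, ℓ h z ∈ Icc (0 : ℝ) 1)
    {β δ : ℝ} (hβ : β ∈ Ioo (0 : ℝ) 1) (hδ : δ ∈ Ioo (0 : ℝ) 1)
    {n m : ℕ} (hm : m < n)
    (D : Measure Z) [IsProbabilityMeasure D]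
    (Q : (Fin n → Z) → Measure H) (hQmeas : Measurable Q)
    (hQprob : ∀ S, IsProbabilityMeasure (Q S))
    (ν : PMF (Finset (Fin n))) (hν : ∀ J ∈ ν.support, J.card = m)
    -- the expected KL divergences are finite, so that the information rate
    -- gain is a well-defined real number
    (hfin₀ : ∫⁻ S, klDivE (Q S) ((Measure.pi fun _ : Fin n => D).bind Q)
        ∂(Measure.pi fun _ : Fin n => D) ≠ ⊤)
    (hfin₁ : ∑ J : Finset (Fin n), ν J *
        ∫⁻ S, klDivE (Q S) (condOraclePrior J D Q fun i => S i.1)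
          ∂(Measure.pi fun _ : Fin n => D) ≠ ⊤) :
    (∑ J : Finset (Fin n), ν J *
        ∫⁻ S, PsiCompl ℓ β δ J (Q S) (condOraclePrior J D Q fun i => S i.1) S
          ∂(Measure.pi fun _ : Fin n => D)) ≤
      (∫⁻ S, Psi ℓ β δ (Q S) ((Measure.pi fun _ : Fin n => D).bind Q) S
          ∂(Measure.pi fun _ : Fin n => D)) ↔
    (∫⁻ S, klDivE (Q S) ((Measure.pi fun _ : Fin n => D).bind Q)
          ∂(Measure.pi fun _ : Fin n => D)).toReal / n -
      (∑ J : Finset (Fin n), ν J *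
          ∫⁻ S, klDivE (Q S) (condOraclePrior J D Q fun i => S i.1)
            ∂(Measure.pi fun _ : Fin n => D)).toReal / (n - m : ℝ) ≥
    2 * (1 - β) *
        (∑ J : Finset (Fin n), (ν J).toReal *
          ∫ S, (gibbsEmpRiskCompl ℓ J S (Q S) - gibbsEmpRisk ℓ S (Q S))
            ∂(Measure.pi fun _ : Fin n => D)) +
      (Real.log (1 / δ) / n) * (m / (n - m : ℝ)) := by
  classical
  obtain ⟨hβ0, hβ1⟩ := hβ
  obtain ⟨hδ0, hδ1⟩ := hδ
  set μ : Measure (Fin n → Z) := Measure.pi fun _ : Fin n => D with hμdef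
  haveI : IsProbabilityMeasure μ := by rw [hμdef]; infer_instance
  have hn0 : 0 < n := lt_of_le_of_lt (Nat.zero_le m) hm
  have hnR : (0:ℝ) < n := by exact_mod_cast hn0
  have hmnR : (m:ℝ) < n := by exact_mod_cast hm
  have hnmR : (0:ℝ) < (n:ℝ) - m := by linarith
  have hb1 : (0:ℝ) < 1 - β := by linarith
  have hlg : 0 ≤ Real.log (1/δ) :=
    Real.log_nonneg (by rw [le_div_iff₀ hδ0]; linarith)
  have hc0pos : (0:ℝ) < 2*β*(1-β)*n := by positivity
  have hc1pos : (0:ℝ) < 2*β*(1-β)*((n:ℝ)-m) := by positivity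
  -- the per-J KL integrals with nonzero weight are finite
  have hK1term : ∀ J : Finset (Fin n), ν J ≠ 0 →
      (∫⁻ S, klDivE (Q S) (condOraclePrior J D Q fun i => S i.1) ∂μ) ≠ ⊤ := by
    intro J hJ hT
    have h := ENNReal.sum_lt_top.1 hfin₁.lt_top J (Finset.mem_univ J)
    rw [hT, ENNReal.mul_top hJ] at h
    exact lt_irrefl _ h
  -- measurability / bounds / integrability of empirical risks
  have hmeasemp : Measurable fun S => gibbsEmpRisk ℓ S (Q S) :=
    measurable_empInt ℓ hℓmeas Q hQmeas hQprob Finset.univ (n:ℝ)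
  have hmemp : ∀ S, gibbsEmpRisk ℓ S (Q S) ∈ Icc (0:ℝ) 1 := fun S =>
    empInt_mem_Icc ℓ hℓmeas hℓ (Q S) Finset.univ hnR (by simp) S
  have hintemp : Integrable (fun S => gibbsEmpRisk ℓ S (Q S)) μ :=
    (integrable_const (1:ℝ)).mono' hmeasemp.aestronglyMeasurable (ae_of_all _ fun S => by
      rw [Real.norm_eq_abs, abs_of_nonneg (hmemp S).1]; exact (hmemp S).2)
  have hA0 : 0 ≤ ∫ S, gibbsEmpRisk ℓ S (Q S) ∂μ := integral_nonneg fun S => (hmemp S).1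
  have hcardC : ∀ J : Finset (Fin n), ((Jᶜ : Finset (Fin n)).card : ℝ) = (n:ℝ) - J.card := by
    intro J
    have hle : J.card ≤ n := by simpa using Finset.card_le_univ J
    rw [Finset.card_compl, Fintype.card_fin, Nat.cast_sub hle]
  have hmempC : ∀ J : Finset (Fin n), J.card = m →
      ∀ S, gibbsEmpRiskCompl ℓ J S (Q S) ∈ Icc (0:ℝ) 1 := by
    intro J hc S
    have hcpos : (0:ℝ) < (n:ℝ) - J.card := by rw [hc]; exact hnmR
    exact empInt_mem_Icc ℓ hℓmeas hℓ (Q S) Jᶜ hcpos (le_of_eq (hcardC J)) S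
  have hintempC : ∀ J : Finset (Fin n), J.card = m →
      Integrable (fun S => gibbsEmpRiskCompl ℓ J S (Q S)) μ := by
    intro J hc
    have hmeasC := measurable_empInt ℓ hℓmeas Q hQmeas hQprob Jᶜ ((n:ℝ) - J.card)
    exact (integrable_const (1:ℝ)).mono' hmeasC.aestronglyMeasurable (ae_of_all _ fun S => by
      rw [Real.norm_eq_abs, abs_of_nonneg (hmempC J hc S).1]; exact (hmempC J hc S).2)
  have hB0 : ∀ J : Finset (Fin n), J.card = m →
      0 ≤ ∫ S, gibbsEmpRiskCompl ℓ J S (Q S) ∂μ := fun J hc =>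
    integral_nonneg fun S => (hmempC J hc S).1
  -- computing the Psi lintegral
  have hPsiEq : (∫⁻ S, Psi ℓ β δ (Q S) (μ.bind Q) S ∂μ) =
      ENNReal.ofReal ((1/β) * ∫ S, gibbsEmpRisk ℓ S (Q S) ∂μ) +
        ((∫⁻ S, klDivE (Q S) (μ.bind Q) ∂μ) + ENNReal.ofReal (Real.log (1/δ))) /
          ENNReal.ofReal (2 * β * (1 - β) * n) := by
    simp only [Psi]
    rw [lintegral_add_left ((hmeasemp.const_mul (1/β)).ennreal_ofReal)]
    congr 1
    · rw [← ofReal_integral_eq_lintegral_ofReal (hintemp.const_mul (1/β))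
        (ae_of_all _ fun S => mul_nonneg (by positivity) (hmemp S).1), integral_const_mul]
    · simp_rw [ENNReal.add_div]
      rw [lintegral_add_right _ measurable_const, lintegral_const, measure_univ, mul_one]
      congr 1
      simp_rw [ENNReal.div_eq_inv_mul]
      exact lintegral_const_mul' _ _
        (ENNReal.inv_ne_top.2 (ENNReal.ofReal_pos.2 hc0pos).ne')
  -- computing the PsiCompl lintegrals
  have hPsiCEq : ∀ J : Finset (Fin n), ν J ≠ 0 →
      (∫⁻ S, PsiCompl ℓ β δ J (Q S) (condOraclePrior J D Q fun i => S i.1) S ∂μ) =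
      ENNReal.ofReal ((1/β) * ∫ S, gibbsEmpRiskCompl ℓ J S (Q S) ∂μ) +
        ((∫⁻ S, klDivE (Q S) (condOraclePrior J D Q fun i => S i.1) ∂μ) +
            ENNReal.ofReal (Real.log (1/δ))) /
          ENNReal.ofReal (2 * β * (1 - β) * ((n:ℝ) - m)) := by
    intro J hJ
    have hc : J.card = m := hν J ((PMF.mem_support_iff ν J).2 hJ)
    have hmeasC : Measurable fun S => gibbsEmpRiskCompl ℓ J S (Q S) :=
      measurable_empInt ℓ hℓmeas Q hQmeas hQprob Jᶜ ((n:ℝ) - J.card)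
    simp only [PsiCompl, hc]
    rw [lintegral_add_left ((hmeasC.const_mul (1/β)).ennreal_ofReal)]
    congr 1
    · rw [← ofReal_integral_eq_lintegral_ofReal ((hintempC J hc).const_mul (1/β))
        (ae_of_all _ fun S => mul_nonneg (by positivity) (hmempC J hc S).1), integral_const_mul]
    · simp_rw [ENNReal.add_div]
      rw [lintegral_add_right _ measurable_const, lintegral_const, measure_univ, mul_one]
      congr 1
      simp_rw [ENNReal.div_eq_inv_mul]
      exact lintegral_const_mul' _ _
        (ENNReal.inv_ne_top.2 (ENNReal.ofReal_pos.2 hc1pos).ne')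
  have hsupp : ∀ J : Finset (Fin n), ν J ≠ 0 → J.card = m := fun J hJ =>
    hν J ((PMF.mem_support_iff ν J).2 hJ)
  have hLHSeq : (∑ J : Finset (Fin n), ν J *
        ∫⁻ S, PsiCompl ℓ β δ J (Q S) (condOraclePrior J D Q fun i => S i.1) S ∂μ)
      = ∑ J : Finset (Fin n), ν J * (ENNReal.ofReal ((1/β) * (∫ S, gibbsEmpRiskCompl ℓ J S (Q S) ∂μ)) + ((∫⁻ S, klDivE (Q S) (condOraclePrior J D Q fun i => S i.1) ∂μ) + ENNReal.ofReal (Real.log (1/δ))) / ENNReal.ofReal (2 * β * (1 - β) * ((n:ℝ) - m))) :=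
    Finset.sum_congr rfl fun J _ => by
      by_cases hJ : ν J = 0
      · simp [hJ]
      · rw [hPsiCEq J hJ]
  have hdiv0ne : ((∫⁻ S, klDivE (Q S) (μ.bind Q) ∂μ) + ENNReal.ofReal (Real.log (1/δ))) / ENNReal.ofReal (2 * β * (1 - β) * n) ≠ ⊤ :=
    (ENNReal.div_lt_top (ENNReal.add_ne_top.2 ⟨hfin₀, ENNReal.ofReal_ne_top⟩)
      (ENNReal.ofReal_pos.2 hc0pos).ne').ne
  have hRne : ENNReal.ofReal ((1/β) * (∫ S, gibbsEmpRisk ℓ S (Q S) ∂μ)) + ((∫⁻ S, klDivE (Q S) (μ.bind Q) ∂μ) + ENNReal.ofReal (Real.log (1/δ))) / ENNReal.ofReal (2 * β * (1 - β) * n) ≠ ⊤ :=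
    ENNReal.add_ne_top.2 ⟨ENNReal.ofReal_ne_top, hdiv0ne⟩
  have htermne : ∀ J ∈ (Finset.univ : Finset (Finset (Fin n))),
      ν J * (ENNReal.ofReal ((1/β) * (∫ S, gibbsEmpRiskCompl ℓ J S (Q S) ∂μ)) + ((∫⁻ S, klDivE (Q S) (condOraclePrior J D Q fun i => S i.1) ∂μ) + ENNReal.ofReal (Real.log (1/δ))) / ENNReal.ofReal (2 * β * (1 - β) * ((n:ℝ) - m))) ≠ ⊤ := by
    intro J _
    by_cases hJ : ν J = 0
    · simp [hJ]
    · exact ENNReal.mul_ne_top (ν.apply_ne_top J)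
        (ENNReal.add_ne_top.2 ⟨ENNReal.ofReal_ne_top,
          (ENNReal.div_lt_top (ENNReal.add_ne_top.2 ⟨hK1term J hJ, ENNReal.ofReal_ne_top⟩)
            (ENNReal.ofReal_pos.2 hc1pos).ne').ne⟩)
  have hLne : (∑ J : Finset (Fin n), ν J * (ENNReal.ofReal ((1/β) * (∫ S, gibbsEmpRiskCompl ℓ J S (Q S) ∂μ)) + ((∫⁻ S, klDivE (Q S) (condOraclePrior J D Q fun i => S i.1) ∂μ) + ENNReal.ofReal (Real.log (1/δ))) / ENNReal.ofReal (2 * β * (1 - β) * ((n:ℝ) - m)))) ≠ ⊤ :=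
    (ENNReal.sum_lt_top.2 fun J hJ => (htermne J hJ).lt_top).ne
  rw [hPsiEq, hLHSeq, ← ENNReal.toReal_le_toReal hLne hRne]
  have hsum1 : ∑ J : Finset (Fin n), (ν J).toReal = 1 := by
    have h := ν.tsum_coe
    rw [tsum_fintype] at h
    rw [← ENNReal.toReal_sum (fun J _ => ν.apply_ne_top J), h, ENNReal.toReal_one]
  have hRto : (ENNReal.ofReal ((1/β) * (∫ S, gibbsEmpRisk ℓ S (Q S) ∂μ)) + ((∫⁻ S, klDivE (Q S) (μ.bind Q) ∂μ) + ENNReal.ofReal (Real.log (1/δ))) / ENNReal.ofReal (2 * β * (1 - β) * n)).toReal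
      = (1/β) * (∫ S, gibbsEmpRisk ℓ S (Q S) ∂μ) + ((∫⁻ S, klDivE (Q S) (μ.bind Q) ∂μ).toReal + Real.log (1/δ)) / (2 * β * (1 - β) * (n:ℝ)) := by
    rw [ENNReal.toReal_add ENNReal.ofReal_ne_top hdiv0ne,
      ENNReal.toReal_ofReal (mul_nonneg (by positivity) hA0), ENNReal.toReal_div,
      ENNReal.toReal_add hfin₀ ENNReal.ofReal_ne_top, ENNReal.toReal_ofReal hlg,
      ENNReal.toReal_ofReal hc0pos.le]
  have hLto : (∑ J : Finset (Fin n), ν J * (ENNReal.ofReal ((1/β) * (∫ S, gibbsEmpRiskCompl ℓ J S (Q S) ∂μ)) + ((∫⁻ S, klDivE (Q S) (condOraclePrior J D Q fun i => S i.1) ∂μ) + ENNReal.ofReal (Real.log (1/δ))) / ENNReal.ofReal (2 * β * (1 - β) * ((n:ℝ) - m)))).toReal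
      = ∑ J : Finset (Fin n), (ν J).toReal *
          ((1/β) * (∫ S, gibbsEmpRiskCompl ℓ J S (Q S) ∂μ) + ((∫⁻ S, klDivE (Q S) (condOraclePrior J D Q fun i => S i.1) ∂μ).toReal + Real.log (1/δ)) / (2 * β * (1 - β) * ((n:ℝ) - m))) := by
    rw [ENNReal.toReal_sum htermne]
    refine Finset.sum_congr rfl fun J _ => ?_
    by_cases hJ : ν J = 0
    · simp [hJ]
    · rw [ENNReal.toReal_mul]
      congr 1
      rw [ENNReal.toReal_add ENNReal.ofReal_ne_top
          ((ENNReal.div_lt_top (ENNReal.add_ne_top.2 ⟨hK1term J hJ, ENNReal.ofReal_ne_top⟩)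
            (ENNReal.ofReal_pos.2 hc1pos).ne').ne),
        ENNReal.toReal_ofReal (mul_nonneg (by positivity) (hB0 J (hsupp J hJ))),
        ENNReal.toReal_div, ENNReal.toReal_add (hK1term J hJ) ENNReal.ofReal_ne_top,
        ENNReal.toReal_ofReal hlg, ENNReal.toReal_ofReal hc1pos.le]
  rw [hRto, hLto]
  have hk1 : (∑ J : Finset (Fin n), ν J * (∫⁻ S, klDivE (Q S) (condOraclePrior J D Q fun i => S i.1) ∂μ)).toReal
      = ∑ J : Finset (Fin n), (ν J).toReal * (∫⁻ S, klDivE (Q S) (condOraclePrior J D Q fun i => S i.1) ∂μ).toReal := by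
    rw [ENNReal.toReal_sum (fun J _ => (ENNReal.sum_lt_top.1 hfin₁.lt_top J (Finset.mem_univ J)).ne)]
    exact Finset.sum_congr rfl fun J _ => ENNReal.toReal_mul
  rw [hk1]
  have hdiff : (∑ J : Finset (Fin n), (ν J).toReal *
        ∫ S, (gibbsEmpRiskCompl ℓ J S (Q S) - gibbsEmpRisk ℓ S (Q S)) ∂μ)
      = (∑ J : Finset (Fin n), (ν J).toReal * (∫ S, gibbsEmpRiskCompl ℓ J S (Q S) ∂μ)) - (∫ S, gibbsEmpRisk ℓ S (Q S) ∂μ) := by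
    calc (∑ J : Finset (Fin n), (ν J).toReal *
        ∫ S, (gibbsEmpRiskCompl ℓ J S (Q S) - gibbsEmpRisk ℓ S (Q S)) ∂μ)
        = ∑ J : Finset (Fin n), ((ν J).toReal * (∫ S, gibbsEmpRiskCompl ℓ J S (Q S) ∂μ) - (ν J).toReal * (∫ S, gibbsEmpRisk ℓ S (Q S) ∂μ)) :=
          Finset.sum_congr rfl fun J _ => by
            by_cases hJ : ν J = 0
            · simp [hJ]
            · rw [integral_sub (hintempC J (hsupp J hJ)) hintemp, mul_sub]
      _ = (∑ J : Finset (Fin n), (ν J).toReal * (∫ S, gibbsEmpRiskCompl ℓ J S (Q S) ∂μ)) -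
          ∑ J : Finset (Fin n), (ν J).toReal * (∫ S, gibbsEmpRisk ℓ S (Q S) ∂μ) := Finset.sum_sub_distrib _ _
      _ = _ := by rw [← Finset.sum_mul, hsum1, one_mul]
  rw [hdiff]
  have hexpand : (∑ J : Finset (Fin n), (ν J).toReal *
        ((1/β) * (∫ S, gibbsEmpRiskCompl ℓ J S (Q S) ∂μ) + ((∫⁻ S, klDivE (Q S) (condOraclePrior J D Q fun i => S i.1) ∂μ).toReal + Real.log (1/δ)) / (2 * β * (1 - β) * ((n:ℝ) - m))))
      = (1/β) * (∑ J : Finset (Fin n), (ν J).toReal * (∫ S, gibbsEmpRiskCompl ℓ J S (Q S) ∂μ)) +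
        ((∑ J : Finset (Fin n), (ν J).toReal * (∫⁻ S, klDivE (Q S) (condOraclePrior J D Q fun i => S i.1) ∂μ).toReal) + Real.log (1/δ)) / (2 * β * (1 - β) * ((n:ℝ) - m)) := by
    calc (∑ J : Finset (Fin n), (ν J).toReal *
        ((1/β) * (∫ S, gibbsEmpRiskCompl ℓ J S (Q S) ∂μ) + ((∫⁻ S, klDivE (Q S) (condOraclePrior J D Q fun i => S i.1) ∂μ).toReal + Real.log (1/δ)) / (2 * β * (1 - β) * ((n:ℝ) - m))))
        = ∑ J : Finset (Fin n), ((1/β) * ((ν J).toReal * (∫ S, gibbsEmpRiskCompl ℓ J S (Q S) ∂μ)) +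
            ((ν J).toReal * (∫⁻ S, klDivE (Q S) (condOraclePrior J D Q fun i => S i.1) ∂μ).toReal + (ν J).toReal * Real.log (1/δ)) / (2 * β * (1 - β) * ((n:ℝ) - m))) :=
          Finset.sum_congr rfl fun J _ => by ring
      _ = _ := by
          rw [Finset.sum_add_distrib, ← Finset.mul_sum, ← Finset.sum_div,
            Finset.sum_add_distrib, ← Finset.sum_mul, hsum1, one_mul]
  rw [hexpand]
  exact psi_alg hβ0 hβ1 (Nat.cast_nonneg m) hmnR
end

section
/- Let X₁, …, X_D be i.i.d. standard normal random variables and X = Σ_{i=1}^D X_i² (a chi-squared random variable with D degrees of freedom). Then for every t > 0, Pr[X ≥ D + 2·√(D·t) + 2t] ≤ e^{−t}. -/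
open MeasureTheory ProbabilityTheory Set
open scoped ENNReal NNReal

lemma gaussian_sq_exp {l : ℝ} (hl : l < 1/2) :
    Integrable (fun x => Real.exp (l * x ^ 2)) (gaussianReal 0 1) ∧
    ∫ x, Real.exp (l * x ^ 2) ∂(gaussianReal 0 1) = (Real.sqrt (1 - 2*l))⁻¹ := by
  have hb : (0:ℝ) < 1/2 - l := by linarith
  have hmeas : Measurable fun x : ℝ => (gaussianPDFReal 0 1 x).toNNReal :=
    (measurable_gaussianPDFReal 0 1).real_toNNReal
  have hdens : gaussianReal 0 1
      = volume.withDensity (fun x => ((gaussianPDFReal 0 1 x).toNNReal : ℝ≥0∞)) := by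
    rw [gaussianReal_of_var_ne_zero 0 one_ne_zero]; rfl
  have hfun : ∀ x : ℝ, (gaussianPDFReal 0 1 x).toNNReal • Real.exp (l * x ^ 2)
      = (Real.sqrt (2 * Real.pi))⁻¹ * Real.exp (-(1/2 - l) * x ^ 2) := by
    intro x
    rw [NNReal.smul_def, smul_eq_mul, Real.coe_toNNReal _ (gaussianPDFReal_nonneg 0 1 x),
      gaussianPDFReal]
    simp only [NNReal.coe_one, mul_one, sub_zero]
    rw [mul_assoc, ← Real.exp_add]
    ring_nf
  constructor
  · rw [hdens, integrable_withDensity_iff_integrable_smul hmeas]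
    simp_rw [hfun]
    exact (integrable_exp_neg_mul_sq hb).const_mul _
  · rw [hdens, integral_withDensity_eq_integral_smul hmeas]
    simp_rw [hfun]
    rw [integral_const_mul, integral_gaussian]
    have hpi : (0:ℝ) < Real.pi := Real.pi_pos
    have h1 : Real.pi / (1/2 - l) = 2*Real.pi / (1-2*l) := by
      rw [div_eq_div_iff hb.ne' (by linarith : (0:ℝ) < 1-2*l).ne']; ring
    rw [h1, Real.sqrt_div (by positivity) (1-2*l)]
    have h2 : Real.sqrt (2*Real.pi) ≠ 0 := by positivity
    field_simp

lemma neg_log_le_aux {u : ℝ} (h0 : 0 < u) (h1 : u ≤ 1) :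
    -Real.log u ≤ (1 - u) + (1 - u)^2 / (2 * u) := by
  set s := (1 - u) + (1 - u)^2 / (2 * u) with hs_def
  have hs : 0 ≤ s := by
    have : (0:ℝ) ≤ 1 - u := by linarith
    positivity
  rw [← Real.log_inv, Real.log_le_iff_le_exp (by positivity)]
  have h3 := Real.sum_le_exp_of_nonneg hs 3
  have hsum : (∑ i ∈ Finset.range 3, s ^ i / (Nat.factorial i)) = 1 + s + s^2/2 := by
    norm_num [Finset.sum_range_succ, Nat.factorial]
  rw [hsum] at h3
  refine le_trans ?_ h3
  have key : u * (1 + s + s^2/2) = 1 + (1-u)^4 / (8*u) := by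
    rw [hs_def]; field_simp; ring
  rw [inv_le_iff_one_le_mul₀ h0]
  nlinarith [sq_nonneg ((1-u)^2), div_nonneg (pow_nonneg (by linarith : (0:ℝ) ≤ 1-u) 4)
    (by linarith : (0:ℝ) ≤ 8*u)]

lemma pi_map_eval (D : ℕ) (i : Fin D) :
    (Measure.pi fun _ : Fin D => gaussianReal 0 1).map (Function.eval i) = gaussianReal 0 1 := by
  refine Measure.ext fun s hs => ?_
  rw [Measure.map_apply (measurable_pi_apply i) hs, Set.eval_preimage, Measure.pi_pi]
  rw [Finset.prod_eq_single i]
  · simp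
  · intro j _ hj
    simp [Function.update_of_ne hj]
  · simp

lemma iIndep_sq (D : ℕ) :
    iIndepFun
      (fun i (x : Fin D → ℝ) => x i ^ 2)
      (Measure.pi fun _ : Fin D => gaussianReal 0 1) := by
  have h1 : iIndepFun
      (fun i (x : Fin D → ℝ) => x i)
      (Measure.pi fun _ : Fin D => gaussianReal 0 1) := by
    rw [iIndepFun_iff_measure_inter_preimage_eq_mul]
    intro s sets hsets
    classical
    have h2 : (⋂ i ∈ s, (fun x : Fin D → ℝ => x i) ⁻¹' sets i)
        = Set.pi Set.univ (fun i => if i ∈ s then sets i else Set.univ) := by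
      ext x
      simp only [Set.mem_iInter, Set.mem_preimage, Set.mem_pi, Set.mem_univ, true_implies]
      constructor
      · intro h j
        by_cases hj : j ∈ s <;> simp [hj, h]
      · intro h j hj
        have := h j
        simpa [hj] using this
    rw [h2, Measure.pi_pi]
    simp only [apply_ite (gaussianReal 0 1), measure_univ]
    rw [Finset.prod_ite_mem Finset.univ s, Finset.univ_inter]
    refine Finset.prod_congr rfl fun j hj => ?_
    have hma := Measure.map_apply (μ := Measure.pi fun _ : Fin D => gaussianReal 0 1)
      (measurable_pi_apply j) (hsets j hj)
    rw [← hma, show (fun f : Fin D → ℝ => f j) = Function.eval j from rfl, pi_map_eval D j]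
  exact h1.comp _ (fun i => measurable_id.pow_const 2)

theorem chi_squared_tail_bound (D : ℕ) (t : ℝ) (ht : 0 < t) :
    (Measure.pi fun _ : Fin D => gaussianReal 0 1)
        {x | (D : ℝ) + 2 * Real.sqrt (D * t) + 2 * t ≤ ∑ i, x i ^ 2} ≤
      ENNReal.ofReal (Real.exp (-t)) := by
  rcases Nat.eq_zero_or_pos D with hD | hD
  · subst hD
    have hempty : {x : Fin 0 → ℝ | (0:ℕ) + 2 * Real.sqrt ((0:ℕ) * t) + 2 * t ≤ ∑ i, x i ^ 2}
        = ∅ := by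
      ext x
      simp only [Set.mem_setOf_eq, Set.mem_empty_iff_false, iff_false, not_le]
      simp [Finset.univ_eq_empty]
      linarith
    rw [hempty]
    simp
  · set π : Measure (Fin D → ℝ) := Measure.pi fun _ : Fin D => gaussianReal 0 1 with hπ
    have : IsProbabilityMeasure π := by infer_instance
    set sd := Real.sqrt D with hsd_def
    set st := Real.sqrt t with hst_def
    have hsd : 0 < sd := Real.sqrt_pos.mpr (by exact_mod_cast hD)
    have hst : 0 < st := Real.sqrt_pos.mpr ht
    have hsd2 : sd ^ 2 = (D : ℝ) := Real.sq_sqrt (Nat.cast_nonneg D)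
    have hst2 : st ^ 2 = t := Real.sq_sqrt ht.le
    set l : ℝ := st / (sd + 2 * st) with hl_def
    have hden : 0 < sd + 2 * st := by linarith
    have hl0 : 0 < l := div_pos hst hden
    have hl : l < 1/2 := by
      rw [hl_def, div_lt_iff₀ hden]
      linarith
    have hu : 1 - 2 * l = sd / (sd + 2 * st) := by
      rw [hl_def]
      field_simp
      ring
    have hu0 : 0 < 1 - 2 * l := by rw [hu]; positivity
    set a : ℝ := (D : ℝ) + 2 * Real.sqrt (D * t) + 2 * t with ha_def
    set X : Fin D → (Fin D → ℝ) → ℝ := fun i x => x i ^ 2 with hX_def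
    have hmeasX : ∀ i, Measurable (X i) := fun i => (measurable_pi_apply i).pow_const 2
    have hind : iIndepFun X π :=
      iIndep_sq D
    have h_int_i : ∀ i, Integrable (fun ω => Real.exp (l * X i ω)) π := by
      intro i
      have h1 : Integrable (fun y : ℝ => Real.exp (l * y ^ 2)) (π.map (Function.eval i)) := by
        rw [hπ, pi_map_eval]
        exact (gaussian_sq_exp hl).1
      have h2 := (integrable_map_measure
        (((Real.continuous_exp.comp (continuous_const.mul (continuous_pow 2)))).aestronglyMeasurable)
        (measurable_pi_apply i).aemeasurable).mp h1
      exact h2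
    have h_int_sum : Integrable (fun ω => Real.exp (l * (∑ i, X i) ω)) π :=
      hind.integrable_exp_mul_sum hmeasX (fun i _ => h_int_i i)
    have hch := measure_ge_le_exp_mul_mgf (μ := π) (X := ∑ i, X i) (t := l) a hl0.le h_int_sum
    have hmgf : ∀ i, mgf (X i) π l = (Real.sqrt (1 - 2*l))⁻¹ := by
      intro i
      have h1 : mgf (X i) π l = ∫ y, Real.exp (l * y ^ 2) ∂(π.map (Function.eval i)) := by
        rw [integral_map (measurable_pi_apply i).aemeasurable
          (((Real.continuous_exp.comp (continuous_const.mul (continuous_pow 2)))).aestronglyMeasurable)]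
        rfl
      rw [h1, hπ, pi_map_eval]
      exact (gaussian_sq_exp hl).2
    rw [hind.mgf_sum hmeasX] at hch
    simp_rw [hmgf] at hch
    rw [Finset.prod_const, Finset.card_univ, Fintype.card_fin] at hch
    -- the key real inequality
    have hkey : Real.exp (-l * a) * ((Real.sqrt (1 - 2*l))⁻¹) ^ D ≤ Real.exp (-t) := by
      have hsqrt_pos : 0 < Real.sqrt (1 - 2*l) := Real.sqrt_pos.mpr hu0
      have hpow : ((Real.sqrt (1 - 2*l))⁻¹) ^ D
          = Real.exp ((D : ℝ) * Real.log ((Real.sqrt (1 - 2*l))⁻¹)) := by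
        rw [Real.exp_nat_mul, Real.exp_log (by positivity)]
      rw [hpow, ← Real.exp_add, Real.exp_le_exp]
      rw [Real.log_inv, Real.log_sqrt hu0.le]
      -- need : -l*a + D * (-(log u / 2)) ≤ -t  where u = 1-2l
      have hlog := neg_log_le_aux hu0 (by linarith : 1 - 2*l ≤ 1)
      have h1mu : 1 - (1 - 2*l) = 2*l := by ring
      rw [h1mu] at hlog
      have hDpos : (0:ℝ) ≤ (D:ℝ) := Nat.cast_nonneg D
      have step : -l * a + (D:ℝ) * -(Real.log (1 - 2*l) / 2)
          ≤ -l * a + (D:ℝ) * (l + l^2 / (1 - 2*l)) := by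
        have : -(Real.log (1 - 2*l) / 2) ≤ l + l^2 / (1 - 2*l) := by
          have h2 : (2*l) + (2*l)^2 / (2*(1-2*l)) = 2 * (l + l^2/(1-2*l)) := by
            field_simp
          linarith [hlog, h2 ▸ hlog]
        nlinarith [this, hDpos]
      refine step.trans ?_
      -- equality case
      have hsqDt : Real.sqrt ((D:ℝ) * t) = sd * st := by
        rw [hsd_def, hst_def, Real.sqrt_mul (Nat.cast_nonneg D)]
      have : -l * a + (D:ℝ) * (l + l^2 / (1 - 2*l)) = -t := by
        rw [ha_def, hsqDt, hu, hl_def, ← hsd2, ← hst2]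
        field_simp
        ring
      linarith [this]
    -- conclude in ℝ≥0∞
    have hset : {x : Fin D → ℝ | (D : ℝ) + 2 * Real.sqrt (D * t) + 2 * t ≤ ∑ i, x i ^ 2}
        = {ω | a ≤ (∑ i, X i) ω} := by
      ext x
      simp [ha_def, hX_def, Finset.sum_apply]
    rw [hset]
    rw [← ENNReal.ofReal_toReal (measure_ne_top π {ω | a ≤ (∑ i, X i) ω})]
    exact ENNReal.ofReal_le_ofReal (hch.trans hkey)
end

section
/- For all real numbers R ≥ 0 and C > 0, the infimum over β ∈ (0,1) of R/β + C/(2β(1−β)) equals R + C + √(2RC + C²). -/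
open Set

-- **Explicit optimization of the trade-off parameter in the linear PAC-Bayes
-- bound.** For `R ≥ 0` and `C > 0`,
-- `inf_{β ∈ (0,1)} (R/β + C/(2β(1−β))) = R + C + √(2RC + C²)`.
theorem inf_linear_pac_bayes_over_beta (R C : ℝ) (hR : 0 ≤ R) (hC : 0 < C) :
    sInf ((fun β => R / β + C / (2 * β * (1 - β))) '' Ioo (0 : ℝ) 1) =
      R + C + Real.sqrt (2 * R * C + C ^ 2) := by
  set a : ℝ := R + C / 2 with ha
  set b : ℝ := C / 2 with hb
  have hapos : 0 < a := by positivity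
  have hbpos : 0 < b := by positivity
  set s : ℝ := Real.sqrt a with hs
  set t : ℝ := Real.sqrt b with ht
  have hspos : 0 < s := Real.sqrt_pos.mpr hapos
  have htpos : 0 < t := Real.sqrt_pos.mpr hbpos
  have hs2 : s ^ 2 = a := Real.sq_sqrt hapos.le
  have ht2 : t ^ 2 = b := Real.sq_sqrt hbpos.le
  have hsqrt : Real.sqrt (2 * R * C + C ^ 2) = 2 * s * t := by
    have h1 : 2 * R * C + C ^ 2 = (2 * s * t) ^ 2 := by nlinarith
    rw [h1, Real.sqrt_sq (by positivity)]
  have hM : R + C + Real.sqrt (2 * R * C + C ^ 2) = (s + t) ^ 2 := by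
    rw [hsqrt]; nlinarith
  rw [hM]
  -- rewrite f as a/β + b/(1-β)
  have hst : 0 < s + t := by linarith
  have hlb : ∀ β ∈ Ioo (0 : ℝ) 1,
      (s + t) ^ 2 ≤ R / β + C / (2 * β * (1 - β)) := by
    rintro β ⟨hβ0, hβ1⟩
    have h1β : 0 < 1 - β := by linarith
    have hfeq : R / β + C / (2 * β * (1 - β)) = (a * (1 - β) + b * β) / (β * (1 - β)) := by
      field_simp
      ring
    rw [hfeq, le_div_iff₀ (by positivity)]
    nlinarith [sq_nonneg (s - β * (s + t))]
  apply le_antisymm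
  · apply csInf_le
    · exact ⟨(s + t) ^ 2, fun x ⟨β, hβ, hx⟩ => hx ▸ hlb β hβ⟩
    · refine ⟨s / (s + t), ⟨by positivity, ?_⟩, ?_⟩
      · rw [div_lt_one hst]; linarith
      · have h1β : 1 - s / (s + t) = t / (s + t) := by field_simp; ring
        simp only
        rw [h1β]
        field_simp
        have hReq : R = s ^ 2 - t ^ 2 := by rw [hs2, ht2, ha, hb]; ring
        have hCeq : C = 2 * t ^ 2 := by rw [ht2]; ring
        rw [hReq, hCeq]; ring
  · apply le_csInf
    · exact ⟨R / (1/2) + C / (2 * (1/2) * (1 - 1/2)), ⟨1/2, ⟨by norm_num, by norm_num⟩, rfl⟩⟩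
    · rintro x ⟨β, hβ, hx⟩
      exact hx ▸ hlb β hβ
end

section
/- For all p, q ∈ [0,1] and B ≥ 0: if kl(q‖p) ≤ B then p ≤ q + B + √(B·(B + 2q)). -/
open Set
open scoped ENNReal NNReal

-- Binary Kullback–Leibler divergence `kl(q‖p)`, valued in `ℝ≥0∞`:
-- `q·log(q/p) + (1−q)·log((1−q)/(1−p))` with the conventions `0·log 0 = 0` and
-- `kl(q‖p) = ∞` when `Bernoulli(q)` is not absolutely continuous w.r.t. `Bernoulli(p)`.
open Classical in
noncomputable def klBin (q p : ℝ) : ℝ≥0∞ :=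
  if (p = 0 → q = 0) ∧ (p = 1 → q = 1)
  then ENNReal.ofReal (q * Real.log (q / p) + (1 - q) * Real.log ((1 - q) / (1 - p)))
  else ⊤

-- **Inversion of the binary KL divergence (moment bound).** For
-- `p, q ∈ [0,1]` and `B ≥ 0`: if `kl(q‖p) ≤ B` then
-- `p ≤ q + B + √(B·(B + 2q))`.
lemma klBin_aux (q p : ℝ) (hq0 : 0 < q) (hqp : q ≤ p) (hp1 : p < 1) :
    (p - q)^2 / (2*p) ≤ q * Real.log (q/p) + (1-q) * Real.log ((1-q)/(1-p)) := by
  set g : ℝ → ℝ := fun x => q * Real.log q - q * Real.log x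
      + (1-q) * Real.log (1-q) - (1-q) * Real.log (1-x) - (x-q)^2/(2*x) with hg
  set g' : ℝ → ℝ := fun x => -(q * x⁻¹) + (1-q) * (1-x)⁻¹
      - ((2*(x-q)*1)*(2*x) - (x-q)^2*2)/(2*x)^2 with hg'
  have hderiv : ∀ x ∈ Icc q p, HasDerivAt g (g' x) x := by
    intro x hx
    have hx0 : 0 < x := lt_of_lt_of_le hq0 hx.1
    have hx1 : x < 1 := lt_of_le_of_lt hx.2 hp1
    have h1 : HasDerivAt (fun x : ℝ => q * Real.log x) (q * x⁻¹) x :=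
      (Real.hasDerivAt_log hx0.ne').const_mul q
    have h2 : HasDerivAt (fun x : ℝ => 1 - x) (-1) x := by
      simpa using (hasDerivAt_id x).const_sub 1
    have h3 : HasDerivAt (fun x : ℝ => (1-q) * Real.log (1-x))
        ((1-q) * ((1-x)⁻¹ * -1)) x :=
      (((Real.hasDerivAt_log (by linarith)).comp x h2)).const_mul (1-q)
    have h4 : HasDerivAt (fun x : ℝ => (x-q)^2) (2*(x-q)*1) x := by
      simpa using (((hasDerivAt_id x).sub_const q).fun_pow 2)
    have h5 : HasDerivAt (fun x : ℝ => 2*x) 2 x := by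
      simpa using (hasDerivAt_id x).const_mul 2
    have h6 : HasDerivAt (fun x : ℝ => (x-q)^2/(2*x))
        (((2*(x-q)*1)*(2*x) - (x-q)^2*2)/(2*x)^2) x :=
      h4.div h5 (by positivity)
    have := (((hasDerivAt_const x (q * Real.log q)).sub h1).add_const
        ((1-q) * Real.log (1-q))).sub h3 |>.sub h6
    refine this.congr_deriv ?_
    simp only [hg']
    ring
  have hmono : MonotoneOn g (Icc q p) := by
    apply monotoneOn_of_deriv_nonneg (convex_Icc q p)
    · exact fun x hx => (hderiv x hx).continuousAt.continuousWithinAt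
    · intro x hx
      rw [interior_Icc] at hx
      exact ((hderiv x (Ioo_subset_Icc_self hx)).differentiableAt).differentiableWithinAt
    · intro x hx
      rw [interior_Icc] at hx
      rw [(hderiv x (Ioo_subset_Icc_self hx)).deriv]
      have hx0 : 0 < x := lt_of_lt_of_le hq0 hx.1.le
      have hx1 : x < 1 := hx.2.trans hp1
      have hxq : q ≤ x := hx.1.le
      simp only [hg']
      have e1 : -(q * x⁻¹) + (1-q) * (1-x)⁻¹
          - ((2*(x-q)*1)*(2*x) - (x-q)^2*2)/(2*x)^2
          = (x - q) * (2*x - (x+q)*(1-x)) / (2 * x^2 * (1-x)) := by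
        have hne1 : x ≠ 0 := hx0.ne'
        have hne2 : (1:ℝ) - x ≠ 0 := sub_ne_zero.mpr hx1.ne'
        field_simp
        ring
      rw [e1]
      apply div_nonneg
      · nlinarith
      · nlinarith
  have hgq : g q = 0 := by simp [hg]
  have hgp := hmono (left_mem_Icc.mpr hqp) (right_mem_Icc.mpr hqp) hqp
  rw [hgq] at hgp
  have hp0 : 0 < p := lt_of_lt_of_le hq0 hqp
  have e2 : g p = q * Real.log (q/p) + (1-q) * Real.log ((1-q)/(1-p))
      - (p-q)^2/(2*p) := by
    simp only [hg]
    rw [Real.log_div hq0.ne' hp0.ne', Real.log_div (by linarith) (by linarith)]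
    ring
  linarith [e2 ▸ hgp]

theorem binary_kl_inverse_moment_bound
    (p q B : ℝ) (hp : p ∈ Icc (0 : ℝ) 1) (hq : q ∈ Icc (0 : ℝ) 1) (hB : 0 ≤ B)
    (h : klBin q p ≤ ENNReal.ofReal B) :
    p ≤ q + B + Real.sqrt (B * (B + 2 * q)) := by
  obtain ⟨hp0, hp1⟩ := hp
  obtain ⟨hq0, hq1⟩ := hq
  have hs0 : 0 ≤ Real.sqrt (B * (B + 2 * q)) := Real.sqrt_nonneg _
  by_cases hpq : p ≤ q
  · linarith
  push_neg at hpq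
  have hppos : 0 < p := lt_of_le_of_lt hq0 hpq
  by_cases hp1' : p = 1
  · exfalso
    have hq1' : q ≠ 1 := by intro hh; rw [hh] at hpq; linarith
    rw [klBin, if_neg (by tauto)] at h
    simp at h
  have hp1'' : p < 1 := lt_of_le_of_ne hp1 hp1'
  rw [klBin, if_pos ⟨fun hh => absurd hh hppos.ne', fun hh => absurd hh hp1'⟩] at h
  have hF : q * Real.log (q / p) + (1 - q) * Real.log ((1 - q) / (1 - p)) ≤ B :=
    (ENNReal.ofReal_le_ofReal_iff hB).mp h
  by_cases hq0' : q = 0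
  · subst hq0'
    have hlog : Real.log (1 - p) ≤ (1 - p) - 1 :=
      Real.log_le_sub_one_of_pos (by linarith)
    have : Real.log ((1 - 0) / (1 - p)) = - Real.log (1 - p) := by
      rw [show (1:ℝ) - 0 = 1 by ring, one_div, Real.log_inv]
    rw [this] at hF
    simp only [zero_mul, sub_zero, one_mul, zero_add] at hF
    have hpB : p ≤ B := by linarith
    linarith
  have hq0'' : 0 < q := lt_of_le_of_ne hq0 (Ne.symm hq0')
  have key := klBin_aux q p hq0'' hpq.le hp1''
  have h2 : (p - q)^2 ≤ 2 * p * B := by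
    have := key.trans hF
    rw [div_le_iff₀ (by positivity)] at this
    linarith
  have h3 : (p - (q + B))^2 ≤ B * (B + 2 * q) := by nlinarith
  have h4 : p - (q + B) ≤ Real.sqrt (B * (B + 2 * q)) := by
    calc p - (q + B) ≤ |p - (q + B)| := le_abs_self _
      _ = Real.sqrt ((p - (q + B))^2) := (Real.sqrt_sq_eq_abs _).symm
      _ ≤ Real.sqrt (B * (B + 2 * q)) := Real.sqrt_le_sqrt h3
  linarith
end

section
/- Let p ∈ ℕ, w, w_α ∈ ℝ^p, and σ_1², …, σ_p² > 0. Over all diagonal Gaussian priors P = ⊗_{i=1}^p N(w_{α,i}, s_i²) with s_i² > 0, the minimum of KL(⊗_{i=1}^p N(w_i, σ_i²) ‖ P) equals (1/2)·Σ_{i=1}^p log(1 + (w_i − w_{α,i})²/σ_i²), and it is attained at s_i² = σ_i² + (w_i − w_{α,i})² for each i. -/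
open MeasureTheory ProbabilityTheory Set
open scoped ENNReal NNReal
open Real Filter

-- The Kullback–Leibler divergence `KL(Q‖P) = ∫ log(dQ/dP) dQ` (real-valued;
-- in the statements below `Q ≪ P` and the integral is finite, so this is the
-- genuine KL divergence).
noncomputable def klReal {H : Type*} [MeasurableSpace H] (Q P : Measure H) : ℝ :=
  ∫ h, llr Q P h ∂Q

-- **Optimal diagonal Gaussian prior variance.** Let `Q = ⊗ᵢ N(wᵢ, σᵢ²)`.
-- Over all diagonal Gaussian priors `P = ⊗ᵢ N(w_{α,i}, sᵢ²)` (with `sᵢ² > 0`),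
-- the minimum of `KL(Q‖P)` equals `(1/2)·∑ᵢ log(1 + (wᵢ − w_{α,i})²/σᵢ²)`, and
-- it is attained at `sᵢ² = σᵢ² + (wᵢ − w_{α,i})²` (here `σ i` and `s i` denote
-- the variances `σᵢ²` and `sᵢ²`).
lemma tendsto_exp_nbsq_top {b : ℝ} (hb : 0 < b) :
    Tendsto (fun x : ℝ => rexp (-b * x ^ 2)) atTop (nhds 0) := by
  have h1 : Tendsto (fun x : ℝ => x ^ 2) atTop atTop := tendsto_pow_atTop two_ne_zero
  have h2 : Tendsto (fun x : ℝ => -b * x ^ 2) atTop atBot :=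
    h1.const_mul_atTop_of_neg (by linarith)
  exact Real.tendsto_exp_atBot.comp h2

lemma atbot_of_attop {f : ℝ → ℝ} (h : Tendsto (fun x => f (-x)) atTop (nhds 0)) :
    Tendsto f atBot (nhds 0) := by
  have := h.comp tendsto_neg_atBot_atTop
  refine this.congr fun x => by simp

lemma tendsto_exp_nbsq_bot {b : ℝ} (hb : 0 < b) :
    Tendsto (fun x : ℝ => rexp (-b * x ^ 2)) atBot (nhds 0) := by
  refine atbot_of_attop ?_
  simpa using tendsto_exp_nbsq_top hb

lemma tendsto_mul_exp_nbsq_top {b : ℝ} (hb : 0 < b) :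
    Tendsto (fun x : ℝ => x * rexp (-b * x ^ 2)) atTop (nhds 0) := by
  have h := rpow_mul_exp_neg_mul_sq_isLittleO_exp_neg hb 1
  have h2 : Tendsto (fun x : ℝ => rexp (-(1/2) * x)) atTop (nhds 0) :=
    Real.tendsto_exp_atBot.comp (tendsto_id.const_mul_atTop_of_neg (by norm_num))
  have h3 := h.trans_tendsto h2
  simpa [Real.rpow_one] using h3

lemma tendsto_mul_exp_nbsq_bot {b : ℝ} (hb : 0 < b) :
    Tendsto (fun x : ℝ => x * rexp (-b * x ^ 2)) atBot (nhds 0) := by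
  refine atbot_of_attop ?_
  have := (tendsto_mul_exp_nbsq_top hb).neg
  simp only [neg_zero] at this
  refine this.congr fun x => by ring_nf

lemma integrable_sq_mul_exp_neg_mul_sq {b : ℝ} (hb : 0 < b) :
    Integrable fun x : ℝ => x ^ 2 * rexp (-b * x ^ 2) := by
  have h := integrable_rpow_mul_exp_neg_mul_sq hb (by norm_num : (-1:ℝ) < 2)
  have h2 : ∀ x : ℝ, x ^ (2:ℝ) = x ^ (2:ℕ) := fun x => by
    rw [show (2:ℝ) = ((2:ℕ):ℝ) by norm_num, Real.rpow_natCast]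
  simpa [h2] using h

lemma integral_mul_exp_neg_mul_sq {b : ℝ} (hb : 0 < b) :
    ∫ x : ℝ, x * rexp (-b * x ^ 2) = 0 := by
  have hd : ∀ x : ℝ, HasDerivAt (fun x : ℝ => -(2*b)⁻¹ * rexp (-b * x ^ 2))
      (x * rexp (-b * x ^ 2)) x := by
    intro x
    have h1 : HasDerivAt (fun x : ℝ => -b * x ^ 2) (-b * (2 * x)) x := by
      simpa using ((hasDerivAt_pow 2 x).const_mul (-b))
    have h2 := (h1.exp).const_mul (-(2*b)⁻¹)
    refine h2.congr_deriv ?_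
    have hb0 : (2*b)⁻¹ * (2*b) = 1 := inv_mul_cancel₀ (by positivity)
    linear_combination (x * rexp (-b * x ^ 2)) * hb0
  have := integral_of_hasDerivAt_of_tendsto hd (integrable_mul_exp_neg_mul_sq hb)
    (by simpa using ((tendsto_exp_nbsq_bot hb).const_mul (-(2*b)⁻¹)))
    (by simpa using ((tendsto_exp_nbsq_top hb).const_mul (-(2*b)⁻¹)))
  simpa using this

lemma integral_sq_mul_exp_neg_mul_sq {b : ℝ} (hb : 0 < b) :
    ∫ x : ℝ, x ^ 2 * rexp (-b * x ^ 2) = √(π / b) / (2 * b) := by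
  have hd : ∀ x : ℝ, HasDerivAt (fun x : ℝ => x * rexp (-b * x ^ 2))
      (rexp (-b * x ^ 2) - 2 * b * (x ^ 2 * rexp (-b * x ^ 2))) x := by
    intro x
    have h1 : HasDerivAt (fun x : ℝ => -b * x ^ 2) (-b * (2 * x)) x := by
      simpa using ((hasDerivAt_pow 2 x).const_mul (-b))
    have h2 := (hasDerivAt_id x).mul h1.exp
    simp only [id_eq, one_mul] at h2
    refine h2.congr_deriv ?_
    ring
  have hint : Integrable fun x : ℝ =>
      rexp (-b * x ^ 2) - 2 * b * (x ^ 2 * rexp (-b * x ^ 2)) :=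
    (integrable_exp_neg_mul_sq hb).sub ((integrable_sq_mul_exp_neg_mul_sq hb).const_mul _)
  have h0 := integral_of_hasDerivAt_of_tendsto hd hint
    (tendsto_mul_exp_nbsq_bot hb) (tendsto_mul_exp_nbsq_top hb)
  rw [sub_zero, integral_sub (integrable_exp_neg_mul_sq hb)
    ((integrable_sq_mul_exp_neg_mul_sq hb).const_mul _), MeasureTheory.integral_const_mul,
    integral_gaussian] at h0
  have hb' : (2:ℝ) * b ≠ 0 := by positivity
  field_simp at h0 ⊢
  linarith


variable {v : ℝ≥0}

lemma gaussianPDFReal_eq' (m : ℝ) (y : ℝ) :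
    gaussianPDFReal m v y
      = (√(2 * π * (v:ℝ)))⁻¹ * rexp (-(2 * (v:ℝ))⁻¹ * (y - m) ^ 2) := by
  rw [gaussianPDFReal]
  congr 1
  rw [neg_div, div_eq_inv_mul, neg_mul]

lemma shifted_expand (hv : v ≠ 0) (m c : ℝ) :
    (fun x : ℝ => ((x + m) - c) ^ 2 * gaussianPDFReal m v (x + m))
      = fun x : ℝ =>
        (√(2 * π * (v:ℝ)))⁻¹ * (x ^ 2 * rexp (-(2 * (v:ℝ))⁻¹ * x ^ 2))
        + ((2 * (m - c) * (√(2 * π * (v:ℝ)))⁻¹) * (x * rexp (-(2 * (v:ℝ))⁻¹ * x ^ 2))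
        + ((m - c) ^ 2 * (√(2 * π * (v:ℝ)))⁻¹) * rexp (-(2 * (v:ℝ))⁻¹ * x ^ 2)) := by
  funext x
  rw [gaussianPDFReal_eq']
  have : x + m - m = x := by ring
  rw [this]
  ring

lemma hb_pos (hv : v ≠ 0) : 0 < (2 * (v:ℝ))⁻¹ := by
  have hv' : 0 < (v:ℝ) := by
    exact_mod_cast (pos_iff_ne_zero (a := v)).mpr hv
  positivity

lemma integrable_shifted (hv : v ≠ 0) (m c : ℝ) :
    Integrable (fun x : ℝ => ((x + m) - c) ^ 2 * gaussianPDFReal m v (x + m)) := by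
  rw [shifted_expand hv]
  have hb := hb_pos hv
  exact (((integrable_sq_mul_exp_neg_mul_sq hb).const_mul _).add
    (((integrable_mul_exp_neg_mul_sq hb).const_mul _).add
      ((integrable_exp_neg_mul_sq hb).const_mul _)))

lemma integrable_sq_sub_mul_gaussianPDFReal (hv : v ≠ 0) (m c : ℝ) :
    Integrable (fun y : ℝ => (y - c) ^ 2 * gaussianPDFReal m v y) := by
  have h := (integrable_shifted hv m c).comp_sub_right m
  convert h using 2 with y
  simp

lemma sqrt_fact (hv : v ≠ 0) :
    (√(2 * π * (v:ℝ)))⁻¹ * √(π / (2 * (v:ℝ))⁻¹) = 1 := by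
  have hv' : 0 < (v:ℝ) := by
    exact_mod_cast (pos_iff_ne_zero (a := v)).mpr hv
  have h1 : π / (2 * (v:ℝ))⁻¹ = 2 * π * (v:ℝ) := by
    field_simp
  rw [h1, inv_mul_cancel₀ (ne_of_gt (Real.sqrt_pos.mpr (by positivity)))]

lemma integral_sq_sub_mul_gaussianPDFReal (hv : v ≠ 0) (m c : ℝ) :
    ∫ y : ℝ, (y - c) ^ 2 * gaussianPDFReal m v y = (v:ℝ) + (m - c) ^ 2 := by
  have hb := hb_pos hv
  set b := (2 * (v:ℝ))⁻¹ with hbdef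
  set C := (√(2 * π * (v:ℝ)))⁻¹ with hC
  have key : C * √(π / b) = 1 := sqrt_fact hv
  have h1 : ∫ y : ℝ, (y - c) ^ 2 * gaussianPDFReal m v y
      = ∫ x : ℝ, ((x + m) - c) ^ 2 * gaussianPDFReal m v (x + m) :=
    (integral_add_right_eq_self (fun y : ℝ => (y - c) ^ 2 * gaussianPDFReal m v y) m).symm
  rw [h1, shifted_expand hv m c]
  have hA : Integrable (fun x : ℝ => C * (x ^ 2 * rexp (-b * x ^ 2))) :=
    (integrable_sq_mul_exp_neg_mul_sq hb).const_mul _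
  have hB : Integrable (fun x : ℝ => (2 * (m - c) * C) * (x * rexp (-b * x ^ 2))) :=
    (integrable_mul_exp_neg_mul_sq hb).const_mul _
  have hD : Integrable (fun x : ℝ => ((m - c) ^ 2 * C) * rexp (-b * x ^ 2)) :=
    (integrable_exp_neg_mul_sq hb).const_mul _
  have hBD : Integrable (fun x : ℝ => (2 * (m - c) * C) * (x * rexp (-b * x ^ 2))
      + ((m - c) ^ 2 * C) * rexp (-b * x ^ 2)) := hB.add hD
  rw [MeasureTheory.integral_add hA hBD, MeasureTheory.integral_add hB hD,
    MeasureTheory.integral_const_mul, MeasureTheory.integral_const_mul,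
    MeasureTheory.integral_const_mul,
    integral_sq_mul_exp_neg_mul_sq hb, integral_mul_exp_neg_mul_sq hb, integral_gaussian]
  have h2b : (2 * b)⁻¹ = (v:ℝ) := by
    rw [hbdef]; field_simp
  calc C * (√(π / b) / (2 * b)) + (2 * (m - c) * C * 0 + (m - c) ^ 2 * C * √(π / b))
      = (C * √(π / b)) * (2 * b)⁻¹ + (m - c) ^ 2 * (C * √(π / b)) := by ring
    _ = (v:ℝ) + (m - c) ^ 2 := by rw [key, h2b]; ring

lemma integral_gaussianReal_eq (hv : v ≠ 0) (m : ℝ) (f : ℝ → ℝ) :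
    ∫ y, f y ∂(gaussianReal m v) = ∫ y, gaussianPDFReal m v y * f y := by
  rw [gaussianReal_of_var_ne_zero _ hv, gaussianPDF_def]
  have h : (fun x => ENNReal.ofReal (gaussianPDFReal m v x))
      = fun x => ((gaussianPDFReal m v x).toNNReal : ℝ≥0∞) := rfl
  rw [h, integral_withDensity_eq_integral_smul
    ((measurable_gaussianPDFReal m v).real_toNNReal) f]
  congr 1
  funext y
  simp [NNReal.smul_def, Real.coe_toNNReal _ (gaussianPDFReal_nonneg m v y)]

lemma integrable_gaussianReal_iff (hv : v ≠ 0) (m : ℝ) (f : ℝ → ℝ) :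
    Integrable f (gaussianReal m v)
      ↔ Integrable (fun y => gaussianPDFReal m v y * f y) volume := by
  rw [gaussianReal_of_var_ne_zero _ hv, gaussianPDF_def]
  have h : (fun x => ENNReal.ofReal (gaussianPDFReal m v x))
      = fun x => ((gaussianPDFReal m v x).toNNReal : ℝ≥0∞) := rfl
  rw [h, integrable_withDensity_iff_integrable_smul
    ((measurable_gaussianPDFReal m v).real_toNNReal)]
  refine integrable_congr (Filter.Eventually.of_forall fun y => ?_)
  simp [NNReal.smul_def, Real.coe_toNNReal _ (gaussianPDFReal_nonneg m v y)]

lemma integrable_sq_sub_gaussianReal (hv : v ≠ 0) (m c : ℝ) :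
    Integrable (fun y : ℝ => (y - c) ^ 2) (gaussianReal m v) := by
  rw [integrable_gaussianReal_iff hv]
  refine (integrable_sq_sub_mul_gaussianPDFReal hv m c).congr
    (Filter.Eventually.of_forall fun y => by ring)

lemma integral_sq_sub_gaussianReal (hv : v ≠ 0) (m c : ℝ) :
    ∫ y, (y - c) ^ 2 ∂(gaussianReal m v) = (v:ℝ) + (m - c) ^ 2 := by
  rw [integral_gaussianReal_eq hv]
  rw [show (fun y : ℝ => gaussianPDFReal m v y * (y - c) ^ 2)
      = fun y : ℝ => (y - c) ^ 2 * gaussianPDFReal m v y from funext fun y => by ring]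
  exact integral_sq_sub_mul_gaussianPDFReal hv m c

lemma lintegral_pi_prod {n : ℕ} (μ : Fin n → Measure ℝ) [∀ i, SigmaFinite (μ i)]
    (f : Fin n → ℝ → ℝ≥0∞) (hf : ∀ i, Measurable (f i)) :
    ∫⁻ x, ∏ i, f i (x i) ∂Measure.pi μ = ∏ i, ∫⁻ y, f i y ∂μ i := by
  induction n with
  | zero => simp
  | succ n ih =>
    have hmp := (measurePreserving_piFinSuccAbove μ 0).symm
    have hmeas : Measurable fun x : Fin (n+1) → ℝ => ∏ i, f i (x i) :=
      Finset.measurable_prod _ fun i _ => (hf i).comp (measurable_pi_apply i)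
    rw [← hmp.lintegral_comp_emb (MeasurableEquiv.measurableEmbedding _)]
    simp_rw [MeasurableEquiv.piFinSuccAbove_symm_apply, Fin.insertNthEquiv,
      Fin.prod_univ_succ, Fin.insertNth_zero]
    simp only [Fin.zero_succAbove, Function.comp_def, Fin.cons_zero, Fin.cons_succ,
      Equiv.coe_fn_mk, cast_eq]
    rw [lintegral_prod_mul (f := f 0)
      (g := fun y : Fin n → ℝ => ∏ i : Fin n, f i.succ (y i)) ((hf 0).aemeasurable)
      ((Finset.measurable_prod Finset.univ fun i _ =>
        (hf i.succ).comp (measurable_pi_apply i)).aemeasurable)]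
    rw [ih (fun i => μ i.succ) (fun i => f i.succ) (fun i => hf i.succ)]

lemma pi_gaussian_eq {n : ℕ} (m : Fin n → ℝ) (v : Fin n → ℝ≥0) (hv : ∀ i, v i ≠ 0) :
    Measure.pi (fun i => gaussianReal (m i) (v i))
      = (Measure.pi fun _ : Fin n => (volume : Measure ℝ)).withDensity
          (fun x => ∏ i, gaussianPDF (m i) (v i) (x i)) := by
  refine Measure.pi_eq fun s hs => ?_
  rw [withDensity_apply _ (MeasurableSet.univ_pi hs)]
  have h1 : ∫⁻ x in univ.pi s, ∏ i, gaussianPDF (m i) (v i) (x i)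
        ∂(Measure.pi fun _ : Fin n => (volume : Measure ℝ))
      = ∫⁻ x, ∏ i, ((s i).indicator (gaussianPDF (m i) (v i))) (x i)
        ∂(Measure.pi fun _ : Fin n => (volume : Measure ℝ)) := by
    rw [← lintegral_indicator (MeasurableSet.univ_pi hs) _]
    congr 1
    funext x
    by_cases hx : x ∈ univ.pi s
    · rw [indicator_of_mem hx]
      exact Finset.prod_congr rfl fun i _ =>
        (indicator_of_mem (hx i (Set.mem_univ i)) _).symm
    · rw [indicator_of_notMem hx]
      rw [Set.mem_univ_pi] at hx
      push_neg at hx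
      obtain ⟨i, hi⟩ := hx
      exact (Finset.prod_eq_zero (Finset.mem_univ i)
        (indicator_of_notMem hi _)).symm
  rw [h1, lintegral_pi_prod _ _ (fun i => (measurable_gaussianPDF _ _).indicator (hs i))]
  refine Finset.prod_congr rfl fun i _ => ?_
  rw [lintegral_indicator (hs i) _, gaussianReal_apply _ (hv i) (s i)]

lemma pi_map_eval_s17 {n : ℕ} (μ : Fin n → Measure ℝ) [∀ i, IsProbabilityMeasure (μ i)]
    (i : Fin n) : (Measure.pi μ).map (Function.eval i) = μ i := by
  ext s hs
  rw [Measure.map_apply (measurable_pi_apply i) hs]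
  have h : Function.eval i ⁻¹' s
      = univ.pi (Function.update (fun _ : Fin n => (univ : Set ℝ)) i s) := by
    ext x
    simp only [Set.mem_preimage, Set.mem_univ_pi, Function.eval]
    constructor
    · intro hx j
      rcases eq_or_ne j i with rfl | hj
      · simpa using hx
      · simp [Function.update_of_ne hj]
    · intro hx
      simpa using hx i
  rw [h, Measure.pi_pi]
  rw [Finset.prod_eq_single i (fun j _ hj => by simp [Function.update_of_ne hj])
    (fun hmem => absurd (Finset.mem_univ i) hmem)]
  simp

lemma integral_eval {n : ℕ} (μ : Fin n → Measure ℝ) [∀ i, IsProbabilityMeasure (μ i)]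
    (i : Fin n) (g : ℝ → ℝ) (hg : AEStronglyMeasurable g (μ i)) :
    ∫ x, g (x i) ∂Measure.pi μ = ∫ y, g y ∂μ i := by
  rw [← pi_map_eval_s17 μ i] at hg ⊢
  exact (integral_map (measurable_pi_apply i).aemeasurable hg).symm

lemma integrable_eval {n : ℕ} (μ : Fin n → Measure ℝ) [∀ i, IsProbabilityMeasure (μ i)]
    (i : Fin n) (g : ℝ → ℝ) (hg : AEStronglyMeasurable g (μ i))
    (h : Integrable g (μ i)) : Integrable (fun x => g (x i)) (Measure.pi μ) := by
  rw [← pi_map_eval_s17 μ i] at hg h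
  exact (integrable_map_measure hg (measurable_pi_apply i).aemeasurable).mp h

lemma llr_pi_gaussian {n : ℕ} (mq mp : Fin n → ℝ) (vq vp : Fin n → ℝ≥0)
    (hq : ∀ i, vq i ≠ 0) (hp : ∀ i, vp i ≠ 0) :
    (fun x => llr (Measure.pi fun i => gaussianReal (mq i) (vq i))
        (Measure.pi fun i => gaussianReal (mp i) (vp i)) x)
      =ᵐ[Measure.pi fun i => gaussianReal (mq i) (vq i)]
      fun x => ∑ i, (Real.log (gaussianPDFReal (mq i) (vq i) (x i))
          - Real.log (gaussianPDFReal (mp i) (vp i) (x i))) := by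
  set ν : Measure (Fin n → ℝ) := Measure.pi fun _ => volume with hν
  set F : (Fin n → ℝ) → ℝ≥0∞ := fun x => ∏ i, gaussianPDF (mq i) (vq i) (x i) with hF
  set G : (Fin n → ℝ) → ℝ≥0∞ := fun x => ∏ i, gaussianPDF (mp i) (vp i) (x i) with hG
  have hFm : Measurable F :=
    Finset.measurable_prod _ fun i _ =>
      (measurable_gaussianPDF _ _).comp (measurable_pi_apply i)
  have hGm : Measurable G :=
    Finset.measurable_prod _ fun i _ =>
      (measurable_gaussianPDF _ _).comp (measurable_pi_apply i)
  have hQ : Measure.pi (fun i => gaussianReal (mq i) (vq i)) = ν.withDensity F :=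
    pi_gaussian_eq _ _ hq
  have hP : Measure.pi (fun i => gaussianReal (mp i) (vp i)) = ν.withDensity G :=
    pi_gaussian_eq _ _ hp
  have hGpos : ∀ x, 0 < G x := fun x =>
    CanonicallyOrderedAdd.prod_pos.mpr fun i _ => gaussianPDF_pos _ (hp i) _
  have hFpos : ∀ x, 0 < F x := fun x =>
    CanonicallyOrderedAdd.prod_pos.mpr fun i _ => gaussianPDF_pos _ (hq i) _
  have hGtop : ∀ x, G x ≠ ∞ := fun x =>
    (ENNReal.prod_lt_top fun i _ => ENNReal.ofReal_lt_top).ne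
  have hFtop : ∀ x, F x ≠ ∞ := fun x =>
    (ENNReal.prod_lt_top fun i _ => ENNReal.ofReal_lt_top).ne
  have hsf : SigmaFinite (ν.withDensity F) := by
    rw [← hQ]; infer_instance
  have hrn : (Measure.pi fun i => gaussianReal (mq i) (vq i)).rnDeriv
      (Measure.pi fun i => gaussianReal (mp i) (vp i)) =ᵐ[ν] fun x => (G x)⁻¹ * F x := by
    rw [hQ, hP]
    have h1 := Measure.rnDeriv_withDensity_right (ν.withDensity F) ν hGm.aemeasurable
      (Filter.Eventually.of_forall fun x => (hGpos x).ne')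
      (Filter.Eventually.of_forall hGtop)
    have h2 := Measure.rnDeriv_withDensity ν hFm
    filter_upwards [h1, h2] with x h1x h2x
    rw [h1x, h2x]
  have hQν : Measure.pi (fun i => gaussianReal (mq i) (vq i)) ≪ ν :=
    hQ ▸ withDensity_absolutelyContinuous ν F
  have hrn' := hQν.ae_eq hrn
  filter_upwards [hrn'] with x hx
  have hFx : (F x).toReal = ∏ i, gaussianPDFReal (mq i) (vq i) (x i) := by
    rw [hF, ENNReal.toReal_prod]
    exact Finset.prod_congr rfl fun i _ =>
      ENNReal.toReal_ofReal (gaussianPDFReal_nonneg _ _ _)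
  have hGx : (G x).toReal = ∏ i, gaussianPDFReal (mp i) (vp i) (x i) := by
    rw [hG, ENNReal.toReal_prod]
    exact Finset.prod_congr rfl fun i _ =>
      ENNReal.toReal_ofReal (gaussianPDFReal_nonneg _ _ _)
  have hGx0 : (G x).toReal ≠ 0 := by
    simp [ENNReal.toReal_ne_zero, (hGpos x).ne', hGtop x]
  have hFx0 : (F x).toReal ≠ 0 := by
    simp [ENNReal.toReal_ne_zero, (hFpos x).ne', hFtop x]
  show llr _ _ x = _
  rw [llr_def]
  simp only []
  rw [hx, ENNReal.toReal_mul, ENNReal.toReal_inv,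
    Real.log_mul (inv_ne_zero hGx0) hFx0, Real.log_inv, hFx, hGx,
    Real.log_prod (fun i _ => (gaussianPDFReal_pos _ _ _ (hq i)).ne'),
    Real.log_prod (fun i _ => (gaussianPDFReal_pos _ _ _ (hp i)).ne')]
  rw [Finset.sum_sub_distrib]
  ring

lemma coe_pos_of_ne_zero (hv : v ≠ 0) : 0 < (v:ℝ) := by
  exact_mod_cast (pos_iff_ne_zero (a := v)).mpr hv

lemma log_gaussianPDFReal (hv : v ≠ 0) (m y : ℝ) :
    Real.log (gaussianPDFReal m v y)
      = -Real.log (√(2 * π * (v:ℝ))) - (y - m) ^ 2 / (2 * (v:ℝ)) := by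
  have hv' : 0 < (v:ℝ) := coe_pos_of_ne_zero hv
  rw [gaussianPDFReal, Real.log_mul
    (inv_ne_zero (ne_of_gt (Real.sqrt_pos.mpr (by positivity)))) (Real.exp_ne_zero _),
    Real.log_inv, Real.log_exp]
  ring

lemma log_ratio_eq {vq vp : ℝ≥0} (hvq : vq ≠ 0) (hvp : vp ≠ 0) (wq wp : ℝ) :
    (fun y : ℝ => Real.log (gaussianPDFReal wq vq y) - Real.log (gaussianPDFReal wp vp y))
      = fun y : ℝ => (Real.log (√(2 * π * (vp:ℝ))) - Real.log (√(2 * π * (vq:ℝ))))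
        + ((2 * (vp:ℝ))⁻¹ * (y - wp) ^ 2 - (2 * (vq:ℝ))⁻¹ * (y - wq) ^ 2) := by
  funext y
  rw [log_gaussianPDFReal hvq, log_gaussianPDFReal hvp]
  ring

lemma integrable_log_ratio {vq vp : ℝ≥0} (hvq : vq ≠ 0) (hvp : vp ≠ 0) (wq wp : ℝ) :
    Integrable (fun y : ℝ => Real.log (gaussianPDFReal wq vq y)
      - Real.log (gaussianPDFReal wp vp y)) (gaussianReal wq vq) := by
  rw [log_ratio_eq hvq hvp]
  exact (integrable_const _).add
    (((integrable_sq_sub_gaussianReal hvq wq wp).const_mul _).sub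
      ((integrable_sq_sub_gaussianReal hvq wq wq).const_mul _))

lemma log_sqrt_diff {vq vp : ℝ≥0} (hvq : vq ≠ 0) (hvp : vp ≠ 0) :
    Real.log (√(2 * π * (vp:ℝ))) - Real.log (√(2 * π * (vq:ℝ)))
      = (1/2) * (Real.log (vp:ℝ) - Real.log (vq:ℝ)) := by
  have hq' := coe_pos_of_ne_zero hvq
  have hp' := coe_pos_of_ne_zero hvp
  have h2π : (2:ℝ) * π ≠ 0 := by positivity
  rw [Real.log_sqrt (by positivity), Real.log_sqrt (by positivity),
    Real.log_mul h2π hp'.ne', Real.log_mul h2π hq'.ne']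
  ring

lemma integral_log_ratio {vq vp : ℝ≥0} (hvq : vq ≠ 0) (hvp : vp ≠ 0) (wq wp : ℝ) :
    ∫ y, (Real.log (gaussianPDFReal wq vq y) - Real.log (gaussianPDFReal wp vp y))
        ∂(gaussianReal wq vq)
      = (1/2) * (Real.log (vp:ℝ) - Real.log (vq:ℝ))
        + ((vq:ℝ) + (wq - wp) ^ 2) / (2 * (vp:ℝ)) - 1/2 := by
  have hq' := coe_pos_of_ne_zero hvq
  have hp' := coe_pos_of_ne_zero hvp
  rw [log_ratio_eq hvq hvp]
  have h1 : Integrable (fun y : ℝ => (2 * (vp:ℝ))⁻¹ * (y - wp) ^ 2) (gaussianReal wq vq) :=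
    (integrable_sq_sub_gaussianReal hvq wq wp).const_mul _
  have h2 : Integrable (fun y : ℝ => (2 * (vq:ℝ))⁻¹ * (y - wq) ^ 2) (gaussianReal wq vq) :=
    (integrable_sq_sub_gaussianReal hvq wq wq).const_mul _
  have h12 : Integrable (fun y : ℝ => (2 * (vp:ℝ))⁻¹ * (y - wp) ^ 2
      - (2 * (vq:ℝ))⁻¹ * (y - wq) ^ 2) (gaussianReal wq vq) := h1.sub h2
  rw [MeasureTheory.integral_add (integrable_const _) h12,
    MeasureTheory.integral_sub h1 h2,
    MeasureTheory.integral_const_mul, MeasureTheory.integral_const_mul,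
    integral_sq_sub_gaussianReal hvq wq wp, integral_sq_sub_gaussianReal hvq wq wq,
    integral_const]
  simp only [probReal_univ, one_smul]
  rw [log_sqrt_diff hvq hvp]
  field_simp
  ring

lemma klReal_pi_gaussian {n : ℕ} (mq mp : Fin n → ℝ) (vq vp : Fin n → ℝ≥0)
    (hq : ∀ i, vq i ≠ 0) (hp : ∀ i, vp i ≠ 0) :
    klReal (Measure.pi fun i => gaussianReal (mq i) (vq i))
        (Measure.pi fun i => gaussianReal (mp i) (vp i))
      = ∑ i, ((1/2) * (Real.log (vp i : ℝ) - Real.log (vq i : ℝ))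
          + ((vq i : ℝ) + (mq i - mp i) ^ 2) / (2 * (vp i : ℝ)) - 1/2) := by
  rw [klReal, integral_congr_ae (llr_pi_gaussian mq mp vq vp hq hp)]
  have hmeas : ∀ i : Fin n, AEStronglyMeasurable
      (fun y : ℝ => Real.log (gaussianPDFReal (mq i) (vq i) y)
        - Real.log (gaussianPDFReal (mp i) (vp i) y)) (gaussianReal (mq i) (vq i)) :=
    fun i => ((Real.measurable_log.comp (measurable_gaussianPDFReal _ _)).sub
      (Real.measurable_log.comp (measurable_gaussianPDFReal _ _))).aestronglyMeasurable
  rw [integral_finset_sum Finset.univ (fun i _ => integrable_eval _ i _ (hmeas i)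
    (integrable_log_ratio (hq i) (hp i) (mq i) (mp i)))]
  refine Finset.sum_congr rfl fun i _ => ?_
  exact (integral_eval (fun i => gaussianReal (mq i) (vq i)) i _ (hmeas i)).trans (integral_log_ratio (hq i) (hp i) _ _)

lemma Kmin_le {σ' d t : ℝ} (hσ : 0 < σ') (ht : 0 < t) :
    (1/2) * Real.log (1 + d ^ 2 / σ')
      ≤ (1/2) * (Real.log t - Real.log σ') + (σ' + d ^ 2) / (2 * t) - 1/2 := by
  have ha' : 0 < σ' + d ^ 2 := by positivity
  have hlog : Real.log ((σ' + d ^ 2) / t) ≤ (σ' + d ^ 2) / t - 1 :=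
    Real.log_le_sub_one_of_pos (by positivity)
  rw [Real.log_div ha'.ne' ht.ne'] at hlog
  have h1 : 1 + d ^ 2 / σ' = (σ' + d ^ 2) / σ' := by field_simp
  rw [h1, Real.log_div ha'.ne' hσ.ne']
  have h3 : (σ' + d ^ 2) / (2 * t) = ((σ' + d ^ 2) / t) / 2 := by ring
  linarith [hlog, h3]

lemma Kmin_eq {σ' d : ℝ} (hσ : 0 < σ') :
    (1/2) * (Real.log (σ' + d ^ 2) - Real.log σ') + (σ' + d ^ 2) / (2 * (σ' + d ^ 2)) - 1/2
      = (1/2) * Real.log (1 + d ^ 2 / σ') := by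
  have ha : 0 < σ' + d ^ 2 := by positivity
  have h1 : 1 + d ^ 2 / σ' = (σ' + d ^ 2) / σ' := by field_simp
  have h2 : (σ' + d ^ 2) / (2 * (σ' + d ^ 2)) = 1/2 := by
    rw [mul_comm, ← div_div, div_self ha.ne']
  rw [h1, Real.log_div ha.ne' hσ.ne', h2]
  ring

lemma attained_value (p : ℕ) (w wα : Fin p → ℝ) (σ : Fin p → ℝ≥0) (hσ : ∀ i, σ i ≠ 0) :
    klReal (Measure.pi fun i => gaussianReal (w i) (σ i))
        (Measure.pi fun i => gaussianReal (wα i)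
          (σ i + Real.toNNReal ((w i - wα i) ^ 2)))
      = (1 / 2) * ∑ i, Real.log (1 + (w i - wα i) ^ 2 / (σ i : ℝ)) := by
  have hs : ∀ i, σ i + Real.toNNReal ((w i - wα i) ^ 2) ≠ 0 := fun i h =>
    hσ i (add_eq_zero.mp h).1
  rw [klReal_pi_gaussian w wα σ _ hσ hs, Finset.mul_sum]
  refine Finset.sum_congr rfl fun i _ => ?_
  have hσ' : 0 < (σ i : ℝ) := coe_pos_of_ne_zero (hσ i)
  have hcoe : ((σ i + Real.toNNReal ((w i - wα i) ^ 2) : ℝ≥0) : ℝ)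
      = (σ i : ℝ) + (w i - wα i) ^ 2 := by
    push_cast [Real.coe_toNNReal _ (sq_nonneg (w i - wα i))]
    ring
  rw [hcoe]
  exact Kmin_eq hσ'

theorem optimal_diagonal_gaussian_prior_variance
    (p : ℕ) (w wα : Fin p → ℝ) (σ : Fin p → ℝ≥0) (hσ : ∀ i, σ i ≠ 0) :
    IsLeast
      {k : ℝ | ∃ s : Fin p → ℝ≥0, (∀ i, s i ≠ 0) ∧
        k = klReal (Measure.pi fun i => gaussianReal (w i) (σ i))
              (Measure.pi fun i => gaussianReal (wα i) (s i))}
      ((1 / 2) * ∑ i, Real.log (1 + (w i - wα i) ^ 2 / (σ i : ℝ))) ∧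
    klReal (Measure.pi fun i => gaussianReal (w i) (σ i))
        (Measure.pi fun i => gaussianReal (wα i)
          (σ i + Real.toNNReal ((w i - wα i) ^ 2))) =
      (1 / 2) * ∑ i, Real.log (1 + (w i - wα i) ^ 2 / (σ i : ℝ)) := by
  refine ⟨⟨⟨fun i => σ i + Real.toNNReal ((w i - wα i) ^ 2),
    fun i h => hσ i (add_eq_zero.mp h).1, (attained_value p w wα σ hσ).symm⟩, ?_⟩,
    attained_value p w wα σ hσ⟩
  rintro k ⟨s, hs, rfl⟩
  rw [klReal_pi_gaussian w wα σ s hσ hs, Finset.mul_sum]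
  exact Finset.sum_le_sum fun i _ =>
    Kmin_le (coe_pos_of_ne_zero (hσ i)) (coe_pos_of_ne_zero (hs i))
end
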